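/- arXiv:1104.2530 — 5 statements merged into one kernel-verified Lean document; each statement's English description precedes it below -/
import Mathlib

section
/- Let (A,B) be a pair of symmetric n×n complex matrices and let I_1, I_2 ⊆ {1,…,n}×{1,…,n} be symmetric sets of positions, with associated pattern space 𝒟(ℂ) := {(X,Y) ∈ Sym_n(ℂ)×Sym_n(ℂ) : X_{ij} = 0 for (i,j) ∉ I_1 and Y_{ij} = 0 for (i,j) ∉ I_2}. Then the following are equivalent: (i) the deformation (X,Y) ↦ (A+X, B+Y), parametrized by 𝒟(ℂ), is a miniversal deformation of (A,B); (ii) Sym_n(ℂ)×Sym_n(ℂ) = T(A,B) ⊕ 𝒟(ℂ) (direct sum of subspaces); (iii) every coset of T(A,B) in Sym_n(ℂ)×Sym_n(ℂ) contains exactly one element of 𝒟(ℂ). -/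
open Matrix Filter

noncomputable section

attribute [local instance] Matrix.normedAddCommGroup Matrix.normedSpace

/-- The space of pairs of symmetric `ι × ι` complex matrices, as a subspace of all pairs. -/
def SymPair (ι : Type) [Fintype ι] : Submodule ℂ (Matrix ι ι ℂ × Matrix ι ι ℂ) where
  carrier := {p | p.1.IsSymm ∧ p.2.IsSymm}
  add_mem' ha hb := ⟨ha.1.add hb.1, ha.2.add hb.2⟩
  zero_mem' := ⟨Matrix.isSymm_zero, Matrix.isSymm_zero⟩
  smul_mem' c p hp := ⟨hp.1.smul c, hp.2.smul c⟩

/-- The linear map `C ↦ (CᵀA + AC, CᵀB + BC)`. -/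
def congMap {ι : Type} [Fintype ι] (A B : Matrix ι ι ℂ) :
    Matrix ι ι ℂ →ₗ[ℂ] Matrix ι ι ℂ × Matrix ι ι ℂ where
  toFun C := (Cᵀ * A + A * C, Cᵀ * B + B * C)
  map_add' C D := by
    simp only [Matrix.transpose_add, Matrix.add_mul, Matrix.mul_add, Prod.mk_add_mk, Prod.ext_iff]
    constructor <;> abel
  map_smul' c C := by
    simp only [Matrix.transpose_smul, Matrix.smul_mul, Matrix.mul_smul, RingHom.id_apply,
      Prod.smul_mk, smul_add]

/-- `T(A,B) = {(CᵀA + AC, CᵀB + BC) : C}`, the tangent space to the congruence class. -/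
def TSpace {ι : Type} [Fintype ι] (A B : Matrix ι ι ℂ) :
    Submodule ℂ (Matrix ι ι ℂ × Matrix ι ι ℂ) :=
  LinearMap.range (congMap A B)

/-- The pattern space determined by two sets of positions: pairs of symmetric matrices
supported on `I1` resp. `I2`. -/
def Pattern {ι : Type} [Fintype ι] (I1 I2 : Set (ι × ι)) :
    Submodule ℂ (Matrix ι ι ℂ × Matrix ι ι ℂ) where
  carrier := {p | p.1.IsSymm ∧ p.2.IsSymm ∧ (∀ i j, (i, j) ∉ I1 → p.1 i j = 0) ∧
    (∀ i j, (i, j) ∉ I2 → p.2 i j = 0)}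
  add_mem' := by
    rintro a b ⟨ha1, ha2, ha3, ha4⟩ ⟨hb1, hb2, hb3, hb4⟩
    exact ⟨ha1.add hb1, ha2.add hb2,
      fun i j h => by show a.1 i j + b.1 i j = 0; rw [ha3 i j h, hb3 i j h, add_zero],
      fun i j h => by show a.2 i j + b.2 i j = 0; rw [ha4 i j h, hb4 i j h, add_zero]⟩
  zero_mem' := ⟨Matrix.isSymm_zero, Matrix.isSymm_zero, fun _ _ _ => rfl, fun _ _ _ => rfl⟩
  smul_mem' := by
    rintro c a ⟨ha1, ha2, ha3, ha4⟩
    exact ⟨ha1.smul c, ha2.smul c,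
      fun i j h => by show c * a.1 i j = 0; rw [ha3 i j h, mul_zero],
      fun i j h => by show c * a.2 i j = 0; rw [ha4 i j h, mul_zero]⟩

theorem Pattern_le {ι : Type} [Fintype ι] (I1 I2 : Set (ι × ι)) :
    Pattern I1 I2 ≤ SymPair ι := fun _ hp => ⟨hp.1, hp.2.1⟩

/-- A deformation of a pair `(A, B)` of symmetric `ι × ι` complex matrices, with parameter
space `P`: a map defined near `0 : P`, holomorphic at `0` (i.e. each matrix entry is an
analytic function of the parameter at `0`), taking values in pairs of symmetric matrices,
and sending `0` to `(A, B)`. -/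
structure Deformation (ι : Type) [Fintype ι] (P : Type*) [NormedAddCommGroup P]
    [NormedSpace ℂ P] (A B : Matrix ι ι ℂ) where
  map : P → Matrix ι ι ℂ × Matrix ι ι ℂ
  analytic₁ : ∀ i j, AnalyticAt ℂ (fun p => (map p).1 i j) 0
  analytic₂ : ∀ i j, AnalyticAt ℂ (fun p => (map p).2 i j) 0
  symm : ∀ᶠ p in nhds (0 : P), (map p).1.IsSymm ∧ (map p).2.IsSymm
  init : map 0 = (A, B)

/-- Two (maps underlying) deformations with the same parameter space are equivalent if
`g p = (I p)ᵀ • f p • (I p)` near `0`, for a family `I` of matrices holomorphic at `0`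
with `I 0 = 1`. -/
def DefEquiv {ι : Type} [Fintype ι] [DecidableEq ι] {P : Type*} [NormedAddCommGroup P]
    [NormedSpace ℂ P] (f g : P → Matrix ι ι ℂ × Matrix ι ι ℂ) : Prop :=
  ∃ I : P → Matrix ι ι ℂ, (∀ i j, AnalyticAt ℂ (fun p => I p i j) 0) ∧ I 0 = 1 ∧
    ∀ᶠ p in nhds (0 : P), g p = ((I p)ᵀ * (f p).1 * I p, (I p)ᵀ * (f p).2 * I p)

/-- A deformation is versal if every deformation of the same pair (with a finite-dimensional
parameter space) is equivalent to a holomorphic reparametrization of it. -/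
def IsVersal {ι : Type} [Fintype ι] [DecidableEq ι] {P : Type*} [NormedAddCommGroup P]
    [NormedSpace ℂ P] {A B : Matrix ι ι ℂ} (𝒜 : Deformation ι P A B) : Prop :=
  ∀ (Q : Type) (_ : NormedAddCommGroup Q), ∀ (_ : NormedSpace ℂ Q)
    (_ : FiniteDimensional ℂ Q) (ℬ : Deformation ι Q A B),
    ∃ φ : Q → P, AnalyticAt ℂ φ 0 ∧ φ 0 = 0 ∧
      DefEquiv (fun q => 𝒜.map (φ q)) ℬ.map

/-- A versal deformation is miniversal if its parameter space has the minimal possible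
dimension among versal deformations. -/
def IsMiniversal {ι : Type} [Fintype ι] [DecidableEq ι] {P : Type*} [NormedAddCommGroup P]
    [NormedSpace ℂ P] {A B : Matrix ι ι ℂ} (𝒜 : Deformation ι P A B) : Prop :=
  IsVersal 𝒜 ∧ ∀ (Q : Type) (_ : NormedAddCommGroup Q), ∀ (_ : NormedSpace ℂ Q)
    (_ : FiniteDimensional ℂ Q) (ℬ : Deformation ι Q A B),
    IsVersal ℬ → Module.finrank ℂ P ≤ Module.finrank ℂ Q

/-- Entry evaluation is analytic on a finite-dimensional parameter space of matrix pairs. -/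
theorem analyticAt_entry {ι : Type} [Fintype ι]
    (D : Submodule ℂ (Matrix ι ι ℂ × Matrix ι ι ℂ)) (i j : ι) :
    AnalyticAt ℂ (fun p : D => ((p : Matrix ι ι ℂ × Matrix ι ι ℂ)).1 i j) 0 ∧
    AnalyticAt ℂ (fun p : D => ((p : Matrix ι ι ℂ × Matrix ι ι ℂ)).2 i j) 0 := by
  constructor
  · let L : D →ₗ[ℂ] ℂ :=
      { toFun := fun p => (p : Matrix ι ι ℂ × Matrix ι ι ℂ).1 i j
        map_add' := fun x y => rfl
        map_smul' := fun c x => rfl }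
    exact (LinearMap.toContinuousLinearMap L).analyticAt 0
  · let L : D →ₗ[ℂ] ℂ :=
      { toFun := fun p => (p : Matrix ι ι ℂ × Matrix ι ι ℂ).2 i j
        map_add' := fun x y => rfl
        map_smul' := fun c x => rfl }
    exact (LinearMap.toContinuousLinearMap L).analyticAt 0

/-- The deformation `(X, Y) ↦ (A + X, B + Y)` of `(A, B)`, parametrized by a subspace `D`
of the space of pairs of symmetric matrices. -/
def patternDeformation {ι : Type} [Fintype ι] (A B : Matrix ι ι ℂ)
    (hA : A.IsSymm) (hB : B.IsSymm) (D : Submodule ℂ (Matrix ι ι ℂ × Matrix ι ι ℂ))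
    (hD : D ≤ SymPair ι) : Deformation ι D A B where
  map p := (A + (p : Matrix ι ι ℂ × Matrix ι ι ℂ).1, B + (p : Matrix ι ι ℂ × Matrix ι ι ℂ).2)
  analytic₁ i j := by
    have h := (analyticAt_entry D i j).1
    have : (fun p : D => (A + (p : Matrix ι ι ℂ × Matrix ι ι ℂ).1) i j)
        = fun p : D => A i j + (p : Matrix ι ι ℂ × Matrix ι ι ℂ).1 i j := rfl
    rw [this]
    exact analyticAt_const.add h
  analytic₂ i j := by
    have h := (analyticAt_entry D i j).2
    have : (fun p : D => (B + (p : Matrix ι ι ℂ × Matrix ι ι ℂ).2) i j)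
        = fun p : D => B i j + (p : Matrix ι ι ℂ × Matrix ι ι ℂ).2 i j := rfl
    rw [this]
    exact analyticAt_const.add h
  symm := Eventually.of_forall fun p =>
    ⟨hA.add (hD p.2).1, hB.add (hD p.2).2⟩
  init := by simp

end

noncomputable section

attribute [local instance] Matrix.normedAddCommGroup Matrix.normedSpace

set_option maxHeartbeats 1600000

/-! ### Auxiliary material -/

section Aux

variable {ι : Type} [Fintype ι] [DecidableEq ι]

lemma analyticAt_matrix {P : Type*} [NormedAddCommGroup P] [NormedSpace ℂ P]
    {f : P → Matrix ι ι ℂ} {x : P}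
    (h : ∀ i j, AnalyticAt ℂ (fun p => f p i j) x) : AnalyticAt ℂ f x :=
  AnalyticAt.pi (fun i => AnalyticAt.pi (fun j => h i j))

lemma matrix_entry_analytic {P : Type*} [NormedAddCommGroup P] [NormedSpace ℂ P]
    {f : P → Matrix ι ι ℂ} {x : P} (hf : AnalyticAt ℂ f x) (i j : ι) :
    AnalyticAt ℂ (fun p => f p i j) x := by
  have h1 : AnalyticAt ℂ (fun m : Matrix ι ι ℂ => m i j) (f x) := by
    let L : Matrix ι ι ℂ →ₗ[ℂ] ℂ :=
      { toFun := fun m => m i j, map_add' := fun _ _ => rfl, map_smul' := fun _ _ => rfl }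
    exact (LinearMap.toContinuousLinearMap L).analyticAt _
  exact h1.comp hf

lemma analytic_local_inverse {E : Type*} [NormedAddCommGroup E] [NormedSpace ℂ E]
    [CompleteSpace E] {f : E → E} {x : E} (hf : AnalyticAt ℂ f x)
    (hd : fderiv ℂ f x = ContinuousLinearMap.id ℂ E) :
    ∃ g : E → E, AnalyticAt ℂ g (f x) ∧ g (f x) = x ∧ ∀ᶠ y in nhds (f x), f (g y) = y := by
  set i : E ≃L[ℂ] E := ContinuousLinearEquiv.refl ℂ E with hi
  have hs : HasStrictFDerivAt f (i : E →L[ℂ] E) x := by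
    have := hf.hasStrictFDerivAt
    rwa [hd] at this
  set ph := hs.toOpenPartialHomeomorph f with hph
  have hcoe : (ph : E → E) = f := hs.toOpenPartialHomeomorph_coe
  obtain ⟨p, hp⟩ := hf
  have hp' : HasFPowerSeriesAt (⇑ph) p x := by rwa [hcoe]
  have h1 : p 1 = (continuousMultilinearCurryFin1 ℂ E E).symm (i : E →L[ℂ] E) := by
    have hde : continuousMultilinearCurryFin1 ℂ E E (p 1) = fderiv ℂ f x :=
      hp.hasFDerivAt.fderiv.symm
    have : continuousMultilinearCurryFin1 ℂ E E (p 1) = (i : E →L[ℂ] E) := by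
      rw [hde, hd]; rfl
    rw [← this]; exact ((continuousMultilinearCurryFin1 ℂ E E).symm_apply_apply _).symm
  have hsymm := ph.hasFPowerSeriesAt_symm hs.mem_toOpenPartialHomeomorph_source hp' h1
  have hphx : ph x = f x := by rw [hcoe]
  refine ⟨⇑ph.symm, ?_, ?_, ?_⟩
  · rw [← hphx]; exact ⟨_, hsymm⟩
  · rw [← hphx]; exact ph.left_inv hs.mem_toOpenPartialHomeomorph_source
  · have ht : f x ∈ ph.target := by
      rw [← hphx]; exact ph.map_source hs.mem_toOpenPartialHomeomorph_source
    filter_upwards [ph.open_target.mem_nhds ht] with y hy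
    rw [← hcoe]; exact ph.right_inv hy

def mulCLM : Matrix ι ι ℂ →L[ℂ] Matrix ι ι ℂ →L[ℂ] Matrix ι ι ℂ :=
  LinearMap.toContinuousLinearMap
  { toFun := fun X => LinearMap.toContinuousLinearMap
      { toFun := fun Y => X * Y
        map_add' := fun Y Z => Matrix.mul_add X Y Z
        map_smul' := fun c Y => (Matrix.mul_smul X c Y) }
    map_add' := fun X X' => by
      ext Y
      simp [Matrix.add_mul]
    map_smul' := fun c X => by
      ext Y
      simp [Matrix.smul_mul] }

@[simp] lemma mulCLM_apply (X Y : Matrix ι ι ℂ) : mulCLM X Y = X * Y := rfl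

def transposeCLM : Matrix ι ι ℂ →L[ℂ] Matrix ι ι ℂ :=
  LinearMap.toContinuousLinearMap (Matrix.transposeLinearEquiv ι ι ℂ ℂ).toLinearMap

@[simp] lemma transposeCLM_apply (X : Matrix ι ι ℂ) : transposeCLM X = Xᵀ := rfl

lemma hasFDerivAt_conj {X : Type*} [NormedAddCommGroup X] [NormedSpace ℂ X]
    {J Y : X → Matrix ι ι ℂ} {J' Y' : X →L[ℂ] Matrix ι ι ℂ} {x : X}
    (hJ : HasFDerivAt J J' x) (hY : HasFDerivAt Y Y' x) (hJ0 : J x = 1)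
    {L : X →L[ℂ] Matrix ι ι ℂ}
    (hL : ∀ v, L v = (J' v)ᵀ * Y x + Y' v + Y x * J' v) :
    HasFDerivAt (fun y => (J y)ᵀ * Y y * J y) L x := by
  have hT : HasFDerivAt (fun y => (J y)ᵀ) ((transposeCLM).comp J') x := by
    have h := ((transposeCLM (ι := ι)).hasFDerivAt (x := J x)).comp x hJ
    exact h
  have h1 := (mulCLM (ι := ι)).hasFDerivAt_of_bilinear hT hY
  have h2 := (mulCLM (ι := ι)).hasFDerivAt_of_bilinear h1 hJ
  have heq : (mulCLM (ι := ι)).precompR X (mulCLM ((J x)ᵀ) (Y x)) J' +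
      (mulCLM (ι := ι)).precompL X
        ((mulCLM (ι := ι)).precompR X ((J x)ᵀ) Y' +
          (mulCLM (ι := ι)).precompL X ((transposeCLM).comp J') (Y x)) (J x) = L := by
    ext v : 1
    change (J x)ᵀ * Y x * J' v + ((J x)ᵀ * Y' v + (J' v)ᵀ * Y x) * J x = L v
    simp [hJ0, hL v]
    abel
  exact h2.congr_fderiv heq

lemma analyticAt_mulM {X : Type*} [NormedAddCommGroup X] [NormedSpace ℂ X]
    {f g : X → Matrix ι ι ℂ} {x : X}
    (hf : AnalyticAt ℂ f x) (hg : AnalyticAt ℂ g x) :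
    AnalyticAt ℂ (fun y => f y * g y) x := by
  apply analyticAt_matrix
  intro i j
  have h : (fun y => (f y * g y) i j) = fun y => ∑ k, f y i k * g y k j := by
    funext y; simp [Matrix.mul_apply]
  rw [h]
  exact Finset.analyticAt_fun_sum _ fun k _ =>
    (matrix_entry_analytic hf i k).mul (matrix_entry_analytic hg k j)

@[simp] lemma congMap_apply (A B C : Matrix ι ι ℂ) :
    congMap A B C = (Cᵀ * A + A * C, Cᵀ * B + B * C) := rfl

lemma TSpace_le {A B : Matrix ι ι ℂ} (hA : A.IsSymm) (hB : B.IsSymm) :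
    TSpace A B ≤ SymPair ι := by
  rintro _ ⟨C, rfl⟩
  constructor <;>
  · show Matrix.IsSymm _
    simp [Matrix.IsSymm, congMap_apply, Matrix.transpose_add, Matrix.transpose_mul,
      hA.eq, hB.eq, add_comm]

def symmetrizeL : Matrix ι ι ℂ →ₗ[ℂ] Matrix ι ι ℂ where
  toFun X := (2:ℂ)⁻¹ • (X + Xᵀ)
  map_add' X Y := by
    simp only [Matrix.transpose_add, smul_add]
    module
  map_smul' c X := by
    simp only [Matrix.transpose_smul, smul_add, RingHom.id_apply, smul_comm c]

lemma symmetrizeL_isSymm (X : Matrix ι ι ℂ) : (symmetrizeL X).IsSymm := by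
  show _ = _
  simp [symmetrizeL, Matrix.transpose_smul, Matrix.transpose_add, add_comm]

lemma symmetrizeL_of_isSymm {X : Matrix ι ι ℂ} (hX : X.IsSymm) : symmetrizeL X = X := by
  simp only [symmetrizeL, LinearMap.coe_mk, AddHom.coe_mk, hX.eq]
  rw [← two_smul ℂ X, smul_smul]
  norm_num

def Psym : (Matrix ι ι ℂ × Matrix ι ι ℂ) →ₗ[ℂ] ↥(SymPair ι) :=
  LinearMap.codRestrict (SymPair ι) (symmetrizeL.prodMap symmetrizeL)
    (fun p => ⟨symmetrizeL_isSymm _, symmetrizeL_isSymm _⟩)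

lemma Psym_of_mem {p : Matrix ι ι ℂ × Matrix ι ι ℂ} (hp : p ∈ SymPair ι) :
    ((Psym p : Matrix ι ι ℂ × Matrix ι ι ℂ)) = p := by
  have : (Psym p : Matrix ι ι ℂ × Matrix ι ι ℂ) =
      (symmetrizeL p.1, symmetrizeL p.2) := rfl
  rw [this, symmetrizeL_of_isSymm hp.1, symmetrizeL_of_isSymm hp.2]

lemma conj_isSymm (X : Matrix ι ι ℂ) {Y : Matrix ι ι ℂ} (h : Y.IsSymm) :
    (Xᵀ * Y * X).IsSymm := by
  show _ = _
  simp [Matrix.transpose_mul, Matrix.transpose_transpose, Matrix.mul_assoc, h.eq]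

end Aux

section Versal

variable {n : ℕ}

/-- The one-parameter linear deformation in the direction of a symmetric pair `v`. -/
def lineDef (A B : Matrix (Fin n) (Fin n) ℂ) (hA : A.IsSymm) (hB : B.IsSymm)
    (v : Matrix (Fin n) (Fin n) ℂ × Matrix (Fin n) (Fin n) ℂ) (hv : v ∈ SymPair (Fin n)) :
    Deformation (Fin n) ℂ A B where
  map t := (A + t • v.1, B + t • v.2)
  analytic₁ i j := by
    have h : (fun t : ℂ => (A + t • v.1) i j) = fun t => A i j + t * v.1 i j := rfl
    rw [h]
    exact analyticAt_const.add (analyticAt_id.mul analyticAt_const)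
  analytic₂ i j := by
    have h : (fun t : ℂ => (B + t • v.2) i j) = fun t => B i j + t * v.2 i j := rfl
    rw [h]
    exact analyticAt_const.add (analyticAt_id.mul analyticAt_const)
  symm := Eventually.of_forall fun t => ⟨hA.add (hv.1.smul t), hB.add (hv.2.smul t)⟩
  init := by simp

/-- If a deformation is versal, the tangent space plus the range of its differential at `0`
covers the space of symmetric pairs. -/
lemma versal_le {A B : Matrix (Fin n) (Fin n) ℂ} (hA : A.IsSymm) (hB : B.IsSymm)
    {Q : Type} [NormedAddCommGroup Q] [NormedSpace ℂ Q] [FiniteDimensional ℂ Q]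
    (ℬ : Deformation (Fin n) Q A B) (hv : IsVersal ℬ) :
    SymPair (Fin n) ≤ TSpace A B ⊔ LinearMap.range (fderiv ℂ ℬ.map 0 : Q →ₗ[ℂ] _) := by
  intro v hvS
  have hBan : AnalyticAt ℂ ℬ.map 0 := by
    have h1 : AnalyticAt ℂ (fun q => (ℬ.map q).1) 0 := analyticAt_matrix (ℬ.analytic₁)
    have h2 : AnalyticAt ℂ (fun q => (ℬ.map q).2) 0 := analyticAt_matrix (ℬ.analytic₂)
    exact h1.prod h2
  obtain ⟨φ, hφan, hφ0, I, hIan, hI0, hev⟩ :=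
    hv ℂ inferInstance inferInstance inferInstance (lineDef A B hA hB v hvS)
  have hIan' : AnalyticAt ℂ I 0 := analyticAt_matrix hIan
  set C0 : ℂ →L[ℂ] Matrix (Fin n) (Fin n) ℂ := fderiv ℂ I 0 with hC0
  have hI' : HasFDerivAt I C0 0 := hIan'.differentiableAt.hasFDerivAt
  set Xf : ℂ → Matrix (Fin n) (Fin n) ℂ × Matrix (Fin n) (Fin n) ℂ :=
    fun t => ℬ.map (φ t) with hXf
  have hBanφ : AnalyticAt ℂ ℬ.map (φ 0) := by rwa [hφ0]
  have hXan : AnalyticAt ℂ Xf 0 := hBanφ.comp hφan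
  set W : ℂ →L[ℂ] Matrix (Fin n) (Fin n) ℂ × Matrix (Fin n) (Fin n) ℂ :=
    fderiv ℂ Xf 0 with hW
  have hX' : HasFDerivAt Xf W 0 := hXan.differentiableAt.hasFDerivAt
  have hWmem : W 1 ∈ LinearMap.range (fderiv ℂ ℬ.map 0 : Q →ₗ[ℂ] _) := by
    have hdg : DifferentiableAt ℂ ℬ.map (φ 0) := hBanφ.differentiableAt
    have hdf : DifferentiableAt ℂ φ 0 := hφan.differentiableAt
    have hcr := fderiv_comp (𝕜 := ℂ) 0 hdg hdf
    rw [hφ0] at hcr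
    refine ⟨fderiv ℂ φ 0 1, ?_⟩
    rw [hW]
    have : Xf = ℬ.map ∘ φ := rfl
    rw [this]
    exact (DFunLike.congr_fun hcr 1).symm
  -- derivative of the two components of the conjugated family
  have hY1' : HasFDerivAt (fun t => (Xf t).1)
      ((ContinuousLinearMap.fst ℂ _ _).comp W) 0 := by
    have h := (ContinuousLinearMap.fst ℂ (Matrix (Fin n) (Fin n) ℂ)
      (Matrix (Fin n) (Fin n) ℂ)).hasFDerivAt (x := Xf 0) |>.comp 0 hX'
    exact h
  have hY2' : HasFDerivAt (fun t => (Xf t).2)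
      ((ContinuousLinearMap.snd ℂ _ _).comp W) 0 := by
    have h := (ContinuousLinearMap.snd ℂ (Matrix (Fin n) (Fin n) ℂ)
      (Matrix (Fin n) (Fin n) ℂ)).hasFDerivAt (x := Xf 0) |>.comp 0 hX'
    exact h
  have hXf0 : Xf 0 = (A, B) := by rw [hXf]; simp only [hφ0]; exact ℬ.init
  set L1 : ℂ →L[ℂ] Matrix (Fin n) (Fin n) ℂ :=
    (show ℂ →L[ℂ] Matrix (Fin n) (Fin n) ℂ from (mulCLM.flip A).comp (transposeCLM.comp C0)) +
      (show ℂ →L[ℂ] Matrix (Fin n) (Fin n) ℂ from (ContinuousLinearMap.fst ℂ _ _).comp W) +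
      (show ℂ →L[ℂ] Matrix (Fin n) (Fin n) ℂ from (mulCLM A).comp C0) with hL1
  set L2 : ℂ →L[ℂ] Matrix (Fin n) (Fin n) ℂ :=
    (show ℂ →L[ℂ] Matrix (Fin n) (Fin n) ℂ from (mulCLM.flip B).comp (transposeCLM.comp C0)) +
      (show ℂ →L[ℂ] Matrix (Fin n) (Fin n) ℂ from (ContinuousLinearMap.snd ℂ _ _).comp W) +
      (show ℂ →L[ℂ] Matrix (Fin n) (Fin n) ℂ from (mulCLM B).comp C0) with hL2
  have hg1 : HasFDerivAt (fun t => (I t)ᵀ * (Xf t).1 * I t) L1 0 := by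
    refine hasFDerivAt_conj hI' hY1' hI0 ?_
    intro w
    rw [hXf0]; rfl
  have hg2 : HasFDerivAt (fun t => (I t)ᵀ * (Xf t).2 * I t) L2 0 := by
    refine hasFDerivAt_conj hI' hY2' hI0 ?_
    intro w
    rw [hXf0]; rfl
  have hg : HasFDerivAt
      (fun t => ((I t)ᵀ * (Xf t).1 * I t, (I t)ᵀ * (Xf t).2 * I t)) (L1.prod L2) 0 :=
    hg1.prodMk hg2
  -- derivative of the line deformation
  have hline : HasDerivAt (lineDef A B hA hB v hvS).map v 0 := by
    have h : HasDerivAt (fun t : ℂ => (A, B) + t • v) v 0 := by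
      have h' := ((hasDerivAt_id' (0:ℂ)).smul_const v).const_add (A, B)
      rwa [one_smul] at h'
    exact h
  have hev' : (lineDef A B hA hB v hvS).map =ᶠ[nhds (0:ℂ)]
      fun t => ((I t)ᵀ * (Xf t).1 * I t, (I t)ᵀ * (Xf t).2 * I t) := hev
  have hline2 : HasDerivAt (lineDef A B hA hB v hvS).map ((L1.prod L2) 1) 0 :=
    (hg.hasDerivAt).congr_of_eventuallyEq hev'
  have hvd : v = (L1 1, L2 1) := hline.unique hline2
  have hvsum : v = congMap A B (C0 1) + W 1 := by
    rw [hvd]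
    have h1 : L1 1 = (C0 1)ᵀ * A + (W 1).1 + A * (C0 1) := rfl
    have h2 : L2 1 = (C0 1)ᵀ * B + (W 1).2 + B * (C0 1) := rfl
    rw [Prod.ext_iff]
    refine ⟨?_, ?_⟩ <;> simp [h1, h2, congMap] <;> abel
  have hT1 : congMap A B (C0 1) ∈ TSpace A B := ⟨C0 1, rfl⟩
  rw [hvsum]
  exact Submodule.add_mem_sup hT1 hWmem

/-- If the tangent space together with `D` covers the space of symmetric pairs, then the
deformation `(X,Y) ↦ (A+X, B+Y)` parametrized by `D` is versal. -/
lemma isVersal_of_sup {A B : (Matrix (Fin n) (Fin n) ℂ)} (hA : A.IsSymm) (hB : B.IsSymm)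
    (D : Submodule ℂ ((Matrix (Fin n) (Fin n) ℂ) × (Matrix (Fin n) (Fin n) ℂ)))
    (hD : D ≤ SymPair (Fin n)) (hsup : TSpace A B ⊔ D = SymPair (Fin n)) :
    IsVersal (patternDeformation A B hA hB D hD) := by
  classical
  have hTS : TSpace A B ≤ SymPair (Fin n) := TSpace_le hA hB
  -- linear algebra: a right inverse for the derivative
  set Φ : ((Matrix (Fin n) (Fin n) ℂ) × ↥D) →ₗ[ℂ] ((Matrix (Fin n) (Fin n) ℂ) × (Matrix (Fin n) (Fin n) ℂ)) :=
    (congMap A B).comp (LinearMap.fst ℂ (Matrix (Fin n) (Fin n) ℂ) ↥D) + D.subtype.comp (LinearMap.snd ℂ (Matrix (Fin n) (Fin n) ℂ) ↥D) with hΦ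
  have hΦapp : ∀ p : (Matrix (Fin n) (Fin n) ℂ) × ↥D, Φ p = congMap A B p.1 + (p.2 : (Matrix (Fin n) (Fin n) ℂ) × (Matrix (Fin n) (Fin n) ℂ)) := fun p => rfl
  have hΦmem : ∀ p, Φ p ∈ SymPair (Fin n) := fun p => by
    rw [hΦapp]
    exact (SymPair (Fin n)).add_mem (hTS ⟨p.1, rfl⟩) (hD p.2.2)
  set Φ' : ((Matrix (Fin n) (Fin n) ℂ) × ↥D) →ₗ[ℂ] ↥(SymPair (Fin n)) := Φ.codRestrict _ hΦmem with hΦ'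
  have hΦ'surj : LinearMap.range Φ' = ⊤ := by
    rw [LinearMap.range_eq_top]
    rintro ⟨s, hs⟩
    rw [← hsup] at hs
    obtain ⟨t, ht, d, hd, hsum⟩ := Submodule.mem_sup.1 hs
    obtain ⟨C, rfl⟩ := ht
    exact ⟨(C, ⟨d, hd⟩), Subtype.ext (by simpa [hΦ', hΦapp] using hsum)⟩
  obtain ⟨σ, hσ⟩ := Φ'.exists_rightInverse_of_surjective hΦ'surj
  have hσid : ∀ s, Φ' (σ s) = s := fun s => by
    rw [← LinearMap.comp_apply, hσ]; rfl
  have hΦσ : ∀ s : ↥(SymPair (Fin n)), Φ (σ s) = (s : (Matrix (Fin n) (Fin n) ℂ) × (Matrix (Fin n) (Fin n) ℂ)) := fun s =>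
    congrArg Subtype.val (hσid s)
  -- the nonlinear congruence map
  set F₀ : ((Matrix (Fin n) (Fin n) ℂ) × ↥D) → ((Matrix (Fin n) (Fin n) ℂ) × (Matrix (Fin n) (Fin n) ℂ)) := fun p =>
    ((1 + p.1)ᵀ * (A + (p.2 : (Matrix (Fin n) (Fin n) ℂ) × (Matrix (Fin n) (Fin n) ℂ)).1) * (1 + p.1),
      (1 + p.1)ᵀ * (B + (p.2 : (Matrix (Fin n) (Fin n) ℂ) × (Matrix (Fin n) (Fin n) ℂ)).2) * (1 + p.1)) with hF₀
  have hF₀S : ∀ p, F₀ p ∈ SymPair (Fin n) := fun p =>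
    ⟨conj_isSymm _ (hA.add (hD p.2.2).1), conj_isSymm _ (hB.add (hD p.2.2).2)⟩
  set Pc : ((Matrix (Fin n) (Fin n) ℂ) × (Matrix (Fin n) (Fin n) ℂ)) →L[ℂ] ↥(SymPair (Fin n)) := LinearMap.toContinuousLinearMap Psym with hPc
  set σc : ↥(SymPair (Fin n)) →L[ℂ] ((Matrix (Fin n) (Fin n) ℂ) × ↥D) := LinearMap.toContinuousLinearMap σ with hσc
  set G : ↥(SymPair (Fin n)) → ↥(SymPair (Fin n)) := fun s => Pc (F₀ (σc s)) with hG
  -- analyticity of G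
  have hJan : ∀ z, AnalyticAt ℂ (fun p : (Matrix (Fin n) (Fin n) ℂ) × ↥D => 1 + p.1) z := fun z =>
    analyticAt_const.add ((ContinuousLinearMap.fst ℂ (Matrix (Fin n) (Fin n) ℂ) ↥D).analyticAt z)
  have hJTan : ∀ z, AnalyticAt ℂ (fun p : (Matrix (Fin n) (Fin n) ℂ) × ↥D => (1 + p.1)ᵀ) z := fun z => by
    have h := AnalyticAt.comp (𝕜 := ℂ) (g := ⇑(transposeCLM (ι := Fin n)))
      (f := fun p : (Matrix (Fin n) (Fin n) ℂ) × ↥D => 1 + p.1)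
      ((transposeCLM (ι := Fin n)).analyticAt _) (hJan z)
    exact h
  have hY1an : ∀ z, AnalyticAt ℂ (fun p : (Matrix (Fin n) (Fin n) ℂ) × ↥D => A + (p.2 : (Matrix (Fin n) (Fin n) ℂ) × (Matrix (Fin n) (Fin n) ℂ)).1) z := fun z =>
    analyticAt_const.add (((ContinuousLinearMap.fst ℂ (Matrix (Fin n) (Fin n) ℂ) (Matrix (Fin n) (Fin n) ℂ)).comp
      (D.subtypeL.comp (ContinuousLinearMap.snd ℂ (Matrix (Fin n) (Fin n) ℂ) ↥D))).analyticAt z)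
  have hY2an : ∀ z, AnalyticAt ℂ (fun p : (Matrix (Fin n) (Fin n) ℂ) × ↥D => B + (p.2 : (Matrix (Fin n) (Fin n) ℂ) × (Matrix (Fin n) (Fin n) ℂ)).2) z := fun z =>
    analyticAt_const.add (((ContinuousLinearMap.snd ℂ (Matrix (Fin n) (Fin n) ℂ) (Matrix (Fin n) (Fin n) ℂ)).comp
      (D.subtypeL.comp (ContinuousLinearMap.snd ℂ (Matrix (Fin n) (Fin n) ℂ) ↥D))).analyticAt z)
  have hF₀an : ∀ z, AnalyticAt ℂ F₀ z := fun z =>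
    ((analyticAt_mulM (analyticAt_mulM (hJTan z) (hY1an z)) (hJan z)).prod
      (analyticAt_mulM (analyticAt_mulM (hJTan z) (hY2an z)) (hJan z)))
  have hGan : AnalyticAt ℂ G 0 := by
    have h1 : AnalyticAt ℂ (fun s : ↥(SymPair (Fin n)) => F₀ (σc s)) 0 :=
      (hF₀an (σc 0)).comp (σc.analyticAt 0)
    exact (Pc.analyticAt _).comp h1
  -- derivative of G at 0 is the identity
  have hσc0 : σc (0 : ↥(SymPair (Fin n))) = 0 := map_zero σ
  have hJ' : HasFDerivAt (fun p : (Matrix (Fin n) (Fin n) ℂ) × ↥D => 1 + p.1)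
      (ContinuousLinearMap.fst ℂ (Matrix (Fin n) (Fin n) ℂ) ↥D) 0 :=
    (ContinuousLinearMap.fst ℂ (Matrix (Fin n) (Fin n) ℂ) ↥D).hasFDerivAt.const_add 1
  set W1 : ((Matrix (Fin n) (Fin n) ℂ) × ↥D) →L[ℂ] (Matrix (Fin n) (Fin n) ℂ) := (ContinuousLinearMap.fst ℂ (Matrix (Fin n) (Fin n) ℂ) (Matrix (Fin n) (Fin n) ℂ)).comp
      (D.subtypeL.comp (ContinuousLinearMap.snd ℂ (Matrix (Fin n) (Fin n) ℂ) ↥D)) with hW1def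
  set W2 : ((Matrix (Fin n) (Fin n) ℂ) × ↥D) →L[ℂ] (Matrix (Fin n) (Fin n) ℂ) := (ContinuousLinearMap.snd ℂ (Matrix (Fin n) (Fin n) ℂ) (Matrix (Fin n) (Fin n) ℂ)).comp
      (D.subtypeL.comp (ContinuousLinearMap.snd ℂ (Matrix (Fin n) (Fin n) ℂ) ↥D)) with hW2def
  have hY1' : HasFDerivAt (fun p : (Matrix (Fin n) (Fin n) ℂ) × ↥D => A + (p.2 : (Matrix (Fin n) (Fin n) ℂ) × (Matrix (Fin n) (Fin n) ℂ)).1) W1 0 :=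
    W1.hasFDerivAt.const_add A
  have hY2' : HasFDerivAt (fun p : (Matrix (Fin n) (Fin n) ℂ) × ↥D => B + (p.2 : (Matrix (Fin n) (Fin n) ℂ) × (Matrix (Fin n) (Fin n) ℂ)).2) W2 0 :=
    W2.hasFDerivAt.const_add B
  set fstC := ContinuousLinearMap.fst ℂ (Matrix (Fin n) (Fin n) ℂ) ↥D with hfstC
  set L1 : ((Matrix (Fin n) (Fin n) ℂ) × ↥D) →L[ℂ] (Matrix (Fin n) (Fin n) ℂ) :=
    (show ((Matrix (Fin n) (Fin n) ℂ) × ↥D) →L[ℂ] (Matrix (Fin n) (Fin n) ℂ) from (mulCLM.flip A).comp (transposeCLM.comp fstC)) + W1 +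
      (show ((Matrix (Fin n) (Fin n) ℂ) × ↥D) →L[ℂ] (Matrix (Fin n) (Fin n) ℂ) from (mulCLM A).comp fstC) with hL1
  set L2 : ((Matrix (Fin n) (Fin n) ℂ) × ↥D) →L[ℂ] (Matrix (Fin n) (Fin n) ℂ) :=
    (show ((Matrix (Fin n) (Fin n) ℂ) × ↥D) →L[ℂ] (Matrix (Fin n) (Fin n) ℂ) from (mulCLM.flip B).comp (transposeCLM.comp fstC)) + W2 +
      (show ((Matrix (Fin n) (Fin n) ℂ) × ↥D) →L[ℂ] (Matrix (Fin n) (Fin n) ℂ) from (mulCLM B).comp fstC) with hL2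
  have hc1 : HasFDerivAt (fun p : (Matrix (Fin n) (Fin n) ℂ) × ↥D => (1 + p.1)ᵀ * (A + (p.2 : (Matrix (Fin n) (Fin n) ℂ) × (Matrix (Fin n) (Fin n) ℂ)).1) * (1 + p.1))
      L1 0 := by
    refine hasFDerivAt_conj hJ' hY1' (by simp) ?_
    intro w
    change L1 w = (fstC w)ᵀ * (A + 0) + W1 w + (A + 0) * fstC w
    rw [add_zero]; rfl
  have hc2 : HasFDerivAt (fun p : (Matrix (Fin n) (Fin n) ℂ) × ↥D => (1 + p.1)ᵀ * (B + (p.2 : (Matrix (Fin n) (Fin n) ℂ) × (Matrix (Fin n) (Fin n) ℂ)).2) * (1 + p.1))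
      L2 0 := by
    refine hasFDerivAt_conj hJ' hY2' (by simp) ?_
    intro w
    change L2 w = (fstC w)ᵀ * (B + 0) + W2 w + (B + 0) * fstC w
    rw [add_zero]; rfl
  have hF₀' : HasFDerivAt F₀ (L1.prod L2) 0 := hc1.prodMk hc2
  have hGd : HasFDerivAt G (Pc.comp ((L1.prod L2).comp σc)) 0 := by
    have hc : HasFDerivAt (fun s : ↥(SymPair (Fin n)) => F₀ (σc s))
        ((L1.prod L2).comp σc) 0 := by
      have h0 : HasFDerivAt F₀ (L1.prod L2) (σc 0) := by rw [hσc0]; exact hF₀'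
      exact h0.comp 0 σc.hasFDerivAt
    exact Pc.hasFDerivAt.comp 0 hc
  have hLΦ : ∀ p : (Matrix (Fin n) (Fin n) ℂ) × ↥D, (L1.prod L2) p = Φ p := fun p => by
    rw [hΦapp]
    have h1 : (L1.prod L2) p = (L1 p, L2 p) := rfl
    rw [h1, Prod.ext_iff]
    constructor
    · show p.1ᵀ * A + (p.2 : (Matrix (Fin n) (Fin n) ℂ) × (Matrix (Fin n) (Fin n) ℂ)).1 + A * p.1 = p.1ᵀ * A + A * p.1 + (p.2 : (Matrix (Fin n) (Fin n) ℂ) × (Matrix (Fin n) (Fin n) ℂ)).1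
      abel
    · show p.1ᵀ * B + (p.2 : (Matrix (Fin n) (Fin n) ℂ) × (Matrix (Fin n) (Fin n) ℂ)).2 + B * p.1 = p.1ᵀ * B + B * p.1 + (p.2 : (Matrix (Fin n) (Fin n) ℂ) × (Matrix (Fin n) (Fin n) ℂ)).2
      abel
  have hfid : Pc.comp ((L1.prod L2).comp σc) = ContinuousLinearMap.id ℂ _ := by
    refine ContinuousLinearMap.ext fun s => ?_
    show Pc ((L1.prod L2) (σc s)) = s
    rw [hLΦ]
    have : σc s = σ s := rfl
    rw [this, hΦσ s]
    exact Subtype.ext (Psym_of_mem s.2)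
  have hfd : fderiv ℂ G 0 = ContinuousLinearMap.id ℂ _ := by
    rw [hGd.fderiv, hfid]
  obtain ⟨H, hHan, hH0, hGH⟩ := analytic_local_inverse hGan hfd
  have hG0 : G 0 = (⟨(A, B), ⟨hA, hB⟩⟩ : ↥(SymPair (Fin n))) := by
    apply Subtype.ext
    have hF00 : F₀ (σc 0) = (A, B) := by
      rw [hσc0]; simp [hF₀]
    show ((Pc (F₀ (σc 0))) : (Matrix (Fin n) (Fin n) ℂ) × (Matrix (Fin n) (Fin n) ℂ)) = (A, B)
    rw [hF00]
    exact Psym_of_mem ⟨hA, hB⟩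
  -- versality
  intro Q _ _ _ ℬ
  have hBan : AnalyticAt ℂ ℬ.map 0 := by
    have h1 : AnalyticAt ℂ (fun q => (ℬ.map q).1) 0 := analyticAt_matrix (ℬ.analytic₁)
    have h2 : AnalyticAt ℂ (fun q => (ℬ.map q).2) 0 := analyticAt_matrix (ℬ.analytic₂)
    exact h1.prod h2
  set s : Q → ↥(SymPair (Fin n)) := fun q => Pc (ℬ.map q) with hs
  have hsan : AnalyticAt ℂ s 0 := (Pc.analyticAt _).comp hBan
  have hs0 : s 0 = G 0 := by
    rw [hs, hG0]
    simp only [ℬ.init]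
    exact Subtype.ext (Psym_of_mem ⟨hA, hB⟩)
  set ψ : Q → ↥(SymPair (Fin n)) := fun q => H (s q) with hψ
  have hψan : AnalyticAt ℂ ψ 0 := by
    have hH' : AnalyticAt ℂ H (s 0) := by rw [hs0]; exact hHan
    exact hH'.comp hsan
  have hψ0 : ψ 0 = 0 := by rw [hψ]; show H (s 0) = 0; rw [hs0, hH0]
  refine ⟨fun q => (σ (ψ q)).2, ?_, ?_, ?_⟩
  · have hcl : AnalyticAt ℂ (fun p : (Matrix (Fin n) (Fin n) ℂ) × ↥D => p.2) (σc (ψ 0)) :=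
      (ContinuousLinearMap.snd ℂ (Matrix (Fin n) (Fin n) ℂ) ↥D).analyticAt _
    have hσψ : AnalyticAt ℂ (fun q => σc (ψ q)) 0 := (σc.analyticAt (ψ 0)).comp hψan
    exact AnalyticAt.comp (f := fun q => σc (ψ q)) hcl hσψ
  · show (σ (ψ 0)).2 = 0
    rw [hψ0, map_zero σ]
    rfl
  · refine ⟨fun q => 1 + (σ (ψ q)).1, ?_, ?_, ?_⟩
    · intro i j
      have han : AnalyticAt ℂ (fun q => (σc (ψ q)).1) 0 := by
        have hσψ : AnalyticAt ℂ (fun q => σc (ψ q)) 0 := (σc.analyticAt (ψ 0)).comp hψan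
        exact ((ContinuousLinearMap.fst ℂ (Matrix (Fin n) (Fin n) ℂ) ↥D).analyticAt _).comp hσψ
      have h : (fun q => (1 + (σ (ψ q)).1) i j)
          = fun q => (1 : (Matrix (Fin n) (Fin n) ℂ)) i j + (σc (ψ q)).1 i j := rfl
      rw [h]
      exact analyticAt_const.add (matrix_entry_analytic han i j)
    · show 1 + (σ (ψ 0)).1 = 1
      rw [hψ0, map_zero σ]
      simp
    · -- the eventual identity
      have hsev : ∀ᶠ q in nhds (0 : Q), ((s q : (Matrix (Fin n) (Fin n) ℂ) × (Matrix (Fin n) (Fin n) ℂ))) = ℬ.map q := by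
        filter_upwards [ℬ.symm] with q hq
        exact Psym_of_mem hq
      have htend : Tendsto s (nhds 0) (nhds (G 0)) := by
        rw [← hs0]
        exact hsan.continuousAt
      have hGHs : ∀ᶠ q in nhds (0 : Q), G (H (s q)) = s q := htend.eventually hGH
      filter_upwards [hsev, hGHs] with q h1 h2
      have h3 : (s q : (Matrix (Fin n) (Fin n) ℂ) × (Matrix (Fin n) (Fin n) ℂ)) = F₀ (σc (ψ q)) := by
        conv_lhs => rw [← h2]
        show ((Pc (F₀ (σc (ψ q))) : (Matrix (Fin n) (Fin n) ℂ) × (Matrix (Fin n) (Fin n) ℂ)))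
          = F₀ (σc (ψ q))
        exact Psym_of_mem (hF₀S _)
      rw [← h1, h3]
      rfl

end Versal

/-- **Lemma (miniversality criterion).** For a pair `(A,B)` of symmetric `n × n` complex
matrices and symmetric sets of positions `I1, I2`, the following are equivalent:
(i) the deformation `(X,Y) ↦ (A+X, B+Y)` parametrized by the pattern space `𝒟(ℂ)` is
miniversal; (ii) `Sym×Sym = T(A,B) ⊕ 𝒟(ℂ)`; (iii) every coset of `T(A,B)` in `Sym×Sym`
contains exactly one element of `𝒟(ℂ)`. -/
theorem miniversal_iff_direct_sum_iff_cosets {n : ℕ} (A B : Matrix (Fin n) (Fin n) ℂ)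
    (hA : A.IsSymm) (hB : B.IsSymm) (I1 I2 : Set (Fin n × Fin n))
    (hI1 : ∀ i j : Fin n, (i, j) ∈ I1 ↔ (j, i) ∈ I1)
    (hI2 : ∀ i j : Fin n, (i, j) ∈ I2 ↔ (j, i) ∈ I2) :
    (IsMiniversal (patternDeformation A B hA hB (Pattern I1 I2) (Pattern_le I1 I2)) ↔
      (Disjoint (TSpace A B) (Pattern I1 I2) ∧
        TSpace A B ⊔ Pattern I1 I2 = SymPair (Fin n))) ∧
    ((Disjoint (TSpace A B) (Pattern I1 I2) ∧
        TSpace A B ⊔ Pattern I1 I2 = SymPair (Fin n)) ↔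
      (∀ v ∈ SymPair (Fin n), ∃! d, d ∈ Pattern I1 I2 ∧ v - d ∈ TSpace A B)) := by
  classical
  have hDS : Pattern I1 I2 ≤ SymPair (Fin n) := Pattern_le I1 I2
  have hTS : TSpace A B ≤ SymPair (Fin n) := TSpace_le hA hB
  constructor
  · constructor
    · rintro ⟨hver, hmin⟩
      -- the sup condition, from versality
      have hle := versal_le hA hB
        (patternDeformation A B hA hB (Pattern I1 I2) (Pattern_le I1 I2)) hver
      have hfd : fderiv ℂ
          (patternDeformation A B hA hB (Pattern I1 I2) (Pattern_le I1 I2)).map 0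
          = (Pattern I1 I2).subtypeL := by
        have h : HasFDerivAt
            (patternDeformation A B hA hB (Pattern I1 I2) (Pattern_le I1 I2)).map
            (Pattern I1 I2).subtypeL 0 := by
          have h1 := ((Pattern I1 I2).subtypeL.hasFDerivAt
            (x := (0 : ↥(Pattern I1 I2)))).const_add
            ((A, B) : Matrix (Fin n) (Fin n) ℂ × Matrix (Fin n) (Fin n) ℂ)
          exact h1
        exact h.fderiv
      erw [hfd, Submodule.range_subtypeL] at hle
      have hsup : TSpace A B ⊔ Pattern I1 I2 = SymPair (Fin n) :=
        le_antisymm (sup_le hTS hDS) hle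
      refine ⟨?_, hsup⟩
      -- disjointness, from minimality
      obtain ⟨D₀, hc⟩ := Submodule.exists_isCompl (TSpace A B)
      set D' := D₀ ⊓ SymPair (Fin n) with hD'
      have hD'S : D' ≤ SymPair (Fin n) := inf_le_right
      have hTD'sup : TSpace A B ⊔ D' = SymPair (Fin n) := by
        rw [hD', ← sup_inf_assoc_of_le _ hTS, hc.codisjoint.eq_top, top_inf_eq]
      have hdisj' : Disjoint (TSpace A B) D' := hc.disjoint.mono_right inf_le_left
      have hver' := isVersal_of_sup hA hB D' hD'S hTD'sup
      have hmin' := hmin ↥D' inferInstance inferInstance inferInstance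
        (patternDeformation A B hA hB D' hD'S) hver'
      have e1 : Module.finrank ℂ ↥(SymPair (Fin n)) + 0
          = Module.finrank ℂ ↥(TSpace A B) + Module.finrank ℂ ↥D' := by
        have h := Submodule.finrank_sup_add_finrank_inf_eq (TSpace A B) D'
        rw [hTD'sup, disjoint_iff.1 hdisj', finrank_bot] at h
        exact h
      have e2 : Module.finrank ℂ ↥(SymPair (Fin n))
            + Module.finrank ℂ ↥(TSpace A B ⊓ Pattern I1 I2)
          = Module.finrank ℂ ↥(TSpace A B) + Module.finrank ℂ ↥(Pattern I1 I2) := by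
        have h := Submodule.finrank_sup_add_finrank_inf_eq (TSpace A B) (Pattern I1 I2)
        rw [hsup] at h
        exact h
      have h0 : Module.finrank ℂ ↥(TSpace A B ⊓ Pattern I1 I2) = 0 := by omega
      rw [disjoint_iff]
      exact Submodule.finrank_eq_zero.1 h0
    · rintro ⟨hdisj, hsup⟩
      refine ⟨isVersal_of_sup hA hB _ _ hsup, ?_⟩
      intro Q _ _ _ ℬ hvB
      have hle := versal_le hA hB ℬ hvB
      have e2 : Module.finrank ℂ ↥(SymPair (Fin n)) + 0
          = Module.finrank ℂ ↥(TSpace A B) + Module.finrank ℂ ↥(Pattern I1 I2) := by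
        have h := Submodule.finrank_sup_add_finrank_inf_eq (TSpace A B) (Pattern I1 I2)
        rw [hsup, disjoint_iff.1 hdisj, finrank_bot] at h
        exact h
      have e3 : Module.finrank ℂ ↥(SymPair (Fin n))
          ≤ Module.finrank ℂ ↥(TSpace A B) + Module.finrank ℂ Q := by
        have h1 : Module.finrank ℂ ↥(SymPair (Fin n)) ≤ Module.finrank ℂ
            ↥(TSpace A B ⊔ LinearMap.range (fderiv ℂ ℬ.map 0 : Q →ₗ[ℂ] _)) :=
          Submodule.finrank_mono hle
        have h2 := Submodule.finrank_sup_add_finrank_inf_eq (TSpace A B)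
          (LinearMap.range (fderiv ℂ ℬ.map 0 : Q →ₗ[ℂ] _))
        have h3 : Module.finrank ℂ ↥(LinearMap.range (fderiv ℂ ℬ.map 0 : Q →ₗ[ℂ] Matrix (Fin n) (Fin n) ℂ × Matrix (Fin n) (Fin n) ℂ))
            ≤ Module.finrank ℂ Q := by
          exact LinearMap.finrank_range_le _
        omega
      omega
  · constructor
    · rintro ⟨hdisj, hsup⟩ v hv
      rw [← hsup] at hv
      obtain ⟨t, ht, d, hd, rfl⟩ := Submodule.mem_sup.1 hv
      refine ⟨d, ⟨hd, by simpa using ht⟩, ?_⟩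
      rintro d' ⟨hd', hT'⟩
      have hsub : d' - d ∈ TSpace A B := by
        have h1 : (t + d - d') - t ∈ TSpace A B := Submodule.sub_mem _ hT' ht
        have h2 : (t + d - d') - t = d - d' := by abel
        rw [h2] at h1
        have h3 := Submodule.neg_mem _ h1
        simpa using h3
      have hsubD : d' - d ∈ Pattern I1 I2 := Submodule.sub_mem _ hd' hd
      have : d' - d = 0 := by
        have h := Submodule.disjoint_def.1 hdisj _ hsub hsubD
        exact h
      have := sub_eq_zero.1 this
      exact this
    · intro h
      constructor
      · rw [disjoint_iff, eq_bot_iff]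
        rintro x hx
        have hxT : x ∈ TSpace A B := hx.1
        have hxD : x ∈ Pattern I1 I2 := hx.2
        obtain ⟨d, _, huniq⟩ := h x (hDS hxD)
        have h1 : x = d := huniq x ⟨hxD, by simpa using (TSpace A B).zero_mem⟩
        have h2 : (0 : Matrix (Fin n) (Fin n) ℂ × Matrix (Fin n) (Fin n) ℂ) = d :=
          huniq 0 ⟨(Pattern I1 I2).zero_mem, by simpa using hxT⟩
        have : x = 0 := by rw [h1, ← h2]
        simpa using this
      · refine le_antisymm (sup_le hTS hDS) ?_
        intro v hv
        obtain ⟨d, ⟨hdD, hdT⟩, _⟩ := h v hv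
        have hvd : v = (v - d) + d := by abel
        rw [hvd]
        exact Submodule.add_mem_sup hdT hdD

end
end

section
/- For every positive integer n and every λ ∈ ℂ, the space Sym_n(ℂ)×Sym_n(ℂ) is the direct sum of the subspace T(Δ_n, Λ_n(λ)) and the subspace P := { (0, Y) : Y ∈ Sym_n(ℂ), Y_{ij} = 0 whenever |i−j| > 1 or i+j > n+1 }. In particular, every pair of symmetric n×n complex matrices can be reduced to exactly one element of P by adding (C^T Δ_n + Δ_n C, C^T Λ_n(λ) + Λ_n(λ) C) for C ∈ ℂ^{n×n}. -/
open Matrix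

noncomputable section

/-- `Λ_n(λ)`: the `n × n` matrix with `(i,j)` entry `λ` if `i + j = n + 1`, `1` if
`i + j = n + 2`, and `0` otherwise (1-based indices). -/
def lamM (n : ℕ) (lam : ℂ) : Matrix (Fin n) (Fin n) ℂ :=
  Matrix.of fun i j =>
    if (i : ℕ) + 1 + ((j : ℕ) + 1) = n + 1 then lam
    else if (i : ℕ) + 1 + ((j : ℕ) + 1) = n + 2 then 1 else 0

/-- `Δ_n`: the `n × n` matrix with `(i,j)` entry `1` if `i + j = n + 1` and `0`
otherwise (1-based indices). -/
def delM (n : ℕ) : Matrix (Fin n) (Fin n) ℂ :=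
  Matrix.of fun i j => if (i : ℕ) + 1 + ((j : ℕ) + 1) = n + 1 then 1 else 0

/-- `F_n`: the `n × (n+1)` matrix with `F_n(i,j) = 1` exactly when `j = i`. -/
def FM (n : ℕ) : Matrix (Fin n) (Fin (n + 1)) ℂ :=
  Matrix.of fun i j => if (j : ℕ) = (i : ℕ) then 1 else 0

/-- `G_n`: the `n × (n+1)` matrix with `G_n(i,j) = 1` exactly when `j = i + 1`. -/
def GM (n : ℕ) : Matrix (Fin n) (Fin (n + 1)) ℂ :=
  Matrix.of fun i j => if (j : ℕ) = (i : ℕ) + 1 then 1 else 0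

/-- `L_n^{(1)} = [[0, F_nᵀ], [F_n, 0]]`, a symmetric `(2n+1) × (2n+1)` matrix. -/
def L1M (n : ℕ) : Matrix (Fin (2 * n + 1)) (Fin (2 * n + 1)) ℂ :=
  Matrix.reindex (finSumFinEquiv.trans (finCongr (by omega)))
    (finSumFinEquiv.trans (finCongr (by omega)))
    (Matrix.fromBlocks 0 (FM n)ᵀ (FM n) 0)

/-- `L_n^{(2)} = [[0, G_nᵀ], [G_n, 0]]`, a symmetric `(2n+1) × (2n+1)` matrix. -/
def L2M (n : ℕ) : Matrix (Fin (2 * n + 1)) (Fin (2 * n + 1)) ℂ :=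
  Matrix.reindex (finSumFinEquiv.trans (finCongr (by omega)))
    (finSumFinEquiv.trans (finCongr (by omega)))
    (Matrix.fromBlocks 0 (GM n)ᵀ (GM n) 0)

theorem lamM_isSymm (n : ℕ) (lam : ℂ) : (lamM n lam).IsSymm := by
  unfold Matrix.IsSymm lamM
  ext i j
  simp only [Matrix.transpose_apply, Matrix.of_apply]
  split_ifs <;> first | rfl | omega

theorem delM_isSymm (n : ℕ) : (delM n).IsSymm := by
  unfold Matrix.IsSymm delM
  ext i j
  simp only [Matrix.transpose_apply, Matrix.of_apply]
  split_ifs <;> first | rfl | omega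

theorem L1M_isSymm (n : ℕ) : (L1M n).IsSymm := by
  unfold Matrix.IsSymm L1M
  rw [Matrix.transpose_reindex, Matrix.fromBlocks_transpose]
  simp

theorem L2M_isSymm (n : ℕ) : (L2M n).IsSymm := by
  unfold Matrix.IsSymm L2M
  rw [Matrix.transpose_reindex, Matrix.fromBlocks_transpose]
  simp

/-- The type of canonical summands: `H_k(λ)`, `K_k`, `L_k`. -/
inductive CanType where
  | H : ℕ → ℂ → CanType
  | K : ℕ → CanType
  | L : ℕ → CanType

/-- The size of a canonical pair. -/
def CanType.size : CanType → ℕ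
  | .H k _ => k
  | .K k => k
  | .L k => 2 * k + 1

/-- The size parameter of a canonical pair. -/
def CanType.param : CanType → ℕ
  | .H k _ => k
  | .K k => k
  | .L k => k

/-- The first matrix of a canonical pair. -/
def CanType.A : (c : CanType) → Matrix (Fin c.size) (Fin c.size) ℂ
  | .H k _ => delM k
  | .K k => lamM k 0
  | .L k => L1M k

/-- The second matrix of a canonical pair. -/
def CanType.B : (c : CanType) → Matrix (Fin c.size) (Fin c.size) ℂ
  | .H k lam => lamM k lam
  | .K k => delM k
  | .L k => L2M k

/-- Congruence of pairs of square complex matrices (over possibly different index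
types): `(A', B') = (Sᵀ A S, Sᵀ B S)` for some invertible `S`. -/
def CongruentPairs {ι κ : Type} [Fintype ι] [Fintype κ] [DecidableEq ι] [DecidableEq κ]
    (p : Matrix ι ι ℂ × Matrix ι ι ℂ) (q : Matrix κ κ ℂ × Matrix κ κ ℂ) : Prop :=
  ∃ S : Matrix ι κ ℂ, (∃ T : Matrix κ ι ℂ, S * T = 1 ∧ T * S = 1) ∧
    q.1 = Sᵀ * p.1 * S ∧ q.2 = Sᵀ * p.2 * S

end

noncomputable section


section Aux

/-- zeroing core lemma -/
theorem core1 (n : ℕ) (W : ℤ → ℤ → ℂ)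
    (hsupp : ∀ i j : ℤ, ¬(0 ≤ i ∧ i < n ∧ 0 ≤ j ∧ j < n) → W i j = 0)
    (hskew : ∀ i j, W j i = -W i j)
    (hrel : ∀ i j : ℤ, 0 ≤ i → i < n → 0 ≤ j → j < n →
      ¬((i ≤ j + 1 ∧ j ≤ i + 1) ∧ i + j + 2 ≤ (n : ℤ) + 1) → W (i - 1) j = W i (j - 1)) :
    ∀ i j, W i j = 0 := by
  -- antidiagonal chain
  have claim2 : ∀ t : ℕ, ∀ i j : ℤ, 0 ≤ i → i + t ≤ (n : ℤ) - 1 → 0 ≤ j - t → j ≤ (n : ℤ) - 1 →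
      (n : ℤ) - 1 ≤ i + j → W i j = W (i + t) (j - t) := by
    intro t
    induction t with
    | zero => intro i j _ _ _ _ _; norm_num
    | succ t ih =>
      intro i j h0 h1 h2 h3 h4
      have e1 : W i j = W (i + t) (j - t) := by
        apply ih i j h0 (by push_cast at h1 ⊢; omega) (by push_cast at h2 ⊢; omega) h3 h4
      have e2 := hrel (i + t + 1) (j - t) (by omega) (by push_cast at h1 ⊢; omega)
        (by push_cast at h2 ⊢; omega) (by push_cast at h2 ⊢; omega)
        (by push_cast at h1 h2 ⊢; omega)
      rw [e1]
      have : W (i + t) (j - t) = W (i + t + 1) (j - t - 1) := by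
        have : (i + t + 1 : ℤ) - 1 = i + t := by ring
        rw [← this] at e2 ⊢
        convert e2 using 2 <;> push_cast <;> ring
      rw [this]; congr 1 <;> push_cast <;> ring
  have claim1 : ∀ m : ℕ, ∀ i j : ℤ, i + 1 = m → i < j → i + j ≤ (n : ℤ) - 2 → j < n → W i j = 0 := by
    intro m
    induction m with
    | zero =>
      intro i j hm _ _ _
      apply hsupp; omega
    | succ m ih =>
      intro i j hm hij hsum hj
      have h0 : 0 ≤ i := by omega
      have e := hrel i (j + 1) h0 (by omega) (by omega) (by omega) (by omega)
      have e2 : W i j = W (i - 1) (j + 1) := by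
        rw [e]; congr 1; ring
      rw [e2]
      exact ih (i - 1) (j + 1) (by omega) (by omega) (by omega) (by omega)
  intro i j
  by_cases hr : 0 ≤ i ∧ i < (n:ℤ) ∧ 0 ≤ j ∧ j < (n:ℤ)
  swap
  · exact hsupp i j hr
  obtain ⟨h0i, hin, h0j, hjn⟩ := hr
  -- main: prove for i ≤ j then use skew
  have main : ∀ a b : ℤ, 0 ≤ a → a < n → 0 ≤ b → b < n → a ≤ b → W a b = 0 := by
    intro a b h0a han h0b hbn hab
    rcases eq_or_lt_of_le hab with heq | hlt
    · subst heq
      have := hskew a a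
      linear_combination (1/2 : ℂ) * this
    rcases le_or_gt (a + b) ((n:ℤ) - 2) with hs | hs
    · exact claim1 (a+1).toNat a b (by omega) hlt hs (by omega)
    · have := claim2 (b - a).toNat a b h0a (by push_cast; omega) (by push_cast; omega)
        (by omega) (by omega)
      have e : W a b = W b a := by
        rw [this]; congr 1 <;> push_cast <;> omega
      have e2 := e.trans (hskew a b)
      linear_combination (1/2 : ℂ) * e2
  rcases le_or_gt i j with h | h
  · exact main i j h0i hin h0j hjn h
  · rw [hskew j i, main j i h0j hjn h0i hin (le_of_lt h)]; ring


theorem sum_Icc_top (f : ℤ → ℂ) (a b : ℤ) (h : a ≤ b) :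
    ∑ k ∈ Finset.Icc a b, f k = (∑ k ∈ Finset.Icc a (b - 1), f k) + f b := by
  have : Finset.Icc a b = insert b (Finset.Icc a (b-1)) := by
    ext x; simp only [Finset.mem_Icc, Finset.mem_insert]; omega
  rw [this, Finset.sum_insert (by simp only [Finset.mem_Icc]; omega), add_comm]

theorem sum_Icc_bot (f : ℤ → ℂ) (a b : ℤ) (h : a ≤ b) :
    ∑ k ∈ Finset.Icc a b, f k = f a + (∑ k ∈ Finset.Icc (a + 1) b, f k) := by
  have : Finset.Icc a b = insert a (Finset.Icc (a+1) b) := by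
    ext x; simp only [Finset.mem_Icc, Finset.mem_insert]; omega
  rw [this, Finset.sum_insert (by simp only [Finset.mem_Icc]; omega)]

/-- reflection of an antidiagonal sum of a symmetric function -/
theorem sum_refl (Z : ℤ → ℤ → ℂ) (hZ : ∀ i j, Z j i = Z i j) (s a b : ℤ) :
    ∑ k ∈ Finset.Icc a b, Z k (s + 1 - k)
      = ∑ k ∈ Finset.Icc (s + 1 - b) (s + 1 - a), Z k (s + 1 - k) := by
  apply Finset.sum_nbij' (fun k => s + 1 - k) (fun k => s + 1 - k)
  · intro k hk; simp only [Finset.mem_Icc] at hk ⊢; omega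
  · intro k hk; simp only [Finset.mem_Icc] at hk ⊢; omega
  · intro k _; ring
  · intro k _; ring
  · intro k _
    rw [hZ]
    congr 1; ring

noncomputable def solveW (n : ℕ) (Z : ℤ → ℤ → ℂ) (i j : ℤ) : ℂ :=
  if 0 ≤ i ∧ i < (n:ℤ) ∧ 0 ≤ j ∧ j < (n:ℤ) then
    (if i + j ≤ (n:ℤ) - 2 then
      (if 2*i < i + j then ∑ k ∈ Finset.Icc 0 i, Z k (i + j + 1 - k)
       else if 2*i = i + j then 0
       else -∑ k ∈ Finset.Icc 0 j, Z k (i + j + 1 - k))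
     else (1/2) * ((∑ k ∈ Finset.Icc (i + j - n + 2) i, Z k (i + j + 1 - k))
          - ∑ k ∈ Finset.Icc (i+1) ((n:ℤ)-1), Z k (i + j + 1 - k)))
  else 0

theorem solveW_supp (n : ℕ) (Z : ℤ → ℤ → ℂ) (i j : ℤ)
    (h : ¬(0 ≤ i ∧ i < (n:ℤ) ∧ 0 ≤ j ∧ j < (n:ℤ))) : solveW n Z i j = 0 := by
  rw [solveW, if_neg h]

theorem solveW_lt (n : ℕ) (Z : ℤ → ℤ → ℂ) (i j : ℤ)
    (h : 0 ≤ i ∧ i < (n:ℤ) ∧ 0 ≤ j ∧ j < (n:ℤ)) (hs : i + j ≤ (n:ℤ) - 2) (h1 : i < j) :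
    solveW n Z i j = ∑ k ∈ Finset.Icc 0 i, Z k (i + j + 1 - k) := by
  rw [solveW, if_pos h, if_pos hs, if_pos (by omega)]

theorem solveW_mid (n : ℕ) (Z : ℤ → ℤ → ℂ) (i j : ℤ)
    (h : 0 ≤ i ∧ i < (n:ℤ) ∧ 0 ≤ j ∧ j < (n:ℤ)) (hs : i + j ≤ (n:ℤ) - 2) (h1 : i = j) :
    solveW n Z i j = 0 := by
  rw [solveW, if_pos h, if_pos hs, if_neg (by omega), if_pos (by omega)]

theorem solveW_gt (n : ℕ) (Z : ℤ → ℤ → ℂ) (i j : ℤ)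
    (h : 0 ≤ i ∧ i < (n:ℤ) ∧ 0 ≤ j ∧ j < (n:ℤ)) (hs : i + j ≤ (n:ℤ) - 2) (h1 : j < i) :
    solveW n Z i j = -∑ k ∈ Finset.Icc 0 j, Z k (i + j + 1 - k) := by
  rw [solveW, if_pos h, if_pos hs, if_neg (by omega), if_neg (by omega)]

theorem solveW_big (n : ℕ) (Z : ℤ → ℤ → ℂ) (i j : ℤ)
    (h : 0 ≤ i ∧ i < (n:ℤ) ∧ 0 ≤ j ∧ j < (n:ℤ)) (hs : (n:ℤ) - 1 ≤ i + j) :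
    solveW n Z i j = (1/2) * ((∑ k ∈ Finset.Icc (i + j - n + 2) i, Z k (i + j + 1 - k))
          - ∑ k ∈ Finset.Icc (i+1) ((n:ℤ)-1), Z k (i + j + 1 - k)) := by
  rw [solveW, if_pos h, if_neg (by omega)]

theorem solveW_skew (n : ℕ) (Z : ℤ → ℤ → ℂ) (hZ : ∀ i j, Z j i = Z i j) (i j : ℤ) :
    solveW n Z j i = -solveW n Z i j := by
  by_cases h : 0 ≤ i ∧ i < (n:ℤ) ∧ 0 ≤ j ∧ j < (n:ℤ)
  swap
  · rw [solveW_supp n Z i j h, solveW_supp n Z j i (by tauto), neg_zero]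
  have h' : 0 ≤ j ∧ j < (n:ℤ) ∧ 0 ≤ i ∧ i < (n:ℤ) := by tauto
  by_cases hs : i + j ≤ (n:ℤ) - 2
  · rcases lt_trichotomy i j with h1 | h1 | h1
    · rw [solveW_lt n Z i j h hs h1, solveW_gt n Z j i h' (by omega) h1]
      congr 1
      apply Finset.sum_congr rfl
      intro k _; congr 1; ring
    · rw [solveW_mid n Z i j h hs h1, solveW_mid n Z j i h' (by omega) h1.symm, neg_zero]
    · rw [solveW_gt n Z i j h hs h1, solveW_lt n Z j i h' (by omega) h1, neg_neg]
      apply Finset.sum_congr rfl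
      intro k _; congr 1; ring
  · rw [solveW_big n Z i j h (by omega), solveW_big n Z j i h' (by omega)]
    have hcomm : ∀ a b : ℤ, ∑ k ∈ Finset.Icc a b, Z k (j + i + 1 - k)
        = ∑ k ∈ Finset.Icc a b, Z k (i + j + 1 - k) := by
      intro a b; apply Finset.sum_congr rfl; intro k _; congr 1; ring
    rw [hcomm, hcomm]
    have e1 : ∑ k ∈ Finset.Icc (j + i - n + 2) j, Z k (i + j + 1 - k)
        = ∑ k ∈ Finset.Icc (i + 1) ((n:ℤ) - 1), Z k (i + j + 1 - k) := by
      rw [sum_refl Z hZ (i+j) (j + i - n + 2) j]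
      congr 1
      congr 1 <;> ring
    have e2 : ∑ k ∈ Finset.Icc (j + 1) ((n:ℤ) - 1), Z k (i + j + 1 - k)
        = ∑ k ∈ Finset.Icc (i + j - n + 2) i, Z k (i + j + 1 - k) := by
      rw [sum_refl Z hZ (i+j) (j+1) ((n:ℤ)-1)]
      congr 1
      congr 1 <;> ring
    rw [e1, e2]; ring

theorem solveW_rel (n : ℕ) (Z : ℤ → ℤ → ℂ) (hZ : ∀ i j, Z j i = Z i j) (i j : ℤ)
    (hi : 0 ≤ i) (hin : i < (n:ℤ)) (hj : 0 ≤ j) (hjn : j < (n:ℤ))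
    (hpat : ¬((i ≤ j + 1 ∧ j ≤ i + 1) ∧ i + j + 2 ≤ (n:ℤ) + 1)) :
    Z i j + solveW n Z (i - 1) j - solveW n Z i (j - 1) = 0 := by
  set g : ℤ → ℂ := fun k => Z k (i + j - k) with hg
  have hsum : ∀ a b : ℤ, ∀ u v : ℤ, u + v = i + j - 1 →
      ∑ k ∈ Finset.Icc a b, Z k (u + v + 1 - k) = ∑ k ∈ Finset.Icc a b, g k := by
    intro a b u v huv
    apply Finset.sum_congr rfl
    intro k _
    rw [hg]; simp only; congr 1; omega
  rcases le_or_gt (i + j) ((n:ℤ) - 1) with hs | hs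
  · -- small antidiagonal
    rcases (by omega : j ≥ i + 2 ∨ i ≥ j + 2) with h1 | h1
    · rcases eq_or_lt_of_le hi with h0 | h0
      · -- i = 0
        rw [solveW_supp n Z (i-1) j (by omega),
            solveW_lt n Z i (j-1) (by omega) (by omega) (by omega),
            hsum 0 i i (j-1) (by omega)]
        obtain rfl : (0:ℤ) = i := h0
        rw [Finset.Icc_self, Finset.sum_singleton]
        rw [hg]; simp only
        rw [show (0:ℤ) + j - 0 = j by ring]
        ring
      · rw [solveW_lt n Z (i-1) j (by omega) (by omega) (by omega),
            solveW_lt n Z i (j-1) (by omega) (by omega) (by omega),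
            hsum 0 (i-1) (i-1) j (by omega), hsum 0 i i (j-1) (by omega),
            sum_Icc_top g 0 i hi]
        have : g i = Z i j := by rw [hg]; simp only; congr 1; ring
        rw [this]; ring
    · rcases eq_or_lt_of_le hj with h0 | h0
      · -- j = 0
        rw [solveW_supp n Z i (j-1) (by omega),
            solveW_gt n Z (i-1) j (by omega) (by omega) (by omega),
            hsum 0 j (i-1) j (by omega)]
        obtain rfl : (0:ℤ) = j := h0
        rw [Finset.Icc_self, Finset.sum_singleton]
        rw [hg]; simp only
        rw [show i + 0 - 0 = i by ring, hZ]
        ring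
      · rw [solveW_gt n Z (i-1) j (by omega) (by omega) (by omega),
            solveW_gt n Z i (j-1) (by omega) (by omega) (by omega),
            hsum 0 j (i-1) j (by omega), hsum 0 (j-1) i (j-1) (by omega),
            sum_Icc_top g 0 j hj]
        have : g j = Z i j := by rw [hg]; simp only; rw [show i + j - j = i by ring, hZ]
        rw [this]; ring
  · -- big antidiagonal
    have hi1 : 1 ≤ i := by omega
    have hj1 : 1 ≤ j := by omega
    rw [solveW_big n Z (i-1) j (by omega) (by omega),
        solveW_big n Z i (j-1) (by omega) (by omega),
        show (i - 1 + 1 : ℤ) = i by ring,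
        hsum (i - 1 + j - n + 2) (i-1) (i-1) j (by omega),
        hsum i ((n:ℤ)-1) (i-1) j (by omega),
        hsum (i + (j-1) - n + 2) i i (j-1) (by omega),
        hsum (i+1) ((n:ℤ)-1) i (j-1) (by omega)]
    have e1 : (i - 1 + j - n + 2 : ℤ) = i + j - n + 1 := by ring
    have e2 : (i + (j - 1) - n + 2 : ℤ) = i + j - n + 1 := by ring
    rw [e1, e2]
    rw [sum_Icc_top g (i + j - n + 1) i (by omega), sum_Icc_bot g i ((n:ℤ)-1) (by omega)]
    have : g i = Z i j := by rw [hg]; simp only; congr 1; ring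
    rw [this]; ring


def revF (n : ℕ) (i : Fin n) : Fin n := ⟨n - 1 - (i : ℕ), by omega⟩

def UM (n : ℕ) : Matrix (Fin n) (Fin n) ℂ :=
  Matrix.of fun i j => if (i : ℕ) = (j : ℕ) + 1 then 1 else 0

def nM (n : ℕ) : Matrix (Fin n) (Fin n) ℂ :=
  Matrix.of fun i j => if (i : ℕ) + 1 + ((j : ℕ) + 1) = n + 2 then 1 else 0

theorem delM_mul_apply {n : ℕ} (M : Matrix (Fin n) (Fin n) ℂ) (i j : Fin n) :
    (delM n * M) i j = M (revF n i) j := by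
  rw [Matrix.mul_apply, Finset.sum_eq_single (revF n i)]
  · have hi := i.isLt
    simp only [delM, of_apply, revF]
    rw [if_pos (by show (i:ℕ) + 1 + ((n - 1 - (i:ℕ)) + 1) = n + 1; omega), one_mul]
  · intro k _ hk
    have hi := i.isLt
    have hk' : (k : ℕ) ≠ n - 1 - (i : ℕ) := fun h => hk (Fin.ext (by simp [revF, h]))
    have hkL := k.isLt
    simp only [delM, of_apply]
    rw [if_neg (by omega), zero_mul]
  · intro h; exact absurd (Finset.mem_univ _) h

theorem delM_sq (n : ℕ) : delM n * delM n = 1 := by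
  ext i j
  rw [delM_mul_apply]
  have hi := i.isLt
  have hj := j.isLt
  simp only [delM, of_apply, revF, Matrix.one_apply]
  by_cases h : i = j
  · subst h; rw [if_pos (by omega), if_pos rfl]
  · rw [if_neg, if_neg h]
    have : (i : ℕ) ≠ (j : ℕ) := fun hc => h (Fin.ext hc)
    omega

theorem UM_mul_apply {n : ℕ} (M : Matrix (Fin n) (Fin n) ℂ) (i j : Fin n) :
    (UM n * M) i j = if h : 1 ≤ (i : ℕ) then M ⟨(i : ℕ) - 1, by omega⟩ j else 0 := by
  rw [Matrix.mul_apply]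
  by_cases h : 1 ≤ (i : ℕ)
  · rw [dif_pos h, Finset.sum_eq_single (⟨(i : ℕ) - 1, by omega⟩ : Fin n)]
    · simp only [UM, of_apply]
      rw [if_pos (by show (i:ℕ) = ((i:ℕ) - 1) + 1; omega), one_mul]
    · intro k _ hk
      have hk' : (k : ℕ) ≠ (i : ℕ) - 1 := fun hc => hk (Fin.ext (by simp [hc]))
      simp only [UM, of_apply]
      rw [if_neg (by omega), zero_mul]
    · intro h; exact absurd (Finset.mem_univ _) h
  · rw [dif_neg h, Finset.sum_eq_zero]
    intro k _
    simp only [UM, of_apply]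
    rw [if_neg (by omega), zero_mul]

theorem nM_eq (n : ℕ) : nM n = UM n * delM n := by
  ext i j
  rw [UM_mul_apply]
  have hi := i.isLt
  have hj := j.isLt
  by_cases h : 1 ≤ (i : ℕ)
  · rw [dif_pos h]
    simp only [nM, delM, of_apply]
    split_ifs <;> first | rfl | omega
  · rw [dif_neg h]
    simp only [nM, of_apply]
    rw [if_neg (by omega)]

theorem nM_isSymm (n : ℕ) : (nM n).IsSymm := by
  unfold Matrix.IsSymm nM
  ext i j
  simp only [Matrix.transpose_apply, Matrix.of_apply]
  split_ifs <;> first | rfl | omega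

theorem lamM_eq (n : ℕ) (lam : ℂ) : lamM n lam = lam • delM n + nM n := by
  ext i j
  simp only [lamM, delM, nM, of_apply, Matrix.add_apply, Matrix.smul_apply, smul_eq_mul]
  split_ifs <;> first | omega | ring

def extM (n : ℕ) (M : Matrix (Fin n) (Fin n) ℂ) (i j : ℤ) : ℂ :=
  if h : 0 ≤ i ∧ i < (n : ℤ) ∧ 0 ≤ j ∧ j < (n : ℤ) then
    M ⟨i.toNat, by omega⟩ ⟨j.toNat, by omega⟩ else 0

theorem extM_apply {n : ℕ} (M : Matrix (Fin n) (Fin n) ℂ) (i j : Fin n) :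
    extM n M (i : ℕ) (j : ℕ) = M i j := by
  have hi := i.isLt
  have hj := j.isLt
  rw [extM, dif_pos (by omega)]
  congr 1 <;> exact Fin.ext (by simp)

theorem extM_supp {n : ℕ} (M : Matrix (Fin n) (Fin n) ℂ) (i j : ℤ)
    (h : ¬(0 ≤ i ∧ i < (n : ℤ) ∧ 0 ≤ j ∧ j < (n : ℤ))) : extM n M i j = 0 := by
  rw [extM, dif_neg h]

theorem extM_transpose {n : ℕ} (M : Matrix (Fin n) (Fin n) ℂ) (i j : ℤ) :
    extM n Mᵀ i j = extM n M j i := by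
  unfold extM
  by_cases h : 0 ≤ i ∧ i < (n : ℤ) ∧ 0 ≤ j ∧ j < (n : ℤ)
  · rw [dif_pos h, dif_pos (by tauto)]; rfl
  · rw [dif_neg h, dif_neg (by tauto)]

theorem extM_symm {n : ℕ} (M : Matrix (Fin n) (Fin n) ℂ) (h : M.IsSymm) (i j : ℤ) :
    extM n M j i = extM n M i j := by
  rw [← extM_transpose, h]

theorem extM_add {n : ℕ} (A B : Matrix (Fin n) (Fin n) ℂ) (i j : ℤ) :
    extM n (A + B) i j = extM n A i j + extM n B i j := by
  unfold extM
  by_cases h : 0 ≤ i ∧ i < (n : ℤ) ∧ 0 ≤ j ∧ j < (n : ℤ)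
  · rw [dif_pos h, dif_pos h, dif_pos h]; rfl
  · rw [dif_neg h, dif_neg h, dif_neg h, add_zero]

theorem extM_smul {n : ℕ} (c : ℂ) (A : Matrix (Fin n) (Fin n) ℂ) (i j : ℤ) :
    extM n (c • A) i j = c * extM n A i j := by
  unfold extM
  by_cases h : 0 ≤ i ∧ i < (n : ℤ) ∧ 0 ≤ j ∧ j < (n : ℤ)
  · rw [dif_pos h, dif_pos h]; rfl
  · rw [dif_neg h, dif_neg h, mul_zero]

theorem extM_UM_mul {n : ℕ} (M : Matrix (Fin n) (Fin n) ℂ) (i j : ℤ) (hi : i < (n : ℤ)) :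
    extM n (UM n * M) i j = extM n M (i - 1) j := by
  by_cases h : 0 ≤ i ∧ i < (n : ℤ) ∧ 0 ≤ j ∧ j < (n : ℤ)
  · rw [extM, dif_pos h]
    rw [UM_mul_apply]
    by_cases h1 : 1 ≤ i.toNat
    · rw [dif_pos h1, extM, dif_pos (by omega)]
      have e1 : (⟨(i-1).toNat, by omega⟩ : Fin n) = ⟨i.toNat - 1, by omega⟩ :=
        Fin.ext (by show (i-1).toNat = i.toNat - 1; omega)
      rw [e1]
    · rw [dif_neg h1, extM, dif_neg (by omega)]
  · rw [extM_supp _ _ _ h]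
    by_cases h2 : 0 ≤ i - 1 ∧ i - 1 < (n : ℤ) ∧ 0 ≤ j ∧ j < (n : ℤ)
    · exfalso; omega
    · rw [extM_supp _ _ _ h2]

def mkM (n : ℕ) (f : ℤ → ℤ → ℂ) : Matrix (Fin n) (Fin n) ℂ :=
  Matrix.of fun i j => f ((i : ℕ) : ℤ) ((j : ℕ) : ℤ)

theorem extM_mkM {n : ℕ} (f : ℤ → ℤ → ℂ)
    (hsupp : ∀ i j : ℤ, ¬(0 ≤ i ∧ i < (n : ℤ) ∧ 0 ≤ j ∧ j < (n : ℤ)) → f i j = 0) :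
    extM n (mkM n f) = f := by
  funext i j
  unfold extM mkM
  by_cases h : 0 ≤ i ∧ i < (n : ℤ) ∧ 0 ≤ j ∧ j < (n : ℤ)
  · rw [dif_pos h]
    simp only [of_apply]
    congr 1 <;> omega
  · rw [dif_neg h, hsupp i j h]

theorem mkM_apply_eq {n : ℕ} (f : ℤ → ℤ → ℂ) (i j : Fin n) :
    mkM n f i j = f (i : ℕ) (j : ℕ) := rfl
end Aux

section Main

theorem extM_apply' {n : ℕ} (M : Matrix (Fin n) (Fin n) ℂ) (i j : ℤ)
    (h : 0 ≤ i ∧ i < (n : ℤ) ∧ 0 ≤ j ∧ j < (n : ℤ)) :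
    extM n M i j = M ⟨i.toNat, by omega⟩ ⟨j.toNat, by omega⟩ := by
  rw [extM, dif_pos h]

/-- The canonical decomposition of `congMap` values through `D = Δ C`. -/
theorem congMap_eq (n : ℕ) (lam : ℂ) (C : Matrix (Fin n) (Fin n) ℂ) :
    congMap (delM n) (lamM n lam) C =
      ((delM n * C)ᵀ + delM n * C,
       lam • ((delM n * C)ᵀ + delM n * C)
         + ((UM n * (delM n * C))ᵀ + UM n * (delM n * C))) := by
  have hCt : Cᵀ * delM n = (delM n * C)ᵀ := by
    rw [transpose_mul, (delM_isSymm n)]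
  have hCN : Cᵀ * nM n = (UM n * (delM n * C))ᵀ := by
    rw [← mul_assoc, ← nM_eq, transpose_mul, (nM_isSymm n)]
  have h2 : Cᵀ * lamM n lam + lamM n lam * C =
      lam • ((delM n * C)ᵀ + delM n * C)
        + ((UM n * (delM n * C))ᵀ + UM n * (delM n * C)) := by
    rw [lamM_eq, mul_add, add_mul, mul_smul_comm, smul_mul_assoc, hCt, hCN,
      nM_eq, mul_assoc, smul_add]
    abel
  show (Cᵀ * delM n + delM n * C, Cᵀ * lamM n lam + lamM n lam * C) = _
  rw [hCt, h2]

/-- Any element of the intersection of `TSpace` and the pattern space is zero. -/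
theorem TP_zero (n : ℕ) (lam : ℂ) (x : Matrix (Fin n) (Fin n) ℂ × Matrix (Fin n) (Fin n) ℂ)
    (hxT : x ∈ TSpace (delM n) (lamM n lam))
    (hxP : x ∈ Pattern (∅ : Set (Fin n × Fin n))
      {pq : Fin n × Fin n | ((pq.1 : ℕ) ≤ (pq.2 : ℕ) + 1 ∧ (pq.2 : ℕ) ≤ (pq.1 : ℕ) + 1) ∧
        (pq.1 : ℕ) + 1 + ((pq.2 : ℕ) + 1) ≤ n + 1}) : x = 0 := by
  obtain ⟨C, hC⟩ := hxT
  rw [congMap_eq] at hC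
  set D := delM n * C with hD
  obtain ⟨hs1, hs2, hz1, hz2⟩ := hxP
  have hx1 : x.1 = 0 := by
    ext i j
    simpa using hz1 i j (Set.notMem_empty _)
  have hC1 : x.1 = Dᵀ + D := by rw [← hC]
  have hC2 : x.2 = lam • (Dᵀ + D) + ((UM n * D)ᵀ + UM n * D) := by rw [← hC]
  have h1 : Dᵀ + D = 0 := by rw [← hC1, hx1]
  have hDT : Dᵀ = -D := eq_neg_of_add_eq_zero_left h1
  have hskew : ∀ i j : ℤ, extM n D j i = -extM n D i j := by
    intro i j
    rw [← extM_transpose, hDT]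
    unfold extM
    by_cases h : 0 ≤ i ∧ i < (n : ℤ) ∧ 0 ≤ j ∧ j < (n : ℤ)
    · rw [dif_pos h, dif_pos h]; rfl
    · rw [dif_neg h, dif_neg h, neg_zero]
  have hWzero : ∀ i j : ℤ, extM n D i j = 0 := by
    apply core1 n (extM n D) (fun i j h => extM_supp _ _ _ h) hskew
    intro i j h0i hin h0j hjn hnp
    have hmem : ((⟨i.toNat, by omega⟩ : Fin n), (⟨j.toNat, by omega⟩ : Fin n)) ∉
        {pq : Fin n × Fin n | ((pq.1 : ℕ) ≤ (pq.2 : ℕ) + 1 ∧ (pq.2 : ℕ) ≤ (pq.1 : ℕ) + 1) ∧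
          (pq.1 : ℕ) + 1 + ((pq.2 : ℕ) + 1) ≤ n + 1} := by
      intro hmem
      simp only [Set.mem_setOf_eq] at hmem
      exact hnp ⟨⟨by omega, by omega⟩, by omega⟩
    have he : extM n x.2 i j = 0 := by
      rw [extM_apply' x.2 i j ⟨h0i, hin, h0j, hjn⟩]
      exact hz2 _ _ hmem
    rw [hC2, h1] at he
    rw [extM_add, extM_smul, extM_add, extM_transpose] at he
    rw [extM_UM_mul _ _ _ hjn, extM_UM_mul _ _ _ hin] at he
    have hz : extM n (0 : Matrix (Fin n) (Fin n) ℂ) i j = 0 := by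
      unfold extM
      split <;> rfl
    rw [hz, mul_zero, zero_add] at he
    rw [hskew] at he
    linear_combination he
  have hD0 : D = 0 := by
    ext i j
    rw [← extM_apply D i j, hWzero]
    rfl
  have hx2' : x.2 = 0 := by
    rw [hC2, hD0]
    simp
  exact Prod.ext hx1 hx2'

/-- Existence of the reduction to the pattern space. -/
theorem exists_red (n : ℕ) (lam : ℂ)
    (v : Matrix (Fin n) (Fin n) ℂ × Matrix (Fin n) (Fin n) ℂ) (hv : v ∈ SymPair (Fin n)) :
    ∃ C : Matrix (Fin n) (Fin n) ℂ,
      v + congMap (delM n) (lamM n lam) C ∈ Pattern (∅ : Set (Fin n × Fin n))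
        {pq : Fin n × Fin n | ((pq.1 : ℕ) ≤ (pq.2 : ℕ) + 1 ∧ (pq.2 : ℕ) ≤ (pq.1 : ℕ) + 1) ∧
          (pq.1 : ℕ) + 1 + ((pq.2 : ℕ) + 1) ≤ n + 1} := by
  obtain ⟨hX, hY⟩ := hv
  set X := v.1 with hXdef
  set Y := v.2 with hYdef
  set Zmat : Matrix (Fin n) (Fin n) ℂ :=
    Y - lam • X - (1/2 : ℂ) • ((UM n * X)ᵀ + UM n * X) with hZmat
  have hZsym : Zmat.IsSymm := by
    rw [hZmat]
    unfold Matrix.IsSymm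
    rw [transpose_sub, transpose_sub, transpose_smul, transpose_smul, transpose_add,
      transpose_transpose, hX, hY, add_comm (UM n * X)]
  set Z := extM n Zmat with hZdef
  have hZ : ∀ i j, Z j i = Z i j := fun i j => extM_symm Zmat hZsym i j
  set W := solveW n Z with hW
  set Wm := mkM n W with hWm
  have hextWm : extM n Wm = W := extM_mkM W (fun i j h => solveW_supp n Z i j h)
  have hWmT : Wmᵀ = -Wm := by
    ext i j
    show W ((j:ℕ):ℤ) ((i:ℕ):ℤ) = -W ((i:ℕ):ℤ) ((j:ℕ):ℤ)
    rw [hW, solveW_skew n Z hZ]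
  set D : Matrix (Fin n) (Fin n) ℂ := (-(1/2 : ℂ)) • X + Wm with hDdef
  set C := delM n * D with hC
  have hDC : delM n * C = D := by rw [hC, ← mul_assoc, delM_sq, one_mul]
  refine ⟨C, ?_⟩
  rw [congMap_eq, hDC]
  have hDsum : Dᵀ + D = -X := by
    rw [hDdef, transpose_add, transpose_smul, hX, hWmT]
    module
  have hUD : (UM n * D)ᵀ + UM n * D =
      (-(1/2 : ℂ)) • ((UM n * X)ᵀ + UM n * X) + ((UM n * Wm)ᵀ + UM n * Wm) := by
    rw [hDdef, mul_add, mul_smul_comm, transpose_add, transpose_smul]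
    module
  have hfst : X + (Dᵀ + D) = 0 := by rw [hDsum]; abel
  have hsnd : Y + (lam • (Dᵀ + D) + ((UM n * D)ᵀ + UM n * D)) =
      Zmat + ((UM n * Wm)ᵀ + UM n * Wm) := by
    rw [hDsum, hUD, hZmat]
    module
  have hmain : v + ((Dᵀ + D),
      lam • (Dᵀ + D) + ((UM n * D)ᵀ + UM n * D)) =
      (0, Zmat + ((UM n * Wm)ᵀ + UM n * Wm)) := by
    have : v = (X, Y) := rfl
    rw [this, Prod.mk_add_mk, hfst, hsnd]
  rw [hmain]
  -- now prove pattern membership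
  refine ⟨Matrix.isSymm_zero, ?_, fun i j _ => rfl, ?_⟩
  · -- symmetry of the second component
    unfold Matrix.IsSymm
    rw [transpose_add, transpose_add, transpose_transpose, hZsym, add_comm ((UM n * Wm)ᵀ)]
  · -- vanishing outside the pattern
    intro i j hnp
    simp only [Set.mem_setOf_eq] at hnp
    have hi := i.isLt
    have hj := j.isLt
    have key := solveW_rel n Z hZ ((i:ℕ):ℤ) ((j:ℕ):ℤ)
      (by omega) (by omega) (by omega) (by omega) (by omega)
    show (Zmat + ((UM n * Wm)ᵀ + UM n * Wm)) i j = 0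
    have he : (Zmat + ((UM n * Wm)ᵀ + UM n * Wm)) i j
        = extM n (Zmat + ((UM n * Wm)ᵀ + UM n * Wm)) ((i:ℕ):ℤ) ((j:ℕ):ℤ) :=
      (extM_apply _ i j).symm
    rw [he, extM_add, extM_add, extM_transpose,
      extM_UM_mul _ _ _ (by omega), extM_UM_mul _ _ _ (by omega), hextWm]
    rw [hW, solveW_skew n Z hZ]
    rw [← hZdef]
    linear_combination key
  done

end Main

/-- **Diagonal block `H_n(λ)`.** `Sym × Sym = T(Δ_n, Λ_n(λ)) ⊕ P`, where `P` consists of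
pairs `(0, Y)` with `Y` symmetric and `Y i j = 0` whenever `|i − j| > 1` or
`i + j > n + 1`; in particular every pair of symmetric matrices can be reduced to
exactly one element of `P` by adding `(CᵀΔ_n + Δ_n C, CᵀΛ_n(λ) + Λ_n(λ) C)`. -/
theorem H_diagonal_block (n : ℕ) (hn : 0 < n) (lam : ℂ) :
    Disjoint (TSpace (delM n) (lamM n lam))
      (Pattern (∅ : Set (Fin n × Fin n))
        {pq : Fin n × Fin n | ((pq.1 : ℕ) ≤ (pq.2 : ℕ) + 1 ∧ (pq.2 : ℕ) ≤ (pq.1 : ℕ) + 1) ∧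
          (pq.1 : ℕ) + 1 + ((pq.2 : ℕ) + 1) ≤ n + 1}) ∧
    TSpace (delM n) (lamM n lam) ⊔
      Pattern (∅ : Set (Fin n × Fin n))
        {pq : Fin n × Fin n | ((pq.1 : ℕ) ≤ (pq.2 : ℕ) + 1 ∧ (pq.2 : ℕ) ≤ (pq.1 : ℕ) + 1) ∧
          (pq.1 : ℕ) + 1 + ((pq.2 : ℕ) + 1) ≤ n + 1} = SymPair (Fin n) ∧
    ∀ v ∈ SymPair (Fin n), ∃! p,
      p ∈ Pattern (∅ : Set (Fin n × Fin n))
        {pq : Fin n × Fin n | ((pq.1 : ℕ) ≤ (pq.2 : ℕ) + 1 ∧ (pq.2 : ℕ) ≤ (pq.1 : ℕ) + 1) ∧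
          (pq.1 : ℕ) + 1 + ((pq.2 : ℕ) + 1) ≤ n + 1} ∧
      ∃ C : Matrix (Fin n) (Fin n) ℂ,
        p = v + (Cᵀ * delM n + delM n * C, Cᵀ * lamM n lam + lamM n lam * C) := by
  refine ⟨?_, ?_, ?_⟩
  · exact Submodule.disjoint_def.mpr (fun x hxT hxP => TP_zero n lam x hxT hxP)
  · apply le_antisymm
    · apply sup_le
      · rintro x ⟨C, rfl⟩
        rw [congMap_eq]
        have hsym : ∀ M : Matrix (Fin n) (Fin n) ℂ, (Mᵀ + M).IsSymm := by
          intro M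
          unfold Matrix.IsSymm
          rw [transpose_add, transpose_transpose, add_comm]
        exact ⟨hsym _, Matrix.IsSymm.add ((hsym _).smul lam) (hsym _)⟩
      · exact Pattern_le _ _
    · intro v hv
      obtain ⟨C, hC⟩ := exists_red n lam v hv
      have hv' : v = (v + congMap (delM n) (lamM n lam) C)
          + congMap (delM n) (lamM n lam) (-C) := by
        rw [map_neg]
        abel
      rw [hv']
      exact Submodule.add_mem _ (Submodule.mem_sup_right hC)
        (Submodule.mem_sup_left ⟨-C, rfl⟩)
  · intro v hv
    obtain ⟨C, hC⟩ := exists_red n lam v hv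
    refine ⟨v + congMap (delM n) (lamM n lam) C, ⟨hC, C, rfl⟩, ?_⟩
    rintro q ⟨hq, C', hq'⟩
    have hq'' : q = v + congMap (delM n) (lamM n lam) C' := hq'
    have heq : q - (v + congMap (delM n) (lamM n lam) C)
        = congMap (delM n) (lamM n lam) (C' - C) := by
      rw [map_sub, hq'']
      abel
    have hz := TP_zero n lam (q - (v + congMap (delM n) (lamM n lam) C))
      ⟨C' - C, heq.symm⟩ (Submodule.sub_mem _ hq hC)
    exact sub_eq_zero.mp hz

end
end

section
/- For every positive integer n, the space Sym_n(ℂ)×Sym_n(ℂ) is the direct sum of the subspace T(Λ_n(0), Δ_n) and the subspace P := { (X, 0) : X ∈ Sym_n(ℂ), X_{ij} = 0 whenever |i−j| > 1 or i+j > n+1 }. -/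
open Matrix

noncomputable section KAux

namespace KAux

open Matrix Module

variable {n : ℕ}

/-- ℕ-indexed entry of a matrix, `0` out of range. -/
def ent (C : Matrix (Fin n) (Fin n) ℂ) (i j : ℕ) : ℂ :=
  if h : i < n ∧ j < n then C ⟨i, h.1⟩ ⟨j, h.2⟩ else 0

lemma ent_eq (C : Matrix (Fin n) (Fin n) ℂ) (i j : ℕ) :
    ent C i j = if h : i < n ∧ j < n then C ⟨i, h.1⟩ ⟨j, h.2⟩ else 0 := rfl

lemma ent_zero (C : Matrix (Fin n) (Fin n) ℂ) {i : ℕ} (j : ℕ) (h : n ≤ i) :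
    ent C i j = 0 := by
  rw [ent_eq, dif_neg]; omega

lemma lamM_zero_apply (i j : Fin n) :
    lamM n 0 i j = if (i : ℕ) + (j : ℕ) = n then 1 else 0 := by
  show (if (i : ℕ) + 1 + ((j : ℕ) + 1) = n + 1 then (0:ℂ)
    else if (i : ℕ) + 1 + ((j : ℕ) + 1) = n + 2 then 1 else 0) = _
  split_ifs <;> first | rfl | omega

lemma delM_apply' (i j : Fin n) :
    delM n i j = if (i : ℕ) + (j : ℕ) + 1 = n then 1 else 0 := by
  show (if (i : ℕ) + 1 + ((j : ℕ) + 1) = n + 1 then (1:ℂ) else 0) = _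
  split_ifs <;> first | rfl | omega

lemma sum_pick (f : Fin n → ℂ) (m : ℕ) :
    (∑ k : Fin n, if (k : ℕ) = m then f k else 0)
      = if h : m < n then f ⟨m, h⟩ else 0 := by
  split_ifs with h
  · rw [Finset.sum_eq_single (⟨m, h⟩ : Fin n)]
    · simp
    · intro k _ hk
      rw [if_neg]; exact fun hc => hk (Fin.ext hc)
    · intro hk; exact absurd (Finset.mem_univ _) hk
  · apply Finset.sum_eq_zero; intro k _
    have := k.isLt
    rw [if_neg]; omega

lemma entryA (C : Matrix (Fin n) (Fin n) ℂ) (i j : Fin n) :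
    (Cᵀ * lamM n 0 + lamM n 0 * C) i j
      = ent C (n - (j : ℕ)) (i : ℕ) + ent C (n - (i : ℕ)) (j : ℕ) := by
  have key : ∀ (a b : Fin n),
      (∑ k : Fin n, C k a * lamM n 0 k b) = ent C (n - (b : ℕ)) (a : ℕ) := by
    intro a b
    have h1 : ∀ k : Fin n, C k a * lamM n 0 k b
        = if (k : ℕ) = n - (b : ℕ) then C k a else 0 := by
      intro k
      rw [lamM_zero_apply, mul_ite, mul_one, mul_zero]
      have := k.isLt; have := b.isLt
      by_cases h : (k : ℕ) + (b : ℕ) = n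
      · rw [if_pos h, if_pos (by omega)]
      · rw [if_neg h, if_neg (by omega)]
    rw [Finset.sum_congr rfl fun k _ => h1 k, sum_pick]
    by_cases h : n - (b : ℕ) < n
    · rw [dif_pos h, ent_eq, dif_pos ⟨h, a.isLt⟩]
    · rw [dif_neg h, ent_eq, dif_neg (by tauto)]
  have hC : (Cᵀ * lamM n 0) i j = ent C (n - (j : ℕ)) (i : ℕ) := by
    rw [Matrix.mul_apply]; exact key i j
  have hC2 : (lamM n 0 * C) i j = ent C (n - (i : ℕ)) (j : ℕ) := by
    rw [Matrix.mul_apply]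
    rw [show (∑ k : Fin n, lamM n 0 i k * C k j) = ∑ k : Fin n, C k j * lamM n 0 k i from
      Finset.sum_congr rfl fun k _ => by
        rw [mul_comm, lamM_zero_apply i k, lamM_zero_apply k i, Nat.add_comm (k : ℕ) (i : ℕ)]]
    exact key j i
  rw [Matrix.add_apply, hC, hC2]

lemma entryB (C : Matrix (Fin n) (Fin n) ℂ) (i j : Fin n) :
    (Cᵀ * delM n + delM n * C) i j
      = ent C (n - 1 - (j : ℕ)) (i : ℕ) + ent C (n - 1 - (i : ℕ)) (j : ℕ) := by
  have key : ∀ (a b : Fin n),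
      (∑ k : Fin n, C k a * delM n k b) = ent C (n - 1 - (b : ℕ)) (a : ℕ) := by
    intro a b
    have h1 : ∀ k : Fin n, C k a * delM n k b
        = if (k : ℕ) = n - 1 - (b : ℕ) then C k a else 0 := by
      intro k
      rw [delM_apply', mul_ite, mul_one, mul_zero]
      have := k.isLt; have := b.isLt
      by_cases h : (k : ℕ) + (b : ℕ) + 1 = n
      · rw [if_pos h, if_pos (by omega)]
      · rw [if_neg h, if_neg (by omega)]
    rw [Finset.sum_congr rfl fun k _ => h1 k, sum_pick]
    have hb := b.isLt
    rw [dif_pos (by omega : n - 1 - (b : ℕ) < n), ent_eq, dif_pos ⟨by omega, a.isLt⟩]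
  have hC : (Cᵀ * delM n) i j = ent C (n - 1 - (j : ℕ)) (i : ℕ) := by
    rw [Matrix.mul_apply]; exact key i j
  have hC2 : (delM n * C) i j = ent C (n - 1 - (i : ℕ)) (j : ℕ) := by
    rw [Matrix.mul_apply]
    rw [show (∑ k : Fin n, delM n i k * C k j) = ∑ k : Fin n, C k j * delM n k i from
      Finset.sum_congr rfl fun k _ => by
        rw [mul_comm, delM_apply' i k, delM_apply' k i, Nat.add_comm (k : ℕ) (i : ℕ)]]
    exact key j i
  rw [Matrix.add_apply, hC, hC2]

/-- The auxiliary "reversed" matrix entries. -/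
def dC (C : Matrix (Fin n) (Fin n) ℂ) (a b : ℕ) : ℂ :=
  if b < n then ent C a (n - 1 - b) else 0

lemma dC_eq (C : Matrix (Fin n) (Fin n) ℂ) (a b : ℕ) :
    dC C a b = if b < n then ent C a (n - 1 - b) else 0 := rfl

lemma dC_zero (C : Matrix (Fin n) (Fin n) ℂ) {a : ℕ} (b : ℕ) (h : n ≤ a) :
    dC C a b = 0 := by
  rw [dC_eq]; split_ifs with hb
  · exact ent_zero C _ h
  · rfl

lemma dC_skew (C : Matrix (Fin n) (Fin n) ℂ) (h : Cᵀ * delM n + delM n * C = 0) :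
    ∀ a b, dC C a b + dC C b a = 0 := by
  intro a b
  by_cases ha : a < n
  · by_cases hb : b < n
    · have h0 := entryB C (n := n) ⟨n - 1 - b, by omega⟩ ⟨n - 1 - a, by omega⟩
      rw [h, Matrix.zero_apply] at h0
      have h1 : (0:ℂ) = ent C (n - 1 - (n - 1 - a)) (n - 1 - b)
          + ent C (n - 1 - (n - 1 - b)) (n - 1 - a) := h0
      rw [show n - 1 - (n - 1 - a) = a by omega, show n - 1 - (n - 1 - b) = b by omega] at h1
      rw [dC_eq, if_pos hb, dC_eq, if_pos ha]
      exact h1.symm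
    · rw [dC_eq, if_neg hb, zero_add, dC_eq, if_pos ha]
      exact ent_zero C _ (Nat.le_of_not_lt hb)
  · rw [dC_zero C b (Nat.le_of_not_lt ha), zero_add, dC_eq, if_neg ha]

lemma entryA_dC (C : Matrix (Fin n) (Fin n) ℂ) {u v : ℕ} (hu : u < n) (hv : v < n) :
    (Cᵀ * lamM n 0 + lamM n 0 * C) ⟨n - 1 - u, by omega⟩ ⟨n - 1 - v, by omega⟩
      = dC C (v + 1) u + dC C (u + 1) v := by
  have h0 := entryA C (n := n) ⟨n - 1 - u, by omega⟩ ⟨n - 1 - v, by omega⟩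
  have h1 : (Cᵀ * lamM n 0 + lamM n 0 * C) ⟨n - 1 - u, by omega⟩ ⟨n - 1 - v, by omega⟩
      = ent C (n - (n - 1 - v)) (n - 1 - u) + ent C (n - (n - 1 - u)) (n - 1 - v) := h0
  rw [show n - (n - 1 - v) = v + 1 by omega, show n - (n - 1 - u) = u + 1 by omega] at h1
  rw [h1, dC_eq, if_pos hu, dC_eq, if_pos hv]

lemma entryA_dC' (C : Matrix (Fin n) (Fin n) ℂ) (i j : Fin n) :
    (Cᵀ * lamM n 0 + lamM n 0 * C) i j
      = dC C (n - 1 - (j : ℕ) + 1) (n - 1 - (i : ℕ))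
        + dC C (n - 1 - (i : ℕ) + 1) (n - 1 - (j : ℕ)) := by
  have hi := i.isLt; have hj := j.isLt
  rw [entryA, dC_eq, if_pos (by omega : n - 1 - (i : ℕ) < n), dC_eq,
    if_pos (by omega : n - 1 - (j : ℕ) < n),
    show n - 1 - (n - 1 - (i : ℕ)) = (i : ℕ) by omega,
    show n - 1 - (n - 1 - (j : ℕ)) = (j : ℕ) by omega,
    show n - 1 - (j : ℕ) + 1 = n - (j : ℕ) by omega,
    show n - 1 - (i : ℕ) + 1 = n - (i : ℕ) by omega]

/-- Combinatorial core for injectivity: skew + full anti-diagonal relations ⇒ zero. -/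
lemma comb_zero (d : ℕ → ℕ → ℂ)
    (hd : ∀ a b, n ≤ a → d a b = 0)
    (hskew : ∀ a b, d a b + d b a = 0)
    (hE : ∀ u v, u < n → v < n → d (v + 1) u + d (u + 1) v = 0) :
    ∀ a b, d a b = 0 := by
  have hdiag : ∀ c, d c c = 0 := fun c => add_self_eq_zero.mp (hskew c c)
  have key : ∀ k a b, a + k = b → b < n → d a b = 0 := by
    intro k
    induction k using Nat.strong_induction_on with
    | _ k ih =>
      rcases k with _ | _ | m
      · intro a b hab hb
        obtain rfl : a = b := by omega
        exact hdiag a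
      · intro a b hab hb
        obtain rfl : b = a + 1 := by omega
        have h1 := hE a a (by omega) (by omega)
        have h2 : d (a + 1) a = 0 := add_self_eq_zero.mp h1
        have h3 := hskew a (a + 1)
        rw [h2, add_zero] at h3
        exact h3
      · intro a b hab hb
        have hstep := hE (b - 1) a (by omega) (by omega)
        rw [show b - 1 + 1 = b by omega] at hstep
        have hba : d b a = -(d a b) := eq_neg_of_add_eq_zero_left (hskew b a)
        rw [hba, add_neg_eq_zero] at hstep
        rw [← hstep]
        exact ih m (by omega) (a + 1) (b - 1) (by omega) (by omega)
  intro a b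
  by_cases ha : a < n
  · by_cases hb : b < n
    · rcases le_or_gt a b with h | h
      · exact key (b - a) a b (by omega) hb
      · have h2 := hskew a b
        rw [key (a - b) b a (by omega) ha, add_zero] at h2
        exact h2
    · have h2 := hskew a b
      rw [hd b a (by omega), add_zero] at h2
      exact h2
  · exact hd a b (by omega)

/-- Combinatorial core for disjointness. -/
lemma comb_pattern (hn : 0 < n) (d : ℕ → ℕ → ℂ)
    (hd : ∀ a b, n ≤ a → d a b = 0)
    (hskew : ∀ a b, d a b + d b a = 0)
    (hE : ∀ u v, u < n → v < n → (u + 2 ≤ v ∨ v + 2 ≤ u ∨ u + v + 2 ≤ n) →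
      d (v + 1) u + d (u + 1) v = 0) :
    ∀ u v, u < n → v < n → d (v + 1) u + d (u + 1) v = 0 := by
  have hdiag : ∀ c, d c c = 0 := fun c => add_self_eq_zero.mp (hskew c c)
  have F2 : ∀ a, 1 ≤ a → a ≤ n - 2 → d a (n - 1) = 0 := by
    intro a h1 h2
    have h := hE (n - 1) (a - 1) (by omega) (by omega) (by omega)
    rw [show a - 1 + 1 = a by omega, show n - 1 + 1 = n by omega] at h
    rw [hd n (a - 1) (le_refl n), add_zero] at h
    exact h
  have W : ∀ k a b, n - 1 - a = k → a < n → b + 1 ≤ a → n ≤ a + b → d a b = 0 := by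
    intro k
    induction k with
    | zero =>
      intro a b hk ha hba hab
      obtain rfl : a = n - 1 := by omega
      have h1 := hskew (n - 1) b
      rw [F2 b (by omega) (by omega), add_zero] at h1
      exact h1
    | succ m ih =>
      intro a b hk ha hba hab
      have hstep := hE (b - 1) a (by omega) (by omega) (by omega)
      rw [show b - 1 + 1 = b by omega] at hstep
      have hba' : d b a = -(d a b) := eq_neg_of_add_eq_zero_left (hskew b a)
      rw [hba', add_neg_eq_zero] at hstep
      rw [← hstep]
      exact ih (a + 1) (b - 1) (by omega) (by omega) (by omega) (by omega)
  intro u v hu hv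
  by_cases hc : u + 2 ≤ v ∨ v + 2 ≤ u ∨ u + v + 2 ≤ n
  · exact hE u v hu hv hc
  · push_neg at hc
    obtain ⟨h1, h2, h3⟩ := hc
    rcases (by omega : u = v ∨ v = u + 1 ∨ u = v + 1) with rfl | rfl | rfl
    · have hz : d (u + 1) u = 0 := by
        by_cases hun : u + 1 < n
        · exact W (n - 1 - (u + 1)) (u + 1) u rfl hun (by omega) (by omega)
        · exact hd (u + 1) u (by omega)
      rw [hz, add_zero]
    · rw [hdiag (u + 1), add_zero]
      by_cases hun : u + 1 + 1 < n
      · exact W (n - 1 - (u + 1 + 1)) (u + 1 + 1) u rfl hun (by omega) (by omega)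
      · exact hd (u + 1 + 1) u (by omega)
    · rw [hdiag (v + 1), zero_add]
      by_cases hun : v + 1 + 1 < n
      · exact W (n - 1 - (v + 1 + 1)) (v + 1 + 1) v rfl hun (by omega) (by omega)
      · exact hd (v + 1 + 1) v (by omega)

lemma congMap_ker (C : Matrix (Fin n) (Fin n) ℂ)
    (hC : congMap (lamM n 0) (delM n) C = 0) : C = 0 := by
  have h1 : Cᵀ * lamM n 0 + lamM n 0 * C = 0 := congrArg Prod.fst hC
  have h2 : Cᵀ * delM n + delM n * C = 0 := congrArg Prod.snd hC
  have hE : ∀ u v, u < n → v < n → dC C (v + 1) u + dC C (u + 1) v = 0 := by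
    intro u v hu hv
    rw [← entryA_dC C hu hv, h1, Matrix.zero_apply]
  have hz := comb_zero (dC C) (fun a b h => dC_zero C b h) (dC_skew C h2) hE
  ext i j
  have hiz := i.isLt; have hjz := j.isLt
  have h3 := hz (i : ℕ) (n - 1 - (j : ℕ))
  rw [dC_eq, if_pos (by omega), show n - 1 - (n - 1 - (j : ℕ)) = (j : ℕ) by omega,
    ent_eq, dif_pos ⟨hiz, hjz⟩] at h3
  simpa using h3

lemma congMap_injective : Function.Injective (congMap (lamM n 0) (delM n)) := by
  rw [← LinearMap.ker_eq_bot, LinearMap.ker_eq_bot']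
  exact congMap_ker

/-- The pattern set appearing in the theorem. -/
def patSet (n : ℕ) : Set (Fin n × Fin n) :=
  {pq : Fin n × Fin n | ((pq.1 : ℕ) ≤ (pq.2 : ℕ) + 1 ∧ (pq.2 : ℕ) ≤ (pq.1 : ℕ) + 1) ∧
    (pq.1 : ℕ) + 1 + ((pq.2 : ℕ) + 1) ≤ n + 1}

lemma disjoint_main (hn : 0 < n) :
    Disjoint (TSpace (lamM n 0) (delM n)) (Pattern (patSet n) (∅ : Set (Fin n × Fin n))) := by
  rw [Submodule.disjoint_def]
  intro x hxT hxP
  have hxP' : x.1.IsSymm ∧ x.2.IsSymm ∧ (∀ i j, (i, j) ∉ patSet n → x.1 i j = 0) ∧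
      (∀ i j, (i, j) ∉ (∅ : Set (Fin n × Fin n)) → x.2 i j = 0) := hxP
  obtain ⟨hs1, hs2, hsupp1, hsupp2⟩ := hxP'
  obtain ⟨C, hC⟩ := hxT
  have hx2 : x.2 = 0 := by
    ext i j; exact hsupp2 i j (Set.notMem_empty _)
  have h2 : Cᵀ * delM n + delM n * C = 0 := by
    have h := congrArg Prod.snd hC
    rw [hx2] at h; exact h
  have hE : ∀ u v, u < n → v < n → (u + 2 ≤ v ∨ v + 2 ≤ u ∨ u + v + 2 ≤ n) →
      dC C (v + 1) u + dC C (u + 1) v = 0 := by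
    intro u v hu hv hcond
    rw [← entryA_dC C hu hv]
    have hx1 : (Cᵀ * lamM n 0 + lamM n 0 * C) = x.1 := congrArg Prod.fst hC
    rw [hx1]
    apply hsupp1
    intro hmem
    have hmem' : ((n - 1 - u : ℕ) ≤ (n - 1 - v) + 1 ∧ (n - 1 - v : ℕ) ≤ (n - 1 - u) + 1) ∧
        (n - 1 - u) + 1 + ((n - 1 - v) + 1) ≤ n + 1 := hmem
    omega
  have main := comb_pattern hn (dC C) (fun a b h => dC_zero C b h) (dC_skew C h2) hE
  have hx1 : x.1 = 0 := by
    ext i j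
    have hiz := i.isLt; have hjz := j.isLt
    have h0 : (Cᵀ * lamM n 0 + lamM n 0 * C) i j = x.1 i j :=
      congrFun (congrFun (congrArg Prod.fst hC) i) j
    rw [← h0, entryA_dC' C i j, Matrix.zero_apply]
    exact main _ _ (by omega) (by omega)
  have hxeq : x = (x.1, x.2) := rfl
  rw [hxeq, hx1, hx2]
  rfl

lemma TSpace_le_SymPair : TSpace (lamM n 0) (delM n) ≤ SymPair (Fin n) := by
  rintro x ⟨C, rfl⟩
  constructor
  · show (Cᵀ * lamM n 0 + lamM n 0 * C)ᵀ = Cᵀ * lamM n 0 + lamM n 0 * C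
    rw [Matrix.transpose_add, Matrix.transpose_mul, Matrix.transpose_mul,
      Matrix.transpose_transpose, (lamM_isSymm n 0).eq]
    exact add_comm _ _
  · show (Cᵀ * delM n + delM n * C)ᵀ = Cᵀ * delM n + delM n * C
    rw [Matrix.transpose_add, Matrix.transpose_mul, Matrix.transpose_mul,
      Matrix.transpose_transpose, (delM_isSymm n).eq]
    exact add_comm _ _

/-! ### Dimension counts -/

/-- Parametrization of the pattern space by `Fin n`. -/
def patFun (n : ℕ) (c : Fin n → ℂ) : Matrix (Fin n) (Fin n) ℂ :=
  Matrix.of fun i j =>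
    if (i : ℕ) + (j : ℕ) + 1 ≤ n ∧ (i : ℕ) ≤ (j : ℕ) + 1 ∧ (j : ℕ) ≤ (i : ℕ) + 1 then
      c ⟨min ((i : ℕ) + (j : ℕ)) (n - 1), by have := i.isLt; omega⟩ else 0

lemma patFun_apply (c : Fin n → ℂ) (i j : Fin n) :
    patFun n c i j =
      if (i : ℕ) + (j : ℕ) + 1 ≤ n ∧ (i : ℕ) ≤ (j : ℕ) + 1 ∧ (j : ℕ) ≤ (i : ℕ) + 1 then
        c ⟨min ((i : ℕ) + (j : ℕ)) (n - 1), by have := i.isLt; omega⟩ else 0 := rfl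

lemma patFun_add (c d : Fin n → ℂ) : patFun n (c + d) = patFun n c + patFun n d := by
  ext i j
  rw [Matrix.add_apply]
  by_cases h : (i : ℕ) + (j : ℕ) + 1 ≤ n ∧ (i : ℕ) ≤ (j : ℕ) + 1 ∧ (j : ℕ) ≤ (i : ℕ) + 1
  · rw [patFun_apply, patFun_apply, patFun_apply, if_pos h, if_pos h, if_pos h]
    rfl
  · rw [patFun_apply, patFun_apply, patFun_apply, if_neg h, if_neg h, if_neg h, add_zero]

lemma patFun_smul (a : ℂ) (c : Fin n → ℂ) : patFun n (a • c) = a • patFun n c := by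
  ext i j
  rw [Matrix.smul_apply]
  by_cases h : (i : ℕ) + (j : ℕ) + 1 ≤ n ∧ (i : ℕ) ≤ (j : ℕ) + 1 ∧ (j : ℕ) ≤ (i : ℕ) + 1
  · rw [patFun_apply, patFun_apply, if_pos h, if_pos h]
    rfl
  · rw [patFun_apply, patFun_apply, if_neg h, if_neg h, smul_zero]

lemma patFun_diag (c : Fin n → ℂ) (s : Fin n) :
    patFun n c ⟨(s : ℕ) / 2, by have := s.isLt; omega⟩
      ⟨(s : ℕ) - (s : ℕ) / 2, by have := s.isLt; omega⟩ = c s := by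
  have hs := s.isLt
  have hcond : ((s : ℕ) / 2) + ((s : ℕ) - (s : ℕ) / 2) + 1 ≤ n ∧
      ((s : ℕ) / 2) ≤ ((s : ℕ) - (s : ℕ) / 2) + 1 ∧
      ((s : ℕ) - (s : ℕ) / 2) ≤ ((s : ℕ) / 2) + 1 := by omega
  rw [patFun_apply, if_pos hcond]
  exact congrArg c (Fin.ext
    (show min ((s : ℕ) / 2 + ((s : ℕ) - (s : ℕ) / 2)) (n - 1) = (s : ℕ) by omega))

def patMap (n : ℕ) : (Fin n → ℂ) →ₗ[ℂ]
    (Matrix (Fin n) (Fin n) ℂ × Matrix (Fin n) (Fin n) ℂ) where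
  toFun c := (patFun n c, 0)
  map_add' c d := Prod.ext_iff.mpr ⟨patFun_add c d, (add_zero (0 : Matrix (Fin n) (Fin n) ℂ)).symm⟩
  map_smul' a c := Prod.ext_iff.mpr ⟨patFun_smul a c, (smul_zero a).symm⟩

lemma patMap_injective (n : ℕ) : Function.Injective (patMap n) := by
  rw [← LinearMap.ker_eq_bot, LinearMap.ker_eq_bot']
  intro c hc
  have h1 : patFun n c = 0 := congrArg Prod.fst hc
  funext s
  show c s = 0
  rw [← patFun_diag c s, h1]
  rfl

lemma half_entry (X : Matrix (Fin n) (Fin n) ℂ) (hX : X.IsSymm) (i j k l : Fin n)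
    (hk : (k : ℕ) = ((i : ℕ) + (j : ℕ)) / 2)
    (hl : (l : ℕ) = (i : ℕ) + (j : ℕ) - ((i : ℕ) + (j : ℕ)) / 2)
    (hij : (i : ℕ) ≤ (j : ℕ) + 1) (hji : (j : ℕ) ≤ (i : ℕ) + 1) : X k l = X i j := by
  rcases le_or_gt (i : ℕ) (j : ℕ) with h | h
  · have e1 : k = i := Fin.ext (by omega)
    have e2 : l = j := Fin.ext (by omega)
    rw [e1, e2]
  · have e1 : k = j := Fin.ext (by omega)
    have e2 : l = i := Fin.ext (by omega)
    rw [e1, e2]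
    exact hX.apply i j

lemma patMap_range (n : ℕ) :
    LinearMap.range (patMap n) = Pattern (patSet n) (∅ : Set (Fin n × Fin n)) := by
  apply le_antisymm
  · rintro x ⟨c, rfl⟩
    refine ⟨?_, Matrix.isSymm_zero, ?_, fun i j _ => rfl⟩
    · show (patFun n c)ᵀ = patFun n c
      ext i j
      rw [Matrix.transpose_apply]
      by_cases h : (i : ℕ) + (j : ℕ) + 1 ≤ n ∧ (i : ℕ) ≤ (j : ℕ) + 1 ∧ (j : ℕ) ≤ (i : ℕ) + 1
      · rw [patFun_apply, patFun_apply, if_pos h, if_pos (by omega : (j : ℕ) + (i : ℕ) + 1 ≤ n ∧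
          (j : ℕ) ≤ (i : ℕ) + 1 ∧ (i : ℕ) ≤ (j : ℕ) + 1)]
        exact congrArg c (Fin.ext
          (show min ((j : ℕ) + (i : ℕ)) (n - 1) = min ((i : ℕ) + (j : ℕ)) (n - 1) by omega))
      · rw [patFun_apply, patFun_apply, if_neg h, if_neg (by omega)]
    · intro i j hij
      show patFun n c i j = 0
      rw [patFun_apply, if_neg]
      intro h
      exact hij (show ((i : ℕ) ≤ (j : ℕ) + 1 ∧ (j : ℕ) ≤ (i : ℕ) + 1) ∧
        (i : ℕ) + 1 + ((j : ℕ) + 1) ≤ n + 1 from ⟨⟨h.2.1, h.2.2⟩, by omega⟩)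
  · intro p hp
    have hp' : p.1.IsSymm ∧ p.2.IsSymm ∧ (∀ i j, (i, j) ∉ patSet n → p.1 i j = 0) ∧
        (∀ i j, (i, j) ∉ (∅ : Set (Fin n × Fin n)) → p.2 i j = 0) := hp
    obtain ⟨h1, h2, h3, h4⟩ := hp'
    refine ⟨fun s => p.1 ⟨(s : ℕ) / 2, by have := s.isLt; omega⟩
      ⟨(s : ℕ) - (s : ℕ) / 2, by have := s.isLt; omega⟩, ?_⟩
    refine Prod.ext_iff.mpr ⟨?_, ?_⟩
    · show patFun n (fun s => p.1 ⟨(s : ℕ) / 2, by have := s.isLt; omega⟩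
        ⟨(s : ℕ) - (s : ℕ) / 2, by have := s.isLt; omega⟩) = p.1
      ext i j
      have hiz := i.isLt; have hjz := j.isLt
      rw [patFun_apply]
      by_cases h : (i : ℕ) + (j : ℕ) + 1 ≤ n ∧ (i : ℕ) ≤ (j : ℕ) + 1 ∧ (j : ℕ) ≤ (i : ℕ) + 1
      · rw [if_pos h]
        exact half_entry p.1 h1 i j _ _
          (show min ((i : ℕ) + (j : ℕ)) (n - 1) / 2 = ((i : ℕ) + (j : ℕ)) / 2 by omega)
          (show min ((i : ℕ) + (j : ℕ)) (n - 1) - min ((i : ℕ) + (j : ℕ)) (n - 1) / 2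
            = (i : ℕ) + (j : ℕ) - ((i : ℕ) + (j : ℕ)) / 2 by omega)
          (by omega) (by omega)
      · rw [if_neg h]
        symm
        apply h3
        intro hmem
        have hmem' : ((i : ℕ) ≤ (j : ℕ) + 1 ∧ (j : ℕ) ≤ (i : ℕ) + 1) ∧
            (i : ℕ) + 1 + ((j : ℕ) + 1) ≤ n + 1 := hmem
        omega
    · show (0 : Matrix (Fin n) (Fin n) ℂ) = p.2
      ext i j
      exact (h4 i j (Set.notMem_empty _)).symm

lemma pattern_finrank (n : ℕ) :
    finrank ℂ (Pattern (patSet n) (∅ : Set (Fin n × Fin n))) = n := by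
  rw [← patMap_range n, LinearMap.finrank_range_of_inj (patMap_injective n),
    Module.finrank_fintype_fun_eq_card, Fintype.card_fin]

/-- Parametrization of symmetric matrices. -/
def symOf (f : {p : Fin n × Fin n // p.1 ≤ p.2} → ℂ) : Matrix (Fin n) (Fin n) ℂ :=
  Matrix.of fun i j => if h : i ≤ j then f ⟨(i, j), h⟩ else f ⟨(j, i), le_of_not_ge h⟩

lemma symOf_apply (f : {p : Fin n × Fin n // p.1 ≤ p.2} → ℂ) (i j : Fin n) :
    symOf f i j = if h : i ≤ j then f ⟨(i, j), h⟩ else f ⟨(j, i), le_of_not_ge h⟩ := rfl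

lemma symOf_isSymm (f : {p : Fin n × Fin n // p.1 ≤ p.2} → ℂ) : (symOf f).IsSymm := by
  show (symOf f)ᵀ = symOf f
  ext i j
  rw [Matrix.transpose_apply, symOf_apply, symOf_apply]
  split_ifs with ha hb hb
  · obtain rfl : j = i := le_antisymm ha hb
    rfl
  · rfl
  · rfl
  · exact absurd (le_total j i) (by tauto)

lemma symOf_eq {X : Matrix (Fin n) (Fin n) ℂ} (hX : X.IsSymm) :
    symOf (fun q => X q.1.1 q.1.2) = X := by
  ext i j
  rw [symOf_apply]
  split_ifs with h
  · rfl
  · exact hX.apply i j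

def symMap (n : ℕ) : (({p : Fin n × Fin n // p.1 ≤ p.2} → ℂ) ×
    ({p : Fin n × Fin n // p.1 ≤ p.2} → ℂ)) →ₗ[ℂ]
    (Matrix (Fin n) (Fin n) ℂ × Matrix (Fin n) (Fin n) ℂ) where
  toFun c := (symOf c.1, symOf c.2)
  map_add' c d := by
    have key : ∀ f g : {p : Fin n × Fin n // p.1 ≤ p.2} → ℂ,
        symOf (f + g) = symOf f + symOf g := by
      intro f g
      ext i j
      rw [Matrix.add_apply, symOf_apply, symOf_apply, symOf_apply]
      split_ifs <;> rfl
    exact Prod.ext_iff.mpr ⟨key c.1 d.1, key c.2 d.2⟩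
  map_smul' a c := by
    have key : ∀ f : {p : Fin n × Fin n // p.1 ≤ p.2} → ℂ,
        symOf (a • f) = a • symOf f := by
      intro f
      ext i j
      rw [Matrix.smul_apply, symOf_apply, symOf_apply]
      split_ifs <;> rfl
    exact Prod.ext_iff.mpr ⟨key c.1, key c.2⟩

lemma symMap_injective (n : ℕ) : Function.Injective (symMap n) := by
  rw [← LinearMap.ker_eq_bot, LinearMap.ker_eq_bot']
  intro c hc
  have h1 : symOf c.1 = 0 := congrArg Prod.fst hc
  have h2 : symOf c.2 = 0 := congrArg Prod.snd hc
  have key : ∀ f : {p : Fin n × Fin n // p.1 ≤ p.2} → ℂ, symOf f = 0 → f = 0 := by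
    intro f hf
    funext q
    show f q = 0
    have h3 : symOf f q.1.1 q.1.2 = 0 := by rw [hf]; rfl
    rw [symOf_apply, dif_pos q.2] at h3
    exact h3
  refine Prod.ext_iff.mpr ⟨key c.1 h1, key c.2 h2⟩

lemma symMap_range (n : ℕ) : LinearMap.range (symMap n) = SymPair (Fin n) := by
  apply le_antisymm
  · rintro x ⟨c, rfl⟩
    exact ⟨symOf_isSymm c.1, symOf_isSymm c.2⟩
  · intro p hp
    have hp' : p.1.IsSymm ∧ p.2.IsSymm := hp
    exact ⟨(fun q => p.1 q.1.1 q.1.2, fun q => p.2 q.1.1 q.1.2),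
      Prod.ext_iff.mpr ⟨symOf_eq hp'.1, symOf_eq hp'.2⟩⟩

lemma sym_card (n : ℕ) :
    Fintype.card {p : Fin n × Fin n // p.1 ≤ p.2}
      + Fintype.card {p : Fin n × Fin n // p.1 ≤ p.2} = n * n + n := by
  have h1 : Fintype.card {p : Fin n × Fin n // p.1 ≤ p.2} = Nat.choose (n + 1) 2 := by
    rw [← Fintype.card_congr (Sym2.sortEquiv (α := Fin n)), Sym2.card, Fintype.card_fin]
  obtain ⟨k, hk⟩ := Nat.even_mul_succ_self n
  have h2 : Nat.choose (n + 1) 2 = k := by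
    rw [Nat.choose_two_right, Nat.add_sub_cancel, Nat.mul_comm, hk]
    omega
  have h3 : n * (n + 1) = n * n + n := by ring
  rw [h1, h2]
  omega

lemma sympair_finrank (n : ℕ) : finrank ℂ (SymPair (Fin n)) = n * n + n := by
  rw [← symMap_range n, LinearMap.finrank_range_of_inj (symMap_injective n),
    Module.finrank_prod, Module.finrank_fintype_fun_eq_card]
  exact sym_card n

lemma tspace_finrank (n : ℕ) :
    finrank ℂ (TSpace (lamM n 0) (delM n)) = n * n := by
  rw [TSpace, LinearMap.finrank_range_of_inj congMap_injective, Module.finrank_matrix,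
    Fintype.card_fin, finrank_self, Nat.mul_one]

lemma main_result (n : ℕ) (hn : 0 < n) :
    Disjoint (TSpace (lamM n 0) (delM n))
        (Pattern (patSet n) (∅ : Set (Fin n × Fin n))) ∧
      TSpace (lamM n 0) (delM n) ⊔ Pattern (patSet n) (∅ : Set (Fin n × Fin n))
        = SymPair (Fin n) := by
  refine ⟨disjoint_main hn, ?_⟩
  have hle : TSpace (lamM n 0) (delM n) ⊔ Pattern (patSet n) (∅ : Set (Fin n × Fin n))
      ≤ SymPair (Fin n) := sup_le TSpace_le_SymPair (Pattern_le _ _)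
  have hsum := Submodule.finrank_sup_add_finrank_inf_eq
    (TSpace (lamM n 0) (delM n)) (Pattern (patSet n) (∅ : Set (Fin n × Fin n)))
  rw [(disjoint_main hn).eq_bot, finrank_bot, add_zero, tspace_finrank, pattern_finrank] at hsum
  exact Submodule.eq_of_le_of_finrank_le hle (by rw [sympair_finrank, hsum])

end KAux

end KAux

noncomputable section

/-- **Diagonal block `K_n`.** `Sym × Sym = T(Λ_n(0), Δ_n) ⊕ P`, where `P` consists of
pairs `(X, 0)` with `X` symmetric and `X i j = 0` whenever `|i − j| > 1` or
`i + j > n + 1`. -/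
theorem K_diagonal_block (n : ℕ) (hn : 0 < n) :
    Disjoint (TSpace (lamM n 0) (delM n))
      (Pattern
        {pq : Fin n × Fin n | ((pq.1 : ℕ) ≤ (pq.2 : ℕ) + 1 ∧ (pq.2 : ℕ) ≤ (pq.1 : ℕ) + 1) ∧
          (pq.1 : ℕ) + 1 + ((pq.2 : ℕ) + 1) ≤ n + 1}
        (∅ : Set (Fin n × Fin n))) ∧
    TSpace (lamM n 0) (delM n) ⊔
      Pattern
        {pq : Fin n × Fin n | ((pq.1 : ℕ) ≤ (pq.2 : ℕ) + 1 ∧ (pq.2 : ℕ) ≤ (pq.1 : ℕ) + 1) ∧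
          (pq.1 : ℕ) + 1 + ((pq.2 : ℕ) + 1) ≤ n + 1}
        (∅ : Set (Fin n × Fin n)) = SymPair (Fin n) := by
  exact KAux.main_result n hn

end
end

section
/- For every positive integer n, with N := 2n+1, the space Sym_N(ℂ)×Sym_N(ℂ) is the direct sum of the subspace T(L_n^{(1)}, L_n^{(2)}) and the subspace P := { (X, Y) ∈ Sym_N(ℂ)×Sym_N(ℂ) : X_{ij} = 0 unless i = j = n+1, and Y_{ij} = 0 unless i ≤ n+1, j ≤ n+1 and |i−j| ≤ 1 }. -/
open Matrix

noncomputable section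


private lemma Rzero (n : ℕ) (R : ℕ → ℕ → ℂ)
    (hA1 : ∀ p q, p < n → q < n → R p q + R q p = 0)
    (hAn : ∀ q, q < n → R q n = 0)
    (hB : ∀ i j, i ≤ n → j ≤ n → (i + 2 ≤ j ∨ j + 2 ≤ i) →
      (if 1 ≤ j then R (j - 1) i else 0) + (if 1 ≤ i then R (i - 1) j else 0) = 0) :
    ∀ a b, a < n → b ≤ n → R a b = 0 := by
  have hdiag : ∀ p, p < n → R p p = 0 := fun p hp => add_self_eq_zero.mp (hA1 p p hp hp)
  have hcol0 : ∀ a, a < n → R a 0 = 0 := by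
    intro a ha
    match a with
    | 0 => exact hdiag 0 ha
    | (a' + 1) =>
      have := hB (a' + 2) 0 (by omega) (by omega) (by omega)
      simpa using this
  have hdown : ∀ b a, b < a → a + b < n → R a b = 0 := by
    intro b
    induction b with
    | zero => intro a h1 h2; exact hcol0 a (by omega)
    | succ b' ih =>
      intro a h1 h2
      have h3 := hB (a + 1) (b' + 1) (by omega) (by omega) (by omega)
      simp only [if_pos (by omega : 1 ≤ b' + 1), if_pos (by omega : 1 ≤ a + 1),
        Nat.add_sub_cancel] at h3
      have h4 := hA1 b' (a + 1) (by omega) (by omega)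
      have h5 := ih (a + 1) (by omega) (by omega)
      linear_combination h3 - h4 + h5
  have hup : ∀ d a b, a < b → b ≤ n → n ≤ a + b → n - b = d → R a b = 0 := by
    intro d
    induction d with
    | zero =>
      intro a b h1 h2 h3 h4
      have hb : b = n := by omega
      subst hb; exact hAn a (by omega)
    | succ d' ih =>
      intro a b h1 h2 h3 h4
      have hbn : b < n := by omega
      have han : 1 ≤ a := by omega
      have h5 := hB a (b + 1) (by omega) (by omega) (by omega)
      simp only [if_pos (by omega : 1 ≤ b + 1), if_pos han, Nat.add_sub_cancel] at h5
      -- h5 : R b a + R (a-1) (b+1) = 0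
      have h6 := ih (a - 1) (b + 1) (by omega) (by omega) (by omega) (by omega)
      have h7 := hA1 b a (by omega) (by omega)
      linear_combination h7 - h5 + h6
  intro a b ha hb
  rcases eq_or_lt_of_le hb with hbn | hbn
  · rw [hbn]; exact hAn a ha
  · rcases lt_trichotomy a b with h | h | h
    · rcases lt_or_ge (a + b) n with hs | hs
      · have h0 := hA1 a b ha (by omega)
        have h2 := hdown a b h (by omega)
        linear_combination h0 - h2
      · exact hup (n - b) a b h (by omega) hs rfl
    · rw [h]; exact hdiag b (by omega)
    · rcases lt_or_ge (a + b) n with hs | hs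
      · exact hdown b a h (by omega)
      · have h0 := hA1 a b ha (by omega)
        have h2 := hup (n - a) b a h (by omega) (by omega) rfl
        linear_combination h0 - h2

private lemma Qzero (n : ℕ) (Q : ℕ → ℕ → ℂ)
    (h1 : ∀ p q, p < n → q < n → Q p q + Q q p = 0)
    (h2 : ∀ p q, p < n → q < n → Q (q + 1) p + Q (p + 1) q = 0) :
    ∀ p q, p ≤ n → q < n → Q p q = 0 := by
  have hdiag : ∀ p, p < n → Q p p = 0 := fun p hp => add_self_eq_zero.mp (h1 p p hp hp)
  have hsub : ∀ p, p < n → Q (p + 1) p = 0 := fun p hp => add_self_eq_zero.mp (h2 p p hp hp)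
  have hank : ∀ p q, p < n → q + 1 < n → Q (p + 1) q = Q p (q + 1) := by
    intro p q hp hq
    have a1 := h2 p q hp (by omega)
    have a2 := h1 (q + 1) p (by omega) hp
    linear_combination a1 - a2
  have key : ∀ d p q, p ≤ n → q < n → (p - q) + (q - p) = d → Q p q = 0 := by
    intro d
    induction d using Nat.strong_induction_on with
    | _ d ih =>
      intro p q hp hq hd
      rcases Nat.lt_or_ge (p + 2) (q + 1) with hc | hc
      · -- q ≥ p + 2
        have hq2 : p + 2 ≤ q := by omega
        have e : Q p q = Q (p + 1) (q - 1) := by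
          have := hank p (q - 1) (by omega) (by omega)
          rw [show q - 1 + 1 = q by omega] at this
          exact this.symm
        rw [e]
        exact ih (d - 2) (by omega) (p + 1) (q - 1) (by omega) (by omega) (by omega)
      · rcases Nat.lt_or_ge (q + 2) (p + 1) with hc2 | hc2
        · -- p ≥ q + 2
          have e : Q p q = Q (p - 1) (q + 1) := by
            have := hank (p - 1) q (by omega) (by omega)
            rw [show p - 1 + 1 = p by omega] at this
            exact this
          rw [e]
          exact ih (d - 2) (by omega) (p - 1) (q + 1) (by omega) (by omega) (by omega)
        · -- |p - q| ≤ 1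
          rcases lt_trichotomy p q with h | h | h
          · have hq1 : q = p + 1 := by omega
            subst hq1
            have a := h1 p (p + 1) (by omega) hq
            have b := hsub p (by omega)
            linear_combination a - b
          · subst h; exact hdiag p hq
          · have hp1 : p = q + 1 := by omega
            subst hp1
            exact hsub q hq
  intro p q hp hq
  exact key _ p q hp hq rfl

private lemma Pzero (n : ℕ) (P : ℕ → ℕ → ℂ)
    (ht : ∀ b i, b < n → 1 ≤ i → i ≤ n → P (b + 1) i = P b (i - 1))
    (hzn : ∀ b, b < n → P b n = 0)
    (hz0 : ∀ b, b < n → P (b + 1) 0 = 0)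
    (h00 : P 0 0 = 0) :
    ∀ a b, a ≤ n → b ≤ n → P a b = 0 := by
  have hdiag : ∀ a, a ≤ n → P a a = 0 := by
    intro a
    induction a with
    | zero => intro _; exact h00
    | succ a ih =>
      intro ha
      have := ht a (a + 1) (by omega) (by omega) (by omega)
      simp only [Nat.add_sub_cancel] at this
      rw [this]; exact ih (by omega)
  have habove : ∀ d a b, a < b → b ≤ n → n - b = d → P a b = 0 := by
    intro d
    induction d with
    | zero =>
      intro a b h1 h2 h3
      have : b = n := by omega
      subst this; exact hzn a (by omega)
    | succ d ih =>
      intro a b h1 h2 h3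
      have e := ht a (b + 1) (by omega) (by omega) (by omega)
      simp only [Nat.add_sub_cancel] at e
      rw [← e]
      exact ih (a + 1) (b + 1) (by omega) (by omega) (by omega)
  have hbelow : ∀ b a, b < a → a ≤ n → P a b = 0 := by
    intro b
    induction b with
    | zero =>
      intro a h1 h2
      have := hz0 (a - 1) (by omega)
      rw [show a - 1 + 1 = a by omega] at this
      exact this
    | succ b ih =>
      intro a h1 h2
      have e := ht (a - 1) (b + 1) (by omega) (by omega) (by omega)
      rw [show a - 1 + 1 = a by omega] at e
      simp only [Nat.add_sub_cancel] at e
      rw [e]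
      exact ih (a - 1) (by omega) (by omega)
  intro a b ha hb
  rcases lt_trichotomy a b with h | h | h
  · exact habove (n - b) a b h hb rfl
  · subst h; exact hdiag a ha
  · exact hbelow b a h ha





lemma finsplit (n : ℕ) (h : n + 1 + n = 2 * n + 1) (i : Fin (2 * n + 1)) :
    (finSumFinEquiv.trans (finCongr h)).symm i =
      if hi : (i : ℕ) < n + 1 then Sum.inl ⟨i, hi⟩ else Sum.inr ⟨(i : ℕ) - (n + 1), by omega⟩ := by
  rw [Equiv.symm_apply_eq]
  split_ifs with hi
  · simp only [Equiv.trans_apply, finSumFinEquiv_apply_left, finCongr_apply]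
    exact Fin.ext (by simp)
  · simp only [Equiv.trans_apply, finSumFinEquiv_apply_right, finCongr_apply]
    exact Fin.ext (by simp; omega)

lemma L1M_apply (n : ℕ) (i j : Fin (2 * n + 1)) :
    L1M n i j = (if (i : ℕ) + (n + 1) = (j : ℕ) then 1 else 0)
      + (if (j : ℕ) + (n + 1) = (i : ℕ) then 1 else 0) := by
  rw [L1M, Matrix.reindex_apply, Matrix.submatrix_apply, finsplit, finsplit]
  by_cases hi : (i : ℕ) < n + 1
  · by_cases hj : (j : ℕ) < n + 1
    · rw [dif_pos hi, dif_pos hj]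
      simp only [Matrix.fromBlocks_apply₁₁, Matrix.zero_apply]
      rw [if_neg (by omega), if_neg (by omega)]; ring
    · rw [dif_pos hi, dif_neg hj]
      simp only [Matrix.fromBlocks_apply₁₂, Matrix.transpose_apply, FM, Matrix.of_apply]
      rw [if_neg (show ¬((j : ℕ) + (n + 1) = (i : ℕ)) from by omega), add_zero]
      exact if_congr (by omega) rfl rfl
  · by_cases hj : (j : ℕ) < n + 1
    · rw [dif_neg hi, dif_pos hj]
      simp only [Matrix.fromBlocks_apply₂₁, FM, Matrix.of_apply]
      rw [if_neg (show ¬((i : ℕ) + (n + 1) = (j : ℕ)) from by omega), zero_add]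
      exact if_congr (by omega) rfl rfl
    · rw [dif_neg hi, dif_neg hj]
      simp only [Matrix.fromBlocks_apply₂₂, Matrix.zero_apply]
      rw [if_neg (by omega), if_neg (by omega)]; ring

lemma L2M_apply (n : ℕ) (i j : Fin (2 * n + 1)) :
    L2M n i j = (if 1 ≤ (i : ℕ) ∧ (i : ℕ) + n = (j : ℕ) then 1 else 0)
      + (if 1 ≤ (j : ℕ) ∧ (j : ℕ) + n = (i : ℕ) then 1 else 0) := by
  rw [L2M, Matrix.reindex_apply, Matrix.submatrix_apply, finsplit, finsplit]
  by_cases hi : (i : ℕ) < n + 1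
  · by_cases hj : (j : ℕ) < n + 1
    · rw [dif_pos hi, dif_pos hj]
      simp only [Matrix.fromBlocks_apply₁₁, Matrix.zero_apply]
      rw [if_neg (by omega), if_neg (by omega)]; ring
    · rw [dif_pos hi, dif_neg hj]
      simp only [Matrix.fromBlocks_apply₁₂, Matrix.transpose_apply, GM, Matrix.of_apply]
      rw [if_neg (show ¬(1 ≤ (j : ℕ) ∧ (j : ℕ) + n = (i : ℕ)) from by omega), add_zero]
      exact if_congr (by omega) rfl rfl
  · by_cases hj : (j : ℕ) < n + 1
    · rw [dif_neg hi, dif_pos hj]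
      simp only [Matrix.fromBlocks_apply₂₁, GM, Matrix.of_apply]
      rw [if_neg (show ¬(1 ≤ (i : ℕ) ∧ (i : ℕ) + n = (j : ℕ)) from by omega), zero_add]
      exact if_congr (by omega) rfl rfl
    · rw [dif_neg hi, dif_neg hj]
      simp only [Matrix.fromBlocks_apply₂₂, Matrix.zero_apply]
      rw [if_neg (by omega), if_neg (by omega)]; ring

lemma helperA {N : ℕ} (f : Fin N → ℂ) (d t : ℕ) :
    ∑ k : Fin N, (if (k : ℕ) + d = t then f k else 0)
      = if h : d ≤ t ∧ t - d < N then f ⟨t - d, h.2⟩ else 0 := by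
  split_ifs with h
  · rw [Finset.sum_eq_single (⟨t - d, h.2⟩ : Fin N)]
    · rw [if_pos (by simp; omega)]
    · intro k _ hk
      exact if_neg (by rw [Fin.ne_iff_vne] at hk; simp at hk; omega)
    · intro hmem; exact absurd (Finset.mem_univ _) hmem
  · exact Finset.sum_eq_zero fun k _ => if_neg (by have := k.isLt; omega)

lemma helperB {N : ℕ} (f : Fin N → ℂ) (t : ℕ) :
    ∑ k : Fin N, (if t = (k : ℕ) then f k else 0)
      = if h : t < N then f ⟨t, h⟩ else 0 := by
  split_ifs with h
  · rw [Finset.sum_eq_single (⟨t, h⟩ : Fin N)]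
    · rw [if_pos (by simp)]
    · intro k _ hk
      exact if_neg (by rw [Fin.ne_iff_vne] at hk; simp at hk; omega)
    · intro hmem; exact absurd (Finset.mem_univ _) hmem
  · exact Finset.sum_eq_zero fun k _ => if_neg (by have := k.isLt; omega)

lemma helperA' {N : ℕ} (f : Fin N → ℂ) (d t : ℕ) :
    ∑ k : Fin N, (if 1 ≤ (k : ℕ) ∧ (k : ℕ) + d = t then f k else 0)
      = if h : d + 1 ≤ t ∧ t - d < N then f ⟨t - d, h.2⟩ else 0 := by
  split_ifs with h
  · rw [Finset.sum_eq_single (⟨t - d, h.2⟩ : Fin N)]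
    · rw [if_pos (by simp; omega)]
    · intro k _ hk
      exact if_neg (by rw [Fin.ne_iff_vne] at hk; simp at hk; omega)
    · intro hmem; exact absurd (Finset.mem_univ _) hmem
  · exact Finset.sum_eq_zero fun k _ => if_neg (by have := k.isLt; omega)

lemma helperB' {N : ℕ} (f : Fin N → ℂ) (c : Prop) [Decidable c] (t : ℕ) :
    ∑ k : Fin N, (if c ∧ t = (k : ℕ) then f k else 0)
      = if h : c ∧ t < N then f ⟨t, h.2⟩ else 0 := by
  split_ifs with h
  · rw [Finset.sum_eq_single (⟨t, h.2⟩ : Fin N)]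
    · rw [if_pos (by simp [h.1])]
    · intro k _ hk
      exact if_neg (by rw [Fin.ne_iff_vne] at hk; simp at hk; intro hc; omega)
    · intro hmem; exact absurd (Finset.mem_univ _) hmem
  · exact Finset.sum_eq_zero fun k _ => if_neg (by
      intro hk; exact h ⟨hk.1, by have := k.isLt; omega⟩)

lemma E1_apply (n : ℕ) (C : Matrix (Fin (2 * n + 1)) (Fin (2 * n + 1)) ℂ)
    (i j : Fin (2 * n + 1)) :
    (Cᵀ * L1M n + L1M n * C) i j =
      (if h : n + 1 ≤ (j : ℕ) ∧ (j : ℕ) - (n + 1) < 2 * n + 1 then C ⟨(j : ℕ) - (n + 1), h.2⟩ i else 0)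
    + (if h : (j : ℕ) + (n + 1) < 2 * n + 1 then C ⟨(j : ℕ) + (n + 1), h⟩ i else 0)
    + (if h : (i : ℕ) + (n + 1) < 2 * n + 1 then C ⟨(i : ℕ) + (n + 1), h⟩ j else 0)
    + (if h : n + 1 ≤ (i : ℕ) ∧ (i : ℕ) - (n + 1) < 2 * n + 1 then C ⟨(i : ℕ) - (n + 1), h.2⟩ j else 0) := by
  rw [Matrix.add_apply, Matrix.mul_apply, Matrix.mul_apply]
  simp only [Matrix.transpose_apply, L1M_apply, mul_add, add_mul, ite_mul, mul_ite,
    mul_one, mul_zero, one_mul, zero_mul, Finset.sum_add_distrib]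
  rw [helperA (fun k => C k i) (n + 1) (j : ℕ), helperB (fun k => C k i) ((j : ℕ) + (n + 1)),
    helperB (fun k => C k j) ((i : ℕ) + (n + 1)), helperA (fun k => C k j) (n + 1) (i : ℕ)]
  ring

lemma E2_apply (n : ℕ) (C : Matrix (Fin (2 * n + 1)) (Fin (2 * n + 1)) ℂ)
    (i j : Fin (2 * n + 1)) :
    (Cᵀ * L2M n + L2M n * C) i j =
      (if h : n + 1 ≤ (j : ℕ) ∧ (j : ℕ) - n < 2 * n + 1 then C ⟨(j : ℕ) - n, h.2⟩ i else 0)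
    + (if h : (1 ≤ (j : ℕ)) ∧ (j : ℕ) + n < 2 * n + 1 then C ⟨(j : ℕ) + n, h.2⟩ i else 0)
    + (if h : (1 ≤ (i : ℕ)) ∧ (i : ℕ) + n < 2 * n + 1 then C ⟨(i : ℕ) + n, h.2⟩ j else 0)
    + (if h : n + 1 ≤ (i : ℕ) ∧ (i : ℕ) - n < 2 * n + 1 then C ⟨(i : ℕ) - n, h.2⟩ j else 0) := by
  rw [Matrix.add_apply, Matrix.mul_apply, Matrix.mul_apply]
  simp only [Matrix.transpose_apply, L2M_apply, mul_add, add_mul, ite_mul, mul_ite,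
    mul_one, mul_zero, one_mul, zero_mul, Finset.sum_add_distrib]
  rw [helperA' (fun k => C k i) n (j : ℕ), helperB' (fun k => C k i) (1 ≤ (j : ℕ)) ((j : ℕ) + n),
    helperB' (fun k => C k j) (1 ≤ (i : ℕ)) ((i : ℕ) + n), helperA' (fun k => C k j) n (i : ℕ)]
  ring



def entC (n : ℕ) (C : Matrix (Fin (2 * n + 1)) (Fin (2 * n + 1)) ℂ) (a b : ℕ) : ℂ :=
  if h : a < 2 * n + 1 ∧ b < 2 * n + 1 then C ⟨a, h.1⟩ ⟨b, h.2⟩ else 0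

lemma Rpart (n : ℕ) (hn : 0 < n) (C : Matrix (Fin (2 * n + 1)) (Fin (2 * n + 1)) ℂ)
    (hX : ∀ i j : Fin (2 * n + 1), (i : ℕ) ≤ n → (j : ℕ) ≤ n → ¬((i : ℕ) = n ∧ (j : ℕ) = n) →
      (Cᵀ * L1M n + L1M n * C) i j = 0)
    (hY : ∀ i j : Fin (2 * n + 1), (i : ℕ) ≤ n → (j : ℕ) ≤ n →
      ((i : ℕ) + 2 ≤ (j : ℕ) ∨ (j : ℕ) + 2 ≤ (i : ℕ)) → (Cᵀ * L2M n + L2M n * C) i j = 0) :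
    ∀ a b, a < n → b ≤ n → entC n C (a + (n + 1)) b = 0 := by
  have entC_eq : ∀ (a b : ℕ) (ha : a < 2 * n + 1) (hb : b < 2 * n + 1),
      C ⟨a, ha⟩ ⟨b, hb⟩ = entC n C a b := by
    intro a b ha hb
    rw [entC, dif_pos ⟨ha, hb⟩]
  apply Rzero n (fun a b => entC n C (a + (n + 1)) b)
  · -- hA1
    intro p q hp hq
    have h := hX ⟨p, by omega⟩ ⟨q, by omega⟩ (by simp; omega) (by simp; omega) (by simp; omega)
    rw [E1_apply] at h
    simp only [Fin.val_mk] at h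
    rw [dif_neg (by omega), dif_pos (by omega), dif_pos (by omega), dif_neg (by omega)] at h
    simp only [entC_eq, zero_add, add_zero] at h
    linear_combination h
  · -- hAn
    intro q hq
    have h := hX ⟨q, by omega⟩ ⟨n, by omega⟩ (by simp; omega) (by simp) (by simp; omega)
    rw [E1_apply] at h
    simp only [Fin.val_mk] at h
    rw [dif_neg (by omega), dif_neg (by omega), dif_pos (by omega), dif_neg (by omega)] at h
    simp only [entC_eq, zero_add, add_zero] at h
    linear_combination h
  · -- hB
    intro i j hi hj hgap
    have h := hY ⟨i, by omega⟩ ⟨j, by omega⟩ (by simp; omega) (by simp; omega) (by simp; omega)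
    rw [E2_apply] at h
    simp only [Fin.val_mk] at h
    rw [dif_neg (by omega)] at h
    by_cases hj1 : 1 ≤ j
    · rw [dif_pos (by omega)] at h
      by_cases hi1 : 1 ≤ i
      · rw [dif_pos (by omega), dif_neg (by omega)] at h
        simp only [entC_eq, zero_add, add_zero] at h
        rw [if_pos hj1, if_pos hi1,
          show j - 1 + (n + 1) = j + n from by omega, show i - 1 + (n + 1) = i + n from by omega]
        linear_combination h
      · rw [dif_neg (by omega), dif_neg (by omega)] at h
        simp only [entC_eq, zero_add, add_zero] at h
        rw [if_pos hj1, if_neg hi1, show j - 1 + (n + 1) = j + n from by omega, add_zero]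
        linear_combination h
    · rw [dif_neg (by omega)] at h
      by_cases hi1 : 1 ≤ i
      · rw [dif_pos (by omega), dif_neg (by omega)] at h
        simp only [entC_eq, zero_add, add_zero] at h
        rw [if_neg hj1, if_pos hi1, show i - 1 + (n + 1) = i + n from by omega, zero_add]
        linear_combination h
      · omega

lemma ker_zero (n : ℕ) (hn : 0 < n) (C : Matrix (Fin (2 * n + 1)) (Fin (2 * n + 1)) ℂ)
    (h1 : Cᵀ * L1M n + L1M n * C = 0)
    (h2 : Cᵀ * L2M n + L2M n * C = 0)
    (h0 : C ⟨0, by omega⟩ ⟨0, by omega⟩ = 0) : C = 0 := by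
  have entC_eq : ∀ (a b : ℕ) (ha : a < 2 * n + 1) (hb : b < 2 * n + 1),
      C ⟨a, ha⟩ ⟨b, hb⟩ = entC n C a b := by
    intro a b ha hb
    rw [entC, dif_pos ⟨ha, hb⟩]
  have e1 : ∀ i j : Fin (2 * n + 1), (Cᵀ * L1M n + L1M n * C) i j = 0 := by
    intro i j; rw [h1]; rfl
  have e2 : ∀ i j : Fin (2 * n + 1), (Cᵀ * L2M n + L2M n * C) i j = 0 := by
    intro i j; rw [h2]; rfl
  have hR : ∀ a b, a < n → b ≤ n → entC n C (a + (n + 1)) b = 0 :=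
    Rpart n hn C (fun i j _ _ _ => e1 i j) (fun i j _ _ _ => e2 i j)
  have hQ : ∀ p q, p ≤ n → q < n → entC n C p (q + (n + 1)) = 0 := by
    apply Qzero n (fun a b => entC n C a (b + (n + 1)))
    · intro p q hp hq
      have h := e1 ⟨p + (n + 1), by omega⟩ ⟨q + (n + 1), by omega⟩
      rw [E1_apply] at h
      simp only [Fin.val_mk] at h
      rw [dif_pos (by omega), dif_neg (by omega), dif_neg (by omega), dif_pos (by omega)] at h
      simp only [entC_eq, zero_add, add_zero] at h
      rw [show q + (n + 1) - (n + 1) = q from by omega,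
        show p + (n + 1) - (n + 1) = p from by omega] at h
      linear_combination h
    · intro p q hp hq
      have h := e2 ⟨p + (n + 1), by omega⟩ ⟨q + (n + 1), by omega⟩
      rw [E2_apply] at h
      simp only [Fin.val_mk] at h
      rw [dif_pos (by omega), dif_neg (by omega), dif_neg (by omega), dif_pos (by omega)] at h
      simp only [entC_eq, zero_add, add_zero] at h
      rw [show q + (n + 1) - n = q + 1 from by omega,
        show p + (n + 1) - n = p + 1 from by omega] at h
      linear_combination h
  have m1 : ∀ b i, b < n → i ≤ n → entC n C b i +
      (if i < n then entC n C (i + (n + 1)) (b + (n + 1)) else 0) = 0 := by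
    intro b i hb hi
    have h := e1 ⟨i, by omega⟩ ⟨b + (n + 1), by omega⟩
    rw [E1_apply] at h
    simp only [Fin.val_mk] at h
    rw [dif_pos (by omega), dif_neg (by omega)] at h
    by_cases hin : i < n
    · rw [dif_pos (by omega), dif_neg (by omega)] at h
      simp only [entC_eq, zero_add, add_zero] at h
      rw [show b + (n + 1) - (n + 1) = b from by omega] at h
      rw [if_pos hin]
      linear_combination h
    · rw [dif_neg (by omega), dif_neg (by omega)] at h
      simp only [entC_eq, zero_add, add_zero] at h
      rw [show b + (n + 1) - (n + 1) = b from by omega] at h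
      rw [if_neg hin, add_zero]
      linear_combination h
  have m2 : ∀ b i, b < n → i ≤ n → entC n C (b + 1) i +
      (if 1 ≤ i then entC n C (i - 1 + (n + 1)) (b + (n + 1)) else 0) = 0 := by
    intro b i hb hi
    have h := e2 ⟨i, by omega⟩ ⟨b + (n + 1), by omega⟩
    rw [E2_apply] at h
    simp only [Fin.val_mk] at h
    rw [dif_pos (by omega), dif_neg (by omega)] at h
    by_cases hi1 : 1 ≤ i
    · rw [dif_pos (by omega), dif_neg (by omega)] at h
      simp only [entC_eq, zero_add, add_zero] at h
      rw [show b + (n + 1) - n = b + 1 from by omega,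
        show i + n = i - 1 + (n + 1) from by omega] at h
      rw [if_pos hi1]
      linear_combination h
    · rw [dif_neg (by omega), dif_neg (by omega)] at h
      simp only [entC_eq, zero_add, add_zero] at h
      rw [show b + (n + 1) - n = b + 1 from by omega] at h
      rw [if_neg hi1, add_zero]
      linear_combination h
  have hP : ∀ a b, a ≤ n → b ≤ n → entC n C a b = 0 := by
    apply Pzero n (fun a b => entC n C a b)
    · intro b i hb h1i hin
      have a1 := m2 b i hb hin
      rw [if_pos h1i] at a1
      have a2 := m1 b (i - 1) hb (by omega)
      rw [if_pos (by omega)] at a2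
      linear_combination a1 - a2
    · intro b hb
      have a1 := m1 b n hb (le_refl n)
      rw [if_neg (by omega), add_zero] at a1
      exact a1
    · intro b hb
      have a1 := m2 b 0 hb (by omega)
      rw [if_neg (by omega), add_zero] at a1
      exact a1
    · rw [← entC_eq 0 0 (by omega) (by omega)]
      exact h0
  have hS : ∀ a b, a < n → b < n → entC n C (a + (n + 1)) (b + (n + 1)) = 0 := by
    intro a b ha hb
    have a1 := m1 b a hb (by omega)
    rw [if_pos ha] at a1
    have hpz := hP b a (by omega) (by omega)
    rw [hpz] at a1
    linear_combination a1
  ext i j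
  rw [Matrix.zero_apply, show C i j = entC n C (i : ℕ) (j : ℕ) from by
    rw [← entC_eq (i : ℕ) (j : ℕ) i.isLt j.isLt]]
  by_cases hi : (i : ℕ) ≤ n
  · by_cases hj : (j : ℕ) ≤ n
    · exact hP _ _ hi hj
    · rw [show (j : ℕ) = ((j : ℕ) - (n + 1)) + (n + 1) from by omega]
      exact hQ _ _ hi (by omega)
  · by_cases hj : (j : ℕ) ≤ n
    · rw [show (i : ℕ) = ((i : ℕ) - (n + 1)) + (n + 1) from by omega]
      exact hR _ _ (by omega) hj
    · rw [show (i : ℕ) = ((i : ℕ) - (n + 1)) + (n + 1) from by omega,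
        show (j : ℕ) = ((j : ℕ) - (n + 1)) + (n + 1) from by omega]
      exact hS _ _ (by omega) (by omega)


lemma symm_key {n : ℕ} (C A : Matrix (Fin n) (Fin n) ℂ) (hA : A.IsSymm) :
    (Cᵀ * A + A * C).IsSymm := by
  unfold Matrix.IsSymm at *
  rw [Matrix.transpose_add, Matrix.transpose_mul, Matrix.transpose_mul,
    Matrix.transpose_transpose, hA]
  abel

lemma T_le_sym (n : ℕ) : TSpace (L1M n) (L2M n) ≤ SymPair (Fin (2 * n + 1)) := by
  rintro x ⟨C, rfl⟩
  exact ⟨symm_key C _ (L1M_isSymm n), symm_key C _ (L2M_isSymm n)⟩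

lemma disj (n : ℕ) (hn : 0 < n) :
    Disjoint (TSpace (L1M n) (L2M n))
      (Pattern
        {pq : Fin (2 * n + 1) × Fin (2 * n + 1) | (pq.1 : ℕ) = n ∧ (pq.2 : ℕ) = n}
        {pq : Fin (2 * n + 1) × Fin (2 * n + 1) | (pq.1 : ℕ) ≤ n ∧ (pq.2 : ℕ) ≤ n ∧
          ((pq.1 : ℕ) ≤ (pq.2 : ℕ) + 1 ∧ (pq.2 : ℕ) ≤ (pq.1 : ℕ) + 1)}) := by
  rw [Submodule.disjoint_def]
  rintro ⟨X, Y⟩ hT hP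
  obtain ⟨C, hC⟩ := hT
  obtain ⟨hXs, hYs, hX0, hY0⟩ := hP
  have hCX : Cᵀ * L1M n + L1M n * C = X := congrArg Prod.fst hC
  have hCY : Cᵀ * L2M n + L2M n * C = Y := congrArg Prod.snd hC
  have hX0' : ∀ i j : Fin (2 * n + 1), ¬((i : ℕ) = n ∧ (j : ℕ) = n) → X i j = 0 :=
    fun i j h => hX0 i j (by simpa using h)
  have hY0' : ∀ i j : Fin (2 * n + 1),
      ¬((i : ℕ) ≤ n ∧ (j : ℕ) ≤ n ∧ ((i : ℕ) ≤ (j : ℕ) + 1 ∧ (j : ℕ) ≤ (i : ℕ) + 1)) →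
      Y i j = 0 :=
    fun i j h => hY0 i j (by simpa using h)
  have hR := Rpart n hn C
    (fun i j _ _ h => by rw [hCX]; exact hX0' i j h)
    (fun i j hi hj h => by rw [hCY]; exact hY0' i j (by omega))
  have hR' : ∀ (a : ℕ) (ha : a < 2 * n + 1) (j : Fin (2 * n + 1)),
      n + 1 ≤ a → (j : ℕ) ≤ n → C ⟨a, ha⟩ j = 0 := by
    intro a ha j h1 h2
    calc C ⟨a, ha⟩ j = entC n C (a - (n + 1) + (n + 1)) (j : ℕ) := by
          rw [entC, dif_pos ⟨by omega, j.isLt⟩]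
          congr 1
          exact Fin.ext (by simp; omega)
      _ = 0 := hR _ _ (by omega) h2
  have hX : X = 0 := by
    ext i j
    rw [Matrix.zero_apply]
    by_cases h : (i : ℕ) = n ∧ (j : ℕ) = n
    · obtain ⟨hi, hj⟩ := h
      rw [← hCX, E1_apply, dif_neg (by omega), dif_neg (by omega), dif_neg (by omega),
        dif_neg (by omega)]
      ring
    · exact hX0' i j h
  have hY : Y = 0 := by
    ext i j
    rw [Matrix.zero_apply]
    by_cases h : (i : ℕ) ≤ n ∧ (j : ℕ) ≤ n ∧ ((i : ℕ) ≤ (j : ℕ) + 1 ∧ (j : ℕ) ≤ (i : ℕ) + 1)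
    · obtain ⟨hi, hj, -⟩ := h
      rw [← hCY, E2_apply, dif_neg (by omega)]
      by_cases hj1 : 1 ≤ (j : ℕ)
      · rw [dif_pos (show 1 ≤ (j : ℕ) ∧ (j : ℕ) + n < 2 * n + 1 from ⟨hj1, by omega⟩),
          hR' ((j : ℕ) + n) (by omega) i (by omega) hi]
        by_cases hi1 : 1 ≤ (i : ℕ)
        · rw [dif_pos (show 1 ≤ (i : ℕ) ∧ (i : ℕ) + n < 2 * n + 1 from ⟨hi1, by omega⟩),
            hR' ((i : ℕ) + n) (by omega) j (by omega) hj, dif_neg (by omega)]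
          ring
        · rw [dif_neg (by omega), dif_neg (by omega)]; ring
      · rw [dif_neg (by omega)]
        by_cases hi1 : 1 ≤ (i : ℕ)
        · rw [dif_pos (show 1 ≤ (i : ℕ) ∧ (i : ℕ) + n < 2 * n + 1 from ⟨hi1, by omega⟩),
            hR' ((i : ℕ) + n) (by omega) j (by omega) hj, dif_neg (by omega)]
          ring
        · rw [dif_neg (by omega), dif_neg (by omega)]; ring
    · exact hY0' i j h
  rw [Prod.ext_iff]
  exact ⟨hX, hY⟩

lemma T_finrank (n : ℕ) (hn : 0 < n) :
    (2 * n + 1) * (2 * n + 1) ≤ Module.finrank ℂ (TSpace (L1M n) (L2M n)) + 1 := by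
  have hrn := LinearMap.finrank_range_add_finrank_ker (congMap (L1M n) (L2M n))
  have hmat : Module.finrank ℂ (Matrix (Fin (2 * n + 1)) (Fin (2 * n + 1)) ℂ)
      = (2 * n + 1) * (2 * n + 1) := by
    rw [Module.finrank_matrix]; simp
  rw [hmat] at hrn
  have hker : Module.finrank ℂ (LinearMap.ker (congMap (L1M n) (L2M n))) ≤ 1 := by
    let φ : LinearMap.ker (congMap (L1M n) (L2M n)) →ₗ[ℂ] ℂ :=
      { toFun := fun C => (C : Matrix (Fin (2 * n + 1)) (Fin (2 * n + 1)) ℂ)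
          ⟨0, by omega⟩ ⟨0, by omega⟩
        map_add' := fun _ _ => rfl
        map_smul' := fun _ _ => rfl }
    have hinj : Function.Injective φ := by
      rw [injective_iff_map_eq_zero]
      rintro ⟨C, hC⟩ h0
      have hC0 : congMap (L1M n) (L2M n) C = 0 := LinearMap.mem_ker.mp hC
      have h1 : Cᵀ * L1M n + L1M n * C = 0 := congrArg Prod.fst hC0
      have h2 : Cᵀ * L2M n + L2M n * C = 0 := congrArg Prod.snd hC0
      exact Subtype.ext (ker_zero n hn C h1 h2 h0)
    calc Module.finrank ℂ (LinearMap.ker (congMap (L1M n) (L2M n)))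
        ≤ Module.finrank ℂ ℂ := LinearMap.finrank_le_finrank_of_injective hinj
      _ = 1 := Module.finrank_self ℂ
  rw [TSpace]
  omega

lemma sympair_finrank (n : ℕ) :
    Module.finrank ℂ (SymPair (Fin (2 * n + 1))) ≤ (2 * n + 1) * (2 * n + 1) + (2 * n + 1) := by
  classical
  let φ : SymPair (Fin (2 * n + 1)) →ₗ[ℂ]
      ({p : Fin (2 * n + 1) × Fin (2 * n + 1) // p.1 ≤ p.2} → ℂ) ×
      ({p : Fin (2 * n + 1) × Fin (2 * n + 1) // p.1 ≤ p.2} → ℂ) :=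
    { toFun := fun q => (fun s => q.val.1 s.1.1 s.1.2, fun s => q.val.2 s.1.1 s.1.2)
      map_add' := fun _ _ => rfl
      map_smul' := fun _ _ => rfl }
  have hinj : Function.Injective φ := by
    rw [injective_iff_map_eq_zero]
    rintro ⟨⟨X, Y⟩, hXs, hYs⟩ h0
    have h0X : ∀ s : {p : Fin (2 * n + 1) × Fin (2 * n + 1) // p.1 ≤ p.2},
        X s.1.1 s.1.2 = 0 := fun s => congrFun (congrArg Prod.fst h0) s
    have h0Y : ∀ s : {p : Fin (2 * n + 1) × Fin (2 * n + 1) // p.1 ≤ p.2},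
        Y s.1.1 s.1.2 = 0 := fun s => congrFun (congrArg Prod.snd h0) s
    apply Subtype.ext
    have hXs' : Xᵀ = X := hXs
    have hYs' : Yᵀ = Y := hYs
    have hX : X = 0 := by
      ext i j
      rw [Matrix.zero_apply]
      rcases le_total i j with h | h
      · exact h0X ⟨(i, j), h⟩
      · rw [show X i j = X j i from by conv_lhs => rw [← hXs']; rw [Matrix.transpose_apply]]
        exact h0X ⟨(j, i), h⟩
    have hY : Y = 0 := by
      ext i j
      rw [Matrix.zero_apply]
      rcases le_total i j with h | h
      · exact h0Y ⟨(i, j), h⟩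
      · rw [show Y i j = Y j i from by conv_lhs => rw [← hYs']; rw [Matrix.transpose_apply]]
        exact h0Y ⟨(j, i), h⟩
    rw [Prod.ext_iff]
    exact ⟨hX, hY⟩
  have hcard : Fintype.card {p : Fin (2 * n + 1) × Fin (2 * n + 1) // p.1 ≤ p.2}
      = (n + 1) * (2 * n + 1) := by
    rw [← Fintype.card_congr (Sym2.sortEquiv (α := Fin (2 * n + 1))), Sym2.card, Fintype.card_fin]
    rw [Nat.choose_two_right, show 2 * n + 1 + 1 - 1 = 2 * n + 1 from by omega,
      show (2 * n + 1 + 1) * (2 * n + 1) = 2 * ((n + 1) * (2 * n + 1)) from by ring]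
    exact Nat.mul_div_cancel_left _ (by norm_num)
  calc Module.finrank ℂ (SymPair (Fin (2 * n + 1)))
      ≤ Module.finrank ℂ (({p : Fin (2 * n + 1) × Fin (2 * n + 1) // p.1 ≤ p.2} → ℂ) ×
        ({p : Fin (2 * n + 1) × Fin (2 * n + 1) // p.1 ≤ p.2} → ℂ)) :=
      LinearMap.finrank_le_finrank_of_injective hinj
    _ = (2 * n + 1) * (2 * n + 1) + (2 * n + 1) := by
      rw [Module.finrank_prod, Module.finrank_pi, hcard]; ring

def EnnM (n : ℕ) : Matrix (Fin (2 * n + 1)) (Fin (2 * n + 1)) ℂ :=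
  Matrix.single ⟨n, by omega⟩ ⟨n, by omega⟩ 1

def DdM (n : ℕ) (k : Fin (n + 1)) : Matrix (Fin (2 * n + 1)) (Fin (2 * n + 1)) ℂ :=
  Matrix.single ⟨k, by omega⟩ ⟨k, by omega⟩ 1

def OoM (n : ℕ) (k : Fin n) : Matrix (Fin (2 * n + 1)) (Fin (2 * n + 1)) ℂ :=
  Matrix.single ⟨k, by omega⟩ ⟨(k : ℕ) + 1, by omega⟩ 1
    + Matrix.single ⟨(k : ℕ) + 1, by omega⟩ ⟨k, by omega⟩ 1

lemma hstd (n : ℕ) (a b : ℕ) (ha : a < 2 * n + 1) (hb : b < 2 * n + 1)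
    (i j : Fin (2 * n + 1)) :
    Matrix.single (⟨a, ha⟩ : Fin (2 * n + 1)) ⟨b, hb⟩ (1 : ℂ) i j
      = if (i : ℕ) = a ∧ (j : ℕ) = b then 1 else 0 := by
  rw [Matrix.single]
  simp only [Matrix.of_apply]
  exact if_congr (by rw [Fin.ext_iff, Fin.ext_iff]; simp only [Fin.val_mk]; omega) rfl rfl

lemma EnnM_apply (n : ℕ) (i j : Fin (2 * n + 1)) :
    EnnM n i j = if (i : ℕ) = n ∧ (j : ℕ) = n then 1 else 0 := hstd n n n _ _ i j

lemma DdM_apply (n : ℕ) (k : Fin (n + 1)) (i j : Fin (2 * n + 1)) :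
    DdM n k i j = if (i : ℕ) = (k : ℕ) ∧ (j : ℕ) = (k : ℕ) then 1 else 0 := hstd n _ _ _ _ i j

lemma OoM_apply (n : ℕ) (k : Fin n) (i j : Fin (2 * n + 1)) :
    OoM n k i j = (if (i : ℕ) = (k : ℕ) ∧ (j : ℕ) = (k : ℕ) + 1 then 1 else 0)
      + (if (i : ℕ) = (k : ℕ) + 1 ∧ (j : ℕ) = (k : ℕ) then 1 else 0) := by
  rw [OoM, Matrix.add_apply, hstd, hstd]

lemma EnnM_symm (n : ℕ) : (EnnM n)ᵀ = EnnM n := by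
  ext i j
  rw [Matrix.transpose_apply, EnnM_apply, EnnM_apply]
  exact if_congr (by omega) rfl rfl

lemma DdM_symm (n : ℕ) (k : Fin (n + 1)) : (DdM n k)ᵀ = DdM n k := by
  ext i j
  rw [Matrix.transpose_apply, DdM_apply, DdM_apply]
  exact if_congr (by omega) rfl rfl

lemma OoM_symm (n : ℕ) (k : Fin n) : (OoM n k)ᵀ = OoM n k := by
  ext i j
  rw [Matrix.transpose_apply, OoM_apply, OoM_apply, add_comm]
  exact congrArg₂ (· + ·) (if_congr (by omega) rfl rfl) (if_congr (by omega) rfl rfl)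

lemma hDsum (n : ℕ) (d : Fin (n + 1) → ℂ) (i j : Fin (2 * n + 1)) :
    (∑ k, d k • DdM n k) i j
      = if h : (i : ℕ) = (j : ℕ) ∧ (i : ℕ) ≤ n then d ⟨(i : ℕ), by omega⟩ else 0 := by
  rw [Matrix.sum_apply]
  simp only [Matrix.smul_apply, DdM_apply, smul_eq_mul, mul_ite, mul_one, mul_zero]
  split_ifs with h
  · rw [Finset.sum_eq_single (⟨(i : ℕ), by omega⟩ : Fin (n + 1))]
    · rw [if_pos (by simp only [Fin.val_mk, true_and, and_true]; omega)]
    · intro k _ hk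
      exact if_neg (by rw [Fin.ne_iff_vne] at hk; simp only [Fin.val_mk] at hk; omega)
    · intro hm; exact absurd (Finset.mem_univ _) hm
  · exact Finset.sum_eq_zero fun k _ =>
      if_neg (show ¬((i : ℕ) = (k : ℕ) ∧ (j : ℕ) = (k : ℕ)) from by have := k.isLt; omega)

lemma hOsum (n : ℕ) (e : Fin n → ℂ) (i j : Fin (2 * n + 1)) :
    (∑ k, e k • OoM n k) i j
      = (if h : (i : ℕ) + 1 = (j : ℕ) ∧ (j : ℕ) ≤ n then e ⟨(i : ℕ), by omega⟩ else 0)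
      + (if h : (j : ℕ) + 1 = (i : ℕ) ∧ (i : ℕ) ≤ n then e ⟨(j : ℕ), by omega⟩ else 0) := by
  rw [Matrix.sum_apply]
  simp only [Matrix.smul_apply, OoM_apply, smul_eq_mul, mul_add, mul_ite, mul_one, mul_zero,
    Finset.sum_add_distrib]
  congr 1
  · split_ifs with h
    · rw [Finset.sum_eq_single (⟨(i : ℕ), by omega⟩ : Fin n)]
      · rw [if_pos (by simp only [Fin.val_mk, true_and, and_true]; omega)]
      · intro k _ hk
        exact if_neg (by rw [Fin.ne_iff_vne] at hk; simp only [Fin.val_mk] at hk; omega)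
      · intro hm; exact absurd (Finset.mem_univ _) hm
    · exact Finset.sum_eq_zero fun k _ =>
        if_neg (show ¬((i : ℕ) = (k : ℕ) ∧ (j : ℕ) = (k : ℕ) + 1) from by have := k.isLt; omega)
  · split_ifs with h
    · rw [Finset.sum_eq_single (⟨(j : ℕ), by omega⟩ : Fin n)]
      · rw [if_pos (by simp only [Fin.val_mk, true_and, and_true]; omega)]
      · intro k _ hk
        exact if_neg (by rw [Fin.ne_iff_vne] at hk; simp only [Fin.val_mk] at hk; omega)
      · intro hm; exact absurd (Finset.mem_univ _) hm
    · exact Finset.sum_eq_zero fun k _ =>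
        if_neg (show ¬((i : ℕ) = (k : ℕ) + 1 ∧ (j : ℕ) = (k : ℕ)) from by have := k.isLt; omega)

lemma pattern_finrank (n : ℕ) :
    2 * n + 2 ≤ Module.finrank ℂ
      (Pattern
        {pq : Fin (2 * n + 1) × Fin (2 * n + 1) | (pq.1 : ℕ) = n ∧ (pq.2 : ℕ) = n}
        {pq : Fin (2 * n + 1) × Fin (2 * n + 1) | (pq.1 : ℕ) ≤ n ∧ (pq.2 : ℕ) ≤ n ∧
          ((pq.1 : ℕ) ≤ (pq.2 : ℕ) + 1 ∧ (pq.2 : ℕ) ≤ (pq.1 : ℕ) + 1)}) := by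
  classical
  let g : (ℂ × (Fin (n + 1) → ℂ) × (Fin n → ℂ)) →ₗ[ℂ]
      (Matrix (Fin (2 * n + 1)) (Fin (2 * n + 1)) ℂ × Matrix (Fin (2 * n + 1)) (Fin (2 * n + 1)) ℂ) :=
    { toFun := fun w => (w.1 • EnnM n,
        (∑ k, w.2.1 k • DdM n k) + ∑ k, w.2.2 k • OoM n k)
      map_add' := fun w v => by
        simp only [Prod.fst_add, Prod.snd_add, Pi.add_apply, add_smul,
          Finset.sum_add_distrib, Prod.mk_add_mk, Prod.mk.injEq]
        all_goals exact ⟨by trivial, by abel⟩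
      map_smul' := fun c w => by
        simp only [Prod.smul_fst, Prod.smul_snd, Pi.smul_apply, smul_eq_mul, RingHom.id_apply,
          Prod.smul_mk, Prod.mk.injEq, smul_smul, Finset.smul_sum, smul_add]
        all_goals exact ⟨by trivial, by trivial⟩ }
  have hmem : ∀ w, g w ∈ Pattern
      {pq : Fin (2 * n + 1) × Fin (2 * n + 1) | (pq.1 : ℕ) = n ∧ (pq.2 : ℕ) = n}
      {pq : Fin (2 * n + 1) × Fin (2 * n + 1) | (pq.1 : ℕ) ≤ n ∧ (pq.2 : ℕ) ≤ n ∧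
        ((pq.1 : ℕ) ≤ (pq.2 : ℕ) + 1 ∧ (pq.2 : ℕ) ≤ (pq.1 : ℕ) + 1)} := by
    intro w
    refine ⟨?_, ?_, ?_, ?_⟩
    · show (w.1 • EnnM n)ᵀ = w.1 • EnnM n
      rw [Matrix.transpose_smul, EnnM_symm]
    · show ((∑ k, w.2.1 k • DdM n k) + ∑ k, w.2.2 k • OoM n k)ᵀ
        = (∑ k, w.2.1 k • DdM n k) + ∑ k, w.2.2 k • OoM n k
      rw [Matrix.transpose_add, Matrix.transpose_sum, Matrix.transpose_sum]
      simp only [Matrix.transpose_smul, DdM_symm, OoM_symm]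
    · intro i j h
      have h' : ¬((i : ℕ) = n ∧ (j : ℕ) = n) := by simpa using h
      show (w.1 • EnnM n) i j = 0
      rw [Matrix.smul_apply, EnnM_apply, if_neg h', smul_zero]
    · intro i j h
      have h' : ¬((i : ℕ) ≤ n ∧ (j : ℕ) ≤ n ∧
          ((i : ℕ) ≤ (j : ℕ) + 1 ∧ (j : ℕ) ≤ (i : ℕ) + 1)) := by simpa using h
      show ((∑ k, w.2.1 k • DdM n k) + ∑ k, w.2.2 k • OoM n k) i j = 0
      rw [Matrix.add_apply, hDsum, hOsum,
        dif_neg (show ¬((i : ℕ) = (j : ℕ) ∧ (i : ℕ) ≤ n) from by omega),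
        dif_neg (show ¬((i : ℕ) + 1 = (j : ℕ) ∧ (j : ℕ) ≤ n) from by omega),
        dif_neg (show ¬((j : ℕ) + 1 = (i : ℕ) ∧ (i : ℕ) ≤ n) from by omega)]
      ring
  have hinj : Function.Injective g := by
    rw [injective_iff_map_eq_zero]
    rintro ⟨c, d, e⟩ h0
    have hX : c • EnnM n = 0 := congrArg Prod.fst h0
    have hY : (∑ k, d k • DdM n k) + ∑ k, e k • OoM n k = 0 := congrArg Prod.snd h0
    have hc : c = 0 := by
      have h1 := congrFun (congrFun hX ⟨n, by omega⟩) ⟨n, by omega⟩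
      rw [Matrix.smul_apply, EnnM_apply, Matrix.zero_apply] at h1
      simp only [Fin.val_mk] at h1
      rw [if_pos (show True ∧ True from ⟨trivial, trivial⟩), smul_eq_mul, mul_one] at h1
      exact h1
    have hd : ∀ a : Fin (n + 1), d a = 0 := by
      intro a
      have h1 := congrFun (congrFun hY ⟨(a : ℕ), by omega⟩) ⟨(a : ℕ), by omega⟩
      rw [Matrix.add_apply, hDsum, hOsum, Matrix.zero_apply] at h1
      simp only [Fin.val_mk] at h1
      rw [dif_pos (show True ∧ (a : ℕ) ≤ n from ⟨trivial, by omega⟩),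
        dif_neg (show ¬((a : ℕ) + 1 = (a : ℕ) ∧ (a : ℕ) ≤ n) from by omega)] at h1
      simpa using h1
    have he : ∀ a : Fin n, e a = 0 := by
      intro a
      have h1 := congrFun (congrFun hY ⟨(a : ℕ), by omega⟩) ⟨(a : ℕ) + 1, by omega⟩
      rw [Matrix.add_apply, hDsum, hOsum, Matrix.zero_apply] at h1
      simp only [Fin.val_mk] at h1
      rw [dif_neg (show ¬((a : ℕ) = (a : ℕ) + 1 ∧ (a : ℕ) ≤ n) from by omega),
        dif_pos (show True ∧ (a : ℕ) + 1 ≤ n from ⟨trivial, by omega⟩),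
        dif_neg (show ¬((a : ℕ) + 1 + 1 = (a : ℕ) ∧ (a : ℕ) ≤ n) from by omega)] at h1
      simpa using h1
    rw [Prod.ext_iff, Prod.ext_iff]
    exact ⟨hc, funext hd, funext he⟩
  have hdom : Module.finrank ℂ (ℂ × (Fin (n + 1) → ℂ) × (Fin n → ℂ)) = 2 * n + 2 := by
    rw [Module.finrank_prod, Module.finrank_prod, Module.finrank_self,
      Module.finrank_pi, Module.finrank_pi, Fintype.card_fin, Fintype.card_fin]
    omega
  rw [← hdom]
  exact LinearMap.finrank_le_finrank_of_injective
    (f := LinearMap.codRestrict _ g hmem)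
    (fun a b hab => hinj (congrArg Subtype.val hab))

/-- **Diagonal block `L_n`.** With `N = 2n + 1`,
`Sym_N × Sym_N = T(L_n^{(1)}, L_n^{(2)}) ⊕ P`, where `P` consists of pairs `(X, Y)` of
symmetric matrices with `X i j = 0` unless `i = j = n + 1`, and `Y i j = 0` unless
`i ≤ n + 1`, `j ≤ n + 1` and `|i − j| ≤ 1` (1-based indices). -/
theorem L_diagonal_block (n : ℕ) (hn : 0 < n) :
    Disjoint (TSpace (L1M n) (L2M n))
      (Pattern
        {pq : Fin (2 * n + 1) × Fin (2 * n + 1) | (pq.1 : ℕ) = n ∧ (pq.2 : ℕ) = n}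
        {pq : Fin (2 * n + 1) × Fin (2 * n + 1) | (pq.1 : ℕ) ≤ n ∧ (pq.2 : ℕ) ≤ n ∧
          ((pq.1 : ℕ) ≤ (pq.2 : ℕ) + 1 ∧ (pq.2 : ℕ) ≤ (pq.1 : ℕ) + 1)}) ∧
    TSpace (L1M n) (L2M n) ⊔
      Pattern
        {pq : Fin (2 * n + 1) × Fin (2 * n + 1) | (pq.1 : ℕ) = n ∧ (pq.2 : ℕ) = n}
        {pq : Fin (2 * n + 1) × Fin (2 * n + 1) | (pq.1 : ℕ) ≤ n ∧ (pq.2 : ℕ) ≤ n ∧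
          ((pq.1 : ℕ) ≤ (pq.2 : ℕ) + 1 ∧ (pq.2 : ℕ) ≤ (pq.1 : ℕ) + 1)} =
      SymPair (Fin (2 * n + 1)) := by
  refine ⟨disj n hn, ?_⟩
  have hle : TSpace (L1M n) (L2M n) ⊔ Pattern
      {pq : Fin (2 * n + 1) × Fin (2 * n + 1) | (pq.1 : ℕ) = n ∧ (pq.2 : ℕ) = n}
      {pq : Fin (2 * n + 1) × Fin (2 * n + 1) | (pq.1 : ℕ) ≤ n ∧ (pq.2 : ℕ) ≤ n ∧
        ((pq.1 : ℕ) ≤ (pq.2 : ℕ) + 1 ∧ (pq.2 : ℕ) ≤ (pq.1 : ℕ) + 1)} ≤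
      SymPair (Fin (2 * n + 1)) :=
    sup_le (T_le_sym n) (Pattern_le _ _)
  refine Submodule.eq_of_le_of_finrank_le hle ?_
  have hsum := Submodule.finrank_sup_add_finrank_inf_eq (TSpace (L1M n) (L2M n))
    (Pattern
      {pq : Fin (2 * n + 1) × Fin (2 * n + 1) | (pq.1 : ℕ) = n ∧ (pq.2 : ℕ) = n}
      {pq : Fin (2 * n + 1) × Fin (2 * n + 1) | (pq.1 : ℕ) ≤ n ∧ (pq.2 : ℕ) ≤ n ∧
        ((pq.1 : ℕ) ≤ (pq.2 : ℕ) + 1 ∧ (pq.2 : ℕ) ≤ (pq.1 : ℕ) + 1)})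
  rw [disjoint_iff.mp (disj n hn), finrank_bot] at hsum
  have h1 := T_finrank n hn
  have h2 := pattern_finrank n
  have h3 := sympair_finrank n
  generalize hM : (2 * n + 1) * (2 * n + 1) = M at h1 h3
  omega

end
end

section
/- Let n, m be positive integers and λ, μ ∈ ℂ with λ ≠ μ. Then the linear map (S,R) ↦ (R^T Δ_m + Δ_n S, R^T Λ_m(μ) + Λ_n(λ) S), from ℂ^{n×m} × ℂ^{m×n} to ℂ^{n×m} × ℂ^{n×m}, is surjective; i.e., every pair (A,B) of n×m complex matrices can be written as A = R^T Δ_m + Δ_n S and B = R^T Λ_m(μ) + Λ_n(λ) S for some S ∈ ℂ^{n×m} and R ∈ ℂ^{m×n}. -/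
open Matrix

noncomputable section

def shiftU (k : ℕ) : Matrix (Fin k) (Fin k) ℂ :=
  Matrix.of fun i j => if (j : ℕ) = (i : ℕ) + 1 then 1 else 0

lemma shiftU_pow (k p : ℕ) :
    (shiftU k) ^ p =
      Matrix.of fun (i j : Fin k) => if (j : ℕ) = (i : ℕ) + p then 1 else 0 := by
  induction p with
  | zero =>
    ext i j
    simp [Matrix.one_apply, Fin.ext_iff, eq_comm]
  | succ p ih =>
    ext i j
    rw [pow_succ, Matrix.mul_apply]
    have hj : (j : ℕ) < k := j.2
    by_cases hip : (i : ℕ) + p < k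
    · rw [Fintype.sum_eq_single (⟨(i : ℕ) + p, hip⟩ : Fin k)]
      · rw [ih]
        simp only [Matrix.of_apply, shiftU]
        rw [if_pos trivial, one_mul]
        by_cases hje : (j : ℕ) = (i : ℕ) + p + 1
        · rw [if_pos hje, if_pos (by omega)]
        · rw [if_neg hje, if_neg (by omega)]
      · intro x hx
        have hne : ¬((x : ℕ) = (i : ℕ) + p) := fun h => hx (Fin.ext (by simpa using h))
        rw [ih]
        simp only [Matrix.of_apply]
        rw [if_neg hne, zero_mul]
    · rw [Matrix.of_apply, if_neg (by omega)]
      refine Finset.sum_eq_zero fun x _ => ?_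
      have hne : ¬((x : ℕ) = (i : ℕ) + p) := by have := x.2; omega
      rw [ih]
      simp only [Matrix.of_apply]
      rw [if_neg hne, zero_mul]

lemma shiftU_pow_self (k : ℕ) : (shiftU k) ^ k = 0 := by
  rw [shiftU_pow]
  ext i j
  rw [Matrix.of_apply, if_neg]
  · rfl
  · omega

lemma delM_mul_delM (k : ℕ) : delM k * delM k = 1 := by
  ext i j
  have hi : (i : ℕ) < k := i.2
  rw [Matrix.mul_apply, Fintype.sum_eq_single (⟨k - 1 - (i : ℕ), by omega⟩ : Fin k)]
  · simp [delM, Matrix.one_apply, Fin.ext_iff]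
    split_ifs <;> first | rfl | omega | (exfalso; omega)
  · intro x hx
    have hxv : ¬((i : ℕ) + 1 + ((x : ℕ) + 1) = k + 1) := by
      intro h; apply hx; apply Fin.ext; simp; omega
    simp [delM, hxv]

lemma lamM_mul_delM (k : ℕ) (lam : ℂ) :
    lamM k lam * delM k = lam • 1 + (shiftU k)ᵀ := by
  ext i j
  have hj : (j : ℕ) < k := j.2
  rw [Matrix.mul_apply, Fintype.sum_eq_single (⟨k - 1 - (j : ℕ), by omega⟩ : Fin k)]
  · simp [lamM, delM, Matrix.one_apply, shiftU, Fin.ext_iff]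
    split_ifs <;> first | rfl | omega | (exfalso; omega) | simp
  · intro x hx
    have hxv : ¬((x : ℕ) + 1 + ((j : ℕ) + 1) = k + 1) := by
      intro h; apply hx; apply Fin.ext; simp; omega
    simp [delM, hxv]

lemma delM_mul_lamM (k : ℕ) (mu : ℂ) :
    delM k * lamM k mu = mu • 1 + shiftU k := by
  ext i j
  have hi : (i : ℕ) < k := i.2
  rw [Matrix.mul_apply, Fintype.sum_eq_single (⟨k - 1 - (i : ℕ), by omega⟩ : Fin k)]
  · simp [lamM, delM, Matrix.one_apply, shiftU, Fin.ext_iff]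
    split_ifs <;> first | rfl | omega | (exfalso; omega) | simp
  · intro x hx
    have hxv : ¬((i : ℕ) + 1 + ((x : ℕ) + 1) = k + 1) := by
      intro h; apply hx; apply Fin.ext; simp; omega
    simp [delM, hxv]



lemma sylvester_surj {n m : ℕ} (L : Matrix (Fin n) (Fin n) ℂ) (M : Matrix (Fin m) (Fin m) ℂ)
    (mu : ℂ) (hMnil : (M - mu • 1) ^ m = 0) (hLunit : IsUnit (L - mu • 1))
    (C : Matrix (Fin n) (Fin m) ℂ) :
    ∃ U : Matrix (Fin n) (Fin m) ℂ, U * M - L * U = C := by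
  let T : Matrix (Fin n) (Fin m) ℂ →ₗ[ℂ] Matrix (Fin n) (Fin m) ℂ :=
    { toFun := fun U => U * M - L * U
      map_add' := by
        intro U V
        rw [Matrix.add_mul, Matrix.mul_add]
        abel
      map_smul' := by
        intro c U
        rw [Matrix.smul_mul, Matrix.mul_smul, smul_sub, RingHom.id_apply] }
  have hTker : LinearMap.ker T = ⊥ := by
    rw [LinearMap.ker_eq_bot']
    intro U hU
    have hUM : U * M = L * U := by
      have h : U * M - L * U = 0 := hU
      rwa [sub_eq_zero] at h
    have key : ∀ p : ℕ, U * (M - mu • 1) ^ p = (L - mu • 1) ^ p * U := by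
      intro p
      induction p with
      | zero => simp
      | succ p ih =>
        have hstep : U * (M - mu • 1) = (L - mu • 1) * U := by
          rw [Matrix.mul_sub, Matrix.sub_mul, hUM, Matrix.mul_smul, Matrix.smul_mul,
            Matrix.mul_one, Matrix.one_mul]
        calc U * (M - mu • 1) ^ (p + 1)
            = U * (M - mu • 1) ^ p * (M - mu • 1) := by rw [pow_succ, Matrix.mul_assoc]
          _ = (L - mu • 1) ^ p * U * (M - mu • 1) := by rw [ih]
          _ = (L - mu • 1) ^ p * ((L - mu • 1) * U) := by rw [Matrix.mul_assoc, hstep]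
          _ = (L - mu • 1) ^ (p + 1) * U := by rw [pow_succ, Matrix.mul_assoc]
    have h0 : (L - mu • 1) ^ m * U = 0 := by
      rw [← key m, hMnil, Matrix.mul_zero]
    obtain ⟨u, hu⟩ := hLunit.pow m
    have hUU : ((u⁻¹ : (Matrix (Fin n) (Fin n) ℂ)ˣ) : Matrix (Fin n) (Fin n) ℂ) *
        ((u : Matrix (Fin n) (Fin n) ℂ) * U) = U := by
      rw [← Matrix.mul_assoc, Units.inv_mul, Matrix.one_mul]
    rw [← hUU, hu, h0, Matrix.mul_zero]
  have hTsurj : Function.Surjective T :=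
    LinearMap.injective_iff_surjective.mp (LinearMap.ker_eq_bot.mp hTker)
  obtain ⟨U, hU⟩ := hTsurj C
  exact ⟨U, hU⟩

/-- **Off-diagonal blocks `H_n(λ)` vs `H_m(μ)`, `λ ≠ μ`.** The map
`(S, R) ↦ (Rᵀ Δ_m + Δ_n S, Rᵀ Λ_m(μ) + Λ_n(λ) S)` is surjective onto pairs of `n × m`
complex matrices. -/
theorem H_offdiagonal_distinct_eigenvalues (n m : ℕ) (hn : 0 < n) (hm : 0 < m)
    (lam mu : ℂ) (hlm : lam ≠ mu) (A B : Matrix (Fin n) (Fin m) ℂ) :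
    ∃ (S : Matrix (Fin n) (Fin m) ℂ) (R : Matrix (Fin m) (Fin n) ℂ),
      A = Rᵀ * delM m + delM n * S ∧ B = Rᵀ * lamM m mu + lamM n lam * S := by
  have hMnil : (delM m * lamM m mu - mu • 1) ^ m = 0 := by
    rw [delM_mul_lamM, add_sub_cancel_left, shiftU_pow_self]
  have hLunit : IsUnit (lamM n lam * delM n - mu • 1) := by
    have hLm : lamM n lam * delM n - mu • 1 = (lam - mu) • 1 + (shiftU n)ᵀ := by
      rw [lamM_mul_delM, sub_smul]
      abel
    rw [hLm]
    have h1 : IsUnit ((lam - mu) • (1 : Matrix (Fin n) (Fin n) ℂ)) := by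
      rw [← Algebra.algebraMap_eq_smul_one]
      exact (isUnit_iff_ne_zero.mpr (sub_ne_zero.mpr hlm)).map
        (algebraMap ℂ (Matrix (Fin n) (Fin n) ℂ))
    have hnil : IsNilpotent ((shiftU n)ᵀ) :=
      ⟨n, by rw [← Matrix.transpose_pow, shiftU_pow_self, Matrix.transpose_zero]⟩
    refine hnil.isUnit_add_left_of_commute h1 ?_
    unfold Commute SemiconjBy
    rw [Matrix.mul_smul, Matrix.smul_mul, Matrix.mul_one, Matrix.one_mul]
  obtain ⟨U, hU⟩ := sylvester_surj (lamM n lam * delM n) (delM m * lamM m mu) mu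
    hMnil hLunit (B - lamM n lam * delM n * A)
  refine ⟨delM n * (A - U), (U * delM m)ᵀ, ?_, ?_⟩
  · rw [Matrix.transpose_transpose, Matrix.mul_assoc, delM_mul_delM, Matrix.mul_one,
      ← Matrix.mul_assoc, delM_mul_delM, Matrix.one_mul]
    abel
  · rw [Matrix.transpose_transpose]
    have h2 : U * delM m * lamM m mu = U * (delM m * lamM m mu) := Matrix.mul_assoc _ _ _
    have h3 : lamM n lam * (delM n * (A - U)) = lamM n lam * delM n * (A - U) :=
      (Matrix.mul_assoc _ _ _).symm
    rw [h2, h3, Matrix.mul_sub]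
    have h4 : U * (delM m * lamM m mu) =
        B - lamM n lam * delM n * A + lamM n lam * delM n * U := by
      rw [← hU]; abel
    rw [h4]
    abel


end
end
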